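/- arXiv:2404.03091 — 16 statements merged into one kernel-verified Lean document; each statement's English description precedes it below -/
import Mathlib

section
/- Let n ≥ 2 be an integer. Consider the set of all (x, y, γ) with x, y ∈ [0,1]^n and γ ∈ ℝ such that for all 1 ≤ i < j ≤ n the four inequalities x_i + x_j + y_i + y_j ≥ γ, −x_i − x_j + y_i + y_j + 2 ≥ γ, x_i + x_j − y_i − y_j + 2 ≥ γ, and −x_i − x_j − y_i − y_j + 4 ≥ γ hold. Then the maximum value of γ over this set is attained and equals 2. (This is the optimal value of the single-row LP relaxation (TW) of the circle packing problem.) -/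
/-- The optimal value of the single-row LP relaxation (TW) of the circle packing
problem is `2` for all `n ≥ 2`. -/
theorem stmt_0 (n : ℕ) (hn : 2 ≤ n) :
    IsGreatest {γ : ℝ | ∃ x y : Fin n → ℝ,
      (∀ i, 0 ≤ x i ∧ x i ≤ 1) ∧ (∀ i, 0 ≤ y i ∧ y i ≤ 1) ∧
      (∀ i j : Fin n, i < j →
        x i + x j + y i + y j ≥ γ ∧
        -x i - x j + y i + y j + 2 ≥ γ ∧
        x i + x j - y i - y j + 2 ≥ γ ∧
        -x i - x j - y i - y j + 4 ≥ γ)} 2 := by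
  constructor
  · refine ⟨fun _ => 1/2, fun _ => 1/2, fun i => by norm_num, fun i => by norm_num,
      fun i j _ => by norm_num⟩
  · rintro γ ⟨x, y, hx, hy, h⟩
    obtain ⟨h1, _, _, h4⟩ := h ⟨0, by omega⟩ ⟨1, by omega⟩ (by simp [Fin.lt_def])
    linarith
end

section
/- Let n ≥ 5 be an integer, and set n_x := ⌈n/2⌉, n_y := ⌈n/4⌉, u_i^x := 1/2 if i ≤ n_x and u_i^x := 1 otherwise, u_i^y := 1/2 if i ≤ n_y and u_i^y := 1 otherwise.ter Consider the set of all (x, y, γ) with 0 ≤ x_i ≤ u_i^x and 0 ≤ y_i ≤ u_i^y for all i ∈ {1,…,n}, and γ ∈ ℝ, such that for all 1 ≤ i < j ≤ n: min(u_i^x x_i + u_j^x x_j, 2 u_i^x u_j^x + (u_i^x − 2 u_j^x) x_i + (u_j^x − 2 u_i^x) x_j) + min(u_i^y y_i + u_j^y y_j, 2 u_i^y u_j^y + (u_i^y − 2 u_j^y) y_i + (u_j^y − 2 u_i^y) y_j) ≥ γ. Then the maximum value of γ over this set is attained and equals 1/2. (This is the optimal value of the LP relaxation (TWbnd).) -/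
lemma min_le_quarter (p q : ℝ) (h : p + q ≤ 1/2) : min p q ≤ 1/4 := by
  rcases le_total p q with hle | hle
  · rw [min_eq_left hle]; linarith
  · rw [min_eq_right hle]; linarith

/-- The optimal value of the single-row LP relaxation (TWbnd) of the circle packing
problem (with tightened variable bounds `u^x`, `u^y`) is `1/2` for all `n ≥ 5`.
Here indices of `Fin n` are 0-based, so the 1-based condition `i ≤ n_x` reads
`(i : ℕ) + 1 ≤ n_x`; `n_x = ⌈n/2⌉ = (n+1)/2` and `n_y = ⌈n/4⌉ = (n+3)/4` in ℕ. -/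
theorem stmt_1 (n : ℕ) (hn : 5 ≤ n)
    (nx ny : ℕ) (hnx : nx = (n + 1) / 2) (hny : ny = (n + 3) / 4)
    (ux uy : Fin n → ℝ)
    (hux : ∀ i : Fin n, ux i = if (i : ℕ) + 1 ≤ nx then 1/2 else 1)
    (huy : ∀ i : Fin n, uy i = if (i : ℕ) + 1 ≤ ny then 1/2 else 1) :
    IsGreatest {γ : ℝ | ∃ x y : Fin n → ℝ,
      (∀ i, 0 ≤ x i ∧ x i ≤ ux i) ∧ (∀ i, 0 ≤ y i ∧ y i ≤ uy i) ∧
      (∀ i j : Fin n, i < j →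
        min (ux i * x i + ux j * x j)
            (2 * ux i * ux j + (ux i - 2 * ux j) * x i + (ux j - 2 * ux i) * x j)
        + min (uy i * y i + uy j * y j)
            (2 * uy i * uy j + (uy i - 2 * uy j) * y i + (uy j - 2 * uy i) * y j)
        ≥ γ)} (1/2) := by
  have hx : ∀ k : Fin n, 1/2 ≤ ux k := by
    intro k; rw [hux]; split <;> norm_num
  have hy : ∀ k : Fin n, 1/2 ≤ uy k := by
    intro k; rw [huy]; split <;> norm_num
  constructor
  · -- membership: x_i = ux_i / 2, y_i = uy_i / 2
    refine ⟨fun i => ux i / 2, fun i => uy i / 2, ?_, ?_, ?_⟩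
    · intro i; have := hx i; constructor <;> linarith
    · intro i; have := hy i; constructor <;> linarith
    · intro i j hij
      have e1 : ux i * (ux i / 2) + ux j * (ux j / 2)
          = (ux i ^ 2 + ux j ^ 2) / 2 := by ring
      have e2 : 2 * ux i * ux j + (ux i - 2 * ux j) * (ux i / 2)
            + (ux j - 2 * ux i) * (ux j / 2) = (ux i ^ 2 + ux j ^ 2) / 2 := by ring
      have e3 : uy i * (uy i / 2) + uy j * (uy j / 2)
          = (uy i ^ 2 + uy j ^ 2) / 2 := by ring
      have e4 : 2 * uy i * uy j + (uy i - 2 * uy j) * (uy i / 2)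
            + (uy j - 2 * uy i) * (uy j / 2) = (uy i ^ 2 + uy j ^ 2) / 2 := by ring
      rw [e1, e2, e3, e4, min_self, min_self]
      have h1 := hx i; have h2 := hx j; have h3 := hy i; have h4 := hy j
      nlinarith [sq_nonneg (ux i), sq_nonneg (uy i)]
  · -- upper bound: use the pair (0, 1)
    rintro γ ⟨x, y, hxb, hyb, h⟩
    have h0n : (0 : ℕ) < n := by omega
    have h1n : (1 : ℕ) < n := by omega
    set i0 : Fin n := ⟨0, h0n⟩ with hi0
    set i1 : Fin n := ⟨1, h1n⟩ with hi1
    have hlt : i0 < i1 := by simp [hi0, hi1, Fin.lt_def]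
    have hu0x : ux i0 = 1/2 := by
      rw [hux, if_pos]; simp only [hi0, Fin.val_mk]; omega
    have hu1x : ux i1 = 1/2 := by
      rw [hux, if_pos]; simp only [hi1, Fin.val_mk]; omega
    have hu0y : uy i0 = 1/2 := by
      rw [huy, if_pos]; simp only [hi0, Fin.val_mk]; omega
    have hu1y : uy i1 = 1/2 := by
      rw [huy, if_pos]; simp only [hi1, Fin.val_mk]; omega
    have hthis := h i0 i1 hlt
    have k1 : min (ux i0 * x i0 + ux i1 * x i1)
        (2 * ux i0 * ux i1 + (ux i0 - 2 * ux i1) * x i0 + (ux i1 - 2 * ux i0) * x i1)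
        ≤ 1/4 := by
      apply min_le_quarter
      rw [hu0x, hu1x]; ring_nf
      norm_num
    have k2 : min (uy i0 * y i0 + uy i1 * y i1)
        (2 * uy i0 * uy i1 + (uy i0 - 2 * uy i1) * y i0 + (uy i1 - 2 * uy i0) * y i1)
        ≤ 1/4 := by
      apply min_le_quarter
      rw [hu0y, hu1y]; ring_nf
      norm_num
    linarith
end

section
/- Let n ≥ 2 be an integer. Consider the set of all (x, y, γ) with 0 ≤ x_1 ≤ x_2 ≤ … ≤ x_n ≤ 1, y ∈ [0,1]^n, and γ ∈ ℝ, such that for all 1 ≤ i < j ≤ n: x_j − x_i + y_i + y_j ≥ γ and x_j − x_i − y_i − y_j + 2 ≥ γ. Then the maximum value of γ over this set is attained and equals 1 + 1/(n − 1). (This is the optimal value of the LP relaxation (TWord).) -/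
/-- The optimal value of the single-row LP relaxation (TWord) of the circle packing
problem (with order constraints `0 ≤ x_1 ≤ … ≤ x_n ≤ 1`) is `1 + 1/(n-1)` for `n ≥ 2`. -/
theorem stmt_2 (n : ℕ) (hn : 2 ≤ n) :
    IsGreatest {γ : ℝ | ∃ x y : Fin n → ℝ,
      (∀ i, 0 ≤ x i ∧ x i ≤ 1) ∧ Monotone x ∧
      (∀ i, 0 ≤ y i ∧ y i ≤ 1) ∧
      (∀ i j : Fin n, i < j →
        x j - x i + y i + y j ≥ γ ∧
        x j - x i - y i - y j + 2 ≥ γ)}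
    (1 + 1 / ((n : ℝ) - 1)) := by
  have hn2 : (2:ℝ) ≤ (n:ℝ) := by exact_mod_cast hn
  have hpos : (0:ℝ) < (n:ℝ) - 1 := by linarith
  constructor
  · refine ⟨fun i => (i:ℝ)/((n:ℝ)-1), fun _ => 1/2, ?_, ?_, ?_, ?_⟩
    · intro i
      have hi : ((i:ℕ):ℝ) ≤ (n:ℝ) - 1 := by
        have : (i:ℕ) + 1 ≤ n := i.isLt
        have : ((i:ℕ):ℝ) + 1 ≤ (n:ℝ) := by exact_mod_cast this
        linarith
      constructor
      · positivity
      · rw [div_le_one hpos]; exact hi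
    · intro i j hij
      have : ((i:ℕ):ℝ) ≤ ((j:ℕ):ℝ) := by exact_mod_cast (show (i:ℕ) ≤ j from hij)
      dsimp only
      gcongr
    · intro i; norm_num
    · intro i j hij
      have h1 : (i:ℕ) + 1 ≤ (j:ℕ) := hij
      have h1' : ((i:ℕ):ℝ) + 1 ≤ ((j:ℕ):ℝ) := by exact_mod_cast h1
      have key : 1/((n:ℝ)-1) ≤ ((j:ℕ):ℝ)/((n:ℝ)-1) - ((i:ℕ):ℝ)/((n:ℝ)-1) := by
        rw [div_sub_div_same, le_div_iff₀ hpos, one_div, inv_mul_cancel₀ hpos.ne']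
        linarith
      constructor <;> simp only [ge_iff_le] <;> linarith
  · rintro γ ⟨x, y, hx, hmono, hy, hc⟩
    set f : ℕ → ℝ := fun i => x ⟨min i (n-1), by omega⟩ with hf
    have key : ∀ i ∈ Finset.range (n-1), γ - 1 ≤ f (i+1) - f i := by
      intro i hi
      rw [Finset.mem_range] at hi
      have ha : i < n := by omega
      have hb : i + 1 < n := by omega
      have hlt : (⟨i, ha⟩ : Fin n) < ⟨i+1, hb⟩ := by simp [Fin.lt_def]
      obtain ⟨c1, c2⟩ := hc _ _ hlt
      have e1 : f i = x ⟨i, ha⟩ := by simp [hf, Nat.min_eq_left (by omega : i ≤ n-1)]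
      have e2 : f (i+1) = x ⟨i+1, hb⟩ := by
        simp [hf, Nat.min_eq_left (by omega : i+1 ≤ n-1)]
      rw [e1, e2]
      linarith
    have hsum : ∑ i ∈ Finset.range (n-1), (f (i+1) - f i) = f (n-1) - f 0 :=
      Finset.sum_range_sub f (n-1)
    have hcard : (Finset.range (n-1)).card • (γ - 1) ≤ ∑ i ∈ Finset.range (n-1), (f (i+1) - f i) :=
      Finset.card_nsmul_le_sum _ _ _ key
    rw [Finset.card_range, hsum] at hcard
    have hb1 : f (n-1) ≤ 1 := (hx _).2
    have hb0 : 0 ≤ f 0 := (hx _).1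
    have hcast : ((n-1:ℕ):ℝ) = (n:ℝ) - 1 := by
      rw [Nat.cast_sub (by omega)]; norm_num
    have : ((n:ℝ) - 1) * (γ - 1) ≤ 1 := by
      have := hcard
      rw [nsmul_eq_mul, hcast] at this
      linarith
    have : γ - 1 ≤ 1 / ((n:ℝ) - 1) := by
      rw [le_div_iff₀ hpos]; linarith [this]
    linarith
end

section
/- Let n ≥ 5 be an integer, and set n_x := ⌈n/2⌉, n_y := ⌈n/4⌉, u_i^x := 1/2 if i ≤ n_x and u_i^x := 1 otherwise, u_i^y := 1/2 if i ≤ n_y and u_i^y := 1 otherwise. For 1 ≤ i < j ≤ n let D_ij := {(a,b) ∈ ℝ²: 0 ≤ a ≤ u_i^x, 0 ≤ b ≤ u_j^x, and additionally a ≤ b whenever j ≤ n_y or i ≥ n_y + 1}, and let R_ij := [0, u_i^y] × [0, u_j^y]. Consider the set of all (x, y, γ) with 0 ≤ x_i ≤ u_i^x and 0 ≤ y_i ≤ u_i^y for all i, x_i ≤ x_{i+1} for all i ∈ {1,…,n−1} \ {n_y}, and such that for all 1 ≤ i < j ≤ n: conc_{D_ij} f (x_i, x_j) + conc_{R_ij}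 f (y_i, y_j) ≥ γ, where f(a,b) := (b − a)^2 and conc_D f denotes the concave envelope of f over D. Then the maximum value of γ over this set is attained and equals (1/4)(1 + 1/⌊(n−1)/4⌋). (This is the optimal value of the LP relaxation (TWcomb).) -/
/-- The concave envelope of `f` over `D ⊆ ℝ²`, described as the pointwise infimum
of all affine functions majorizing `f` on `D`. -/
noncomputable def concEnv (D : Set (ℝ × ℝ)) (f : ℝ × ℝ → ℝ) (z : ℝ × ℝ) : ℝ :=
  sInf {v : ℝ | ∃ c₀ c₁ c₂ : ℝ, (∀ w ∈ D, f w ≤ c₀ + c₁ * w.1 + c₂ * w.2) ∧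
    v = c₀ + c₁ * z.1 + c₂ * z.2}

private lemma concEnv_le_aff {D : Set (ℝ × ℝ)} {f : ℝ × ℝ → ℝ} {z : ℝ × ℝ}
    (hz : z ∈ D) (hf0 : ∀ w ∈ D, 0 ≤ f w)
    {c₀ c₁ c₂ : ℝ} (hmaj : ∀ w ∈ D, f w ≤ c₀ + c₁ * w.1 + c₂ * w.2) :
    concEnv D f z ≤ c₀ + c₁ * z.1 + c₂ * z.2 := by
  apply csInf_le
  · refine ⟨0, ?_⟩
    rintro v ⟨a₀, a₁, a₂, hm, rfl⟩
    exact le_trans (hf0 z hz) (hm z hz)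
  · exact ⟨c₀, c₁, c₂, hmaj, rfl⟩

private lemma comb_le_concEnv {D : Set (ℝ × ℝ)} {f : ℝ × ℝ → ℝ} {z v₁ v₂ v₃ : ℝ × ℝ}
    {l₁ l₂ l₃ : ℝ}
    (h₁ : v₁ ∈ D) (h₂ : v₂ ∈ D) (h₃ : v₃ ∈ D)
    (hl₁ : 0 ≤ l₁) (hl₂ : 0 ≤ l₂) (hl₃ : 0 ≤ l₃) (hsum : l₁ + l₂ + l₃ = 1)
    (hz1 : z.1 = l₁ * v₁.1 + l₂ * v₂.1 + l₃ * v₃.1)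
    (hz2 : z.2 = l₁ * v₁.2 + l₂ * v₂.2 + l₃ * v₃.2)
    {C : ℝ} (hbd : ∀ w ∈ D, f w ≤ C) :
    l₁ * f v₁ + l₂ * f v₂ + l₃ * f v₃ ≤ concEnv D f z := by
  apply le_csInf
  · exact ⟨C + 0 * z.1 + 0 * z.2, C, 0, 0, by simpa using hbd, rfl⟩
  · rintro v ⟨c₀, c₁, c₂, hm, rfl⟩
    have e₁ := mul_le_mul_of_nonneg_left (hm v₁ h₁) hl₁
    have e₂ := mul_le_mul_of_nonneg_left (hm v₂ h₂) hl₂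
    have e₃ := mul_le_mul_of_nonneg_left (hm v₃ h₃) hl₃
    have key : c₀ + c₁ * z.1 + c₂ * z.2 =
        l₁ * (c₀ + c₁ * v₁.1 + c₂ * v₁.2) + l₂ * (c₀ + c₁ * v₂.1 + c₂ * v₂.2)
          + l₃ * (c₀ + c₁ * v₃.1 + c₂ * v₃.2) := by
      rw [hz1, hz2]
      linear_combination (-c₀) * hsum
    linarith

private lemma concEnv_nonneg {D : Set (ℝ × ℝ)} {f : ℝ × ℝ → ℝ} {z : ℝ × ℝ}
    (hz : z ∈ D) (hf0 : ∀ w ∈ D, 0 ≤ f w) {C : ℝ} (hbd : ∀ w ∈ D, f w ≤ C) :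
    0 ≤ concEnv D f z := by
  apply le_csInf
  · exact ⟨C + 0 * z.1 + 0 * z.2, C, 0, 0, by simpa using hbd, rfl⟩
  · rintro v ⟨c₀, c₁, c₂, hm, rfl⟩
    exact le_trans (hf0 z hz) (hm z hz)

set_option maxHeartbeats 1000000 in
/-- The optimal value of the best single-row LP relaxation (TWcomb) of the circle
packing problem is `(1/4)(1 + 1/⌊(n-1)/4⌋)` for all `n ≥ 5`.  Here indices of
`Fin n` are 0-based, so the 1-based condition `i ≤ n_x` reads `(i : ℕ) + 1 ≤ n_x`;
`n_x = ⌈n/2⌉ = (n+1)/2`, `n_y = ⌈n/4⌉ = (n+3)/4`, and `⌊(n-1)/4⌋ = (n-1)/4` in ℕ. -/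
theorem stmt_3 (n : ℕ) (hn : 5 ≤ n)
    (nx ny : ℕ) (hnx : nx = (n + 1) / 2) (hny : ny = (n + 3) / 4)
    (ux uy : Fin n → ℝ)
    (hux : ∀ i : Fin n, ux i = if (i : ℕ) + 1 ≤ nx then 1/2 else 1)
    (huy : ∀ i : Fin n, uy i = if (i : ℕ) + 1 ≤ ny then 1/2 else 1)
    (f : ℝ × ℝ → ℝ) (hf : ∀ p, f p = (p.2 - p.1)^2)
    (D : Fin n → Fin n → Set (ℝ × ℝ))
    (hD : ∀ i j : Fin n, i < j → D i j =
      {p : ℝ × ℝ | 0 ≤ p.1 ∧ p.1 ≤ ux i ∧ 0 ≤ p.2 ∧ p.2 ≤ ux j ∧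
        (((j : ℕ) + 1 ≤ ny ∨ (i : ℕ) + 1 ≥ ny + 1) → p.1 ≤ p.2)})
    (R : Fin n → Fin n → Set (ℝ × ℝ))
    (hR : ∀ i j : Fin n, i < j → R i j = Set.Icc 0 (uy i) ×ˢ Set.Icc 0 (uy j)) :
    IsGreatest {γ : ℝ | ∃ x y : Fin n → ℝ,
      (∀ i, 0 ≤ x i ∧ x i ≤ ux i) ∧ (∀ i, 0 ≤ y i ∧ y i ≤ uy i) ∧
      (∀ i : Fin n, ∀ h : (i : ℕ) + 1 < n, (i : ℕ) + 1 ≠ ny → x i ≤ x ⟨(i : ℕ) + 1, h⟩) ∧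
      (∀ i j : Fin n, i < j →
        concEnv (D i j) f (x i, x j) + concEnv (R i j) f (y i, y j) ≥ γ)}
    ((1/4) * (1 + 1 / (((n - 1) / 4 : ℕ) : ℝ))) := by
  set m : ℕ := (n - 1) / 4 with hmdef
  have hnym : ny = m + 1 := by omega
  have hnyx : ny ≤ nx := by omega
  have hnyn : ny ≤ n := by omega
  have hm1 : 1 ≤ m := by omega
  have hmR : (1:ℝ) ≤ (m:ℝ) := by exact_mod_cast hm1
  have hmpos : (0:ℝ) < (m:ℝ) := by linarith
  -- general facts about bounds
  have hux_nonneg : ∀ i : Fin n, (0:ℝ) ≤ ux i := by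
    intro i; rw [hux]; split <;> norm_num
  have hux_le_one : ∀ i : Fin n, ux i ≤ 1 := by
    intro i; rw [hux]; split <;> norm_num
  have huy_nonneg : ∀ i : Fin n, (0:ℝ) ≤ uy i := by
    intro i; rw [huy]; split <;> norm_num
  have huy_le_one : ∀ i : Fin n, uy i ≤ 1 := by
    intro i; rw [huy]; split <;> norm_num
  have hf0 : ∀ w : ℝ × ℝ, 0 ≤ f w := by intro w; rw [hf]; positivity
  -- bound for f on any D i j
  have hDbd : ∀ i j : Fin n, i < j → ∀ w ∈ D i j, f w ≤ 1 := by
    intro i j hij w hw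
    rw [hD i j hij] at hw
    obtain ⟨h1, h2, h3, h4, _⟩ := hw
    have := hux_le_one i; have := hux_le_one j
    rw [hf]; nlinarith
  have hRbd : ∀ i j : Fin n, i < j → ∀ w ∈ R i j, f w ≤ 1 := by
    intro i j hij w hw
    rw [hR i j hij] at hw
    obtain ⟨⟨h1, h2⟩, h3, h4⟩ := hw
    have := huy_le_one i; have := huy_le_one j
    rw [hf]; nlinarith
  constructor
  · -- membership : explicit optimal solution
    refine ⟨fun i => if (i : ℕ) + 1 ≤ ny then ((i : ℕ) : ℝ) / (2 * m) else 0,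
            fun i => if (i : ℕ) + 1 ≤ ny then 1/4 else 3/4, ?_, ?_, ?_, ?_⟩
    · intro i
      constructor
      · dsimp only; split <;> positivity
      · dsimp only
        rw [hux]
        split
        · rename_i hi
          rw [if_pos (by omega)]
          rw [div_le_iff₀ (by positivity)]
          have : ((i:ℕ):ℝ) ≤ (m:ℝ) := by exact_mod_cast (by omega : (i:ℕ) ≤ m)
          linarith
        · split <;> norm_num
    · intro i
      constructor
      · dsimp only; split <;> norm_num
      · dsimp only
        rw [huy]
        split <;> norm_num
    · intro i h hne
      dsimp only
      by_cases hc : (i : ℕ) + 1 + 1 ≤ ny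
      · rw [if_pos (by omega)]
        rw [if_pos (by simpa using hc)]
        rw [div_le_div_iff₀ (by positivity) (by positivity)]
        have hv : (((⟨(i:ℕ)+1, h⟩ : Fin n) : ℕ) : ℝ) = ((i:ℕ):ℝ) + 1 := by simp
        rw [hv]
        have : (0:ℝ) < (m:ℝ) := by positivity
        nlinarith
      · rw [if_neg (by omega), if_neg (by simpa using hc)]
    · intro i j hij
      have hijn : (i : ℕ) < (j : ℕ) := hij
      rw [hD i j hij, hR i j hij]
      by_cases hA : (j : ℕ) + 1 ≤ ny
      · -- Case A : both in the first block
        have hiA : (i : ℕ) + 1 ≤ ny := by omega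
        have huxi : ux i = 1/2 := by rw [hux, if_pos (by omega)]
        have huxj : ux j = 1/2 := by rw [hux, if_pos (by omega)]
        have huyi : uy i = 1/2 := by rw [huy, if_pos hiA]
        have huyj : uy j = 1/2 := by rw [huy, if_pos hA]
        dsimp only
        simp only [if_pos hiA, if_pos hA]
        set a : ℝ := ((i:ℕ):ℝ) / (2 * m) with ha
        set b : ℝ := ((j:ℕ):ℝ) / (2 * m) with hb
        have hia : ((i:ℕ):ℝ) ≤ (m:ℝ) - 1 := by
          exact_mod_cast (by omega : (i:ℕ) ≤ m - 1)
        have hja : ((j:ℕ):ℝ) ≤ (m:ℝ) := by exact_mod_cast (by omega : (j:ℕ) ≤ m)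
        have hijR : ((i:ℕ):ℝ) + 1 ≤ ((j:ℕ):ℝ) := by exact_mod_cast hijn
        have ha0 : 0 ≤ a := by positivity
        have hb2 : b ≤ 1/2 := by
          rw [hb, div_le_iff₀ (by positivity)]; linarith
        have heq : (b - a)/2 = (((j:ℕ):ℝ) - ((i:ℕ):ℝ))/(4*m) := by
          rw [ha, hb]; field_simp
          ring
        have hba : 1/(4*(m:ℝ)) ≤ (b - a)/2 := by
          rw [heq, div_le_div_iff₀ (by positivity) (by positivity)]
          nlinarith [mul_nonneg (show (0:ℝ) ≤ ((j:ℕ):ℝ) - ((i:ℕ):ℝ) - 1 by linarith)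
            (show (0:ℝ) ≤ 4*(m:ℝ) by positivity)]
        have h4m : (0:ℝ) < 1/(4*(m:ℝ)) := by positivity
        -- envelope of x part ≥ (b-a)/2
        have ex : ((1:ℝ) - 2*b) * f (0,0) + (2*a) * f (1/2, 1/2) + (2*b - 2*a) * f (0, 1/2)
            ≤ concEnv {p : ℝ × ℝ | 0 ≤ p.1 ∧ p.1 ≤ ux i ∧ 0 ≤ p.2 ∧ p.2 ≤ ux j ∧
              (((j : ℕ) + 1 ≤ ny ∨ (i : ℕ) + 1 ≥ ny + 1) → p.1 ≤ p.2)} f (a, b) := by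
          apply comb_le_concEnv (C := 1)
          · exact ⟨le_refl 0, by rw [huxi]; norm_num, le_refl 0, by rw [huxj]; norm_num,
              fun _ => le_refl 0⟩
          · exact ⟨by norm_num, by rw [huxi], by norm_num, by rw [huxj], fun _ => le_refl _⟩
          · exact ⟨le_refl 0, by rw [huxi]; norm_num, by norm_num, by rw [huxj], fun _ => by norm_num⟩
          · linarith
          · linarith
          · linarith
          · ring
          · show a = _ ; ring
          · show b = _ ; ring
          · rw [← hD i j hij]; exact hDbd i j hij
        have ey : (1/2 : ℝ) * f (1/2, 0) + (1/2) * f (0, 1/2) + 0 * f (0, 0)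
            ≤ concEnv (Set.Icc 0 (uy i) ×ˢ Set.Icc 0 (uy j)) f (1/4, 1/4) := by
          apply comb_le_concEnv (C := 1)
          · exact ⟨⟨by norm_num, by rw [huyi]⟩, by norm_num, by rw [huyj]; norm_num⟩
          · exact ⟨⟨by norm_num, by rw [huyi]; norm_num⟩, by norm_num, by rw [huyj]⟩
          · exact ⟨⟨le_refl 0, by rw [huyi]; norm_num⟩, le_refl 0, by rw [huyj]; norm_num⟩
          · norm_num
          · norm_num
          · norm_num
          · norm_num
          · show (1/4 : ℝ) = _ ; norm_num
          · show (1/4 : ℝ) = _ ; norm_num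
          · rw [← hR i j hij]; exact hRbd i j hij
        have hfv1 : f (0,0) = 0 := by rw [hf]; norm_num
        have hfv2 : f ((1:ℝ)/2, (1:ℝ)/2) = 0 := by rw [hf]; norm_num
        have hfv3 : f (0, (1:ℝ)/2) = 1/4 := by rw [hf]; norm_num
        have hfv4 : f ((1:ℝ)/2, 0) = 1/4 := by rw [hf]; norm_num
        rw [hfv1, hfv2, hfv3] at ex
        rw [hfv4, hfv3, hfv1] at ey
        have hγ : (1/4 : ℝ) * (1 + 1/(m:ℝ)) = 1/4 + 1/(4*m) := by
          field_simp
        rw [ge_iff_le, hγ]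
        linarith
      · by_cases hB : (i : ℕ) + 1 ≤ ny
        · -- Case B : i in first block, j in second
          have huyi : uy i = 1/2 := by rw [huy, if_pos hB]
          have huyj : uy j = 1 := by rw [huy, if_neg hA]
          dsimp only
          simp only [if_pos hB, if_neg hA]
          set a : ℝ := ((i:ℕ):ℝ) / (2 * m) with ha
          have ha0 : 0 ≤ a := by positivity
          have hia : ((i:ℕ):ℝ) ≤ (m:ℝ) := by exact_mod_cast (by omega : (i:ℕ) ≤ m)
          have ha2 : a ≤ ux i := by
            rw [hux, if_pos (by omega), ha, div_le_iff₀ (by positivity)]; linarith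
          have hzD : ((a, 0) : ℝ × ℝ) ∈ {p : ℝ × ℝ | 0 ≤ p.1 ∧ p.1 ≤ ux i ∧ 0 ≤ p.2 ∧ p.2 ≤ ux j ∧
              (((j : ℕ) + 1 ≤ ny ∨ (i : ℕ) + 1 ≥ ny + 1) → p.1 ≤ p.2)} :=
            ⟨ha0, ha2, le_refl 0, hux_nonneg j,
              fun hc => by rcases hc with hc | hc <;> omega⟩
          have ex : (0:ℝ) ≤ concEnv {p : ℝ × ℝ | 0 ≤ p.1 ∧ p.1 ≤ ux i ∧ 0 ≤ p.2 ∧ p.2 ≤ ux j ∧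
              (((j : ℕ) + 1 ≤ ny ∨ (i : ℕ) + 1 ≥ ny + 1) → p.1 ≤ p.2)} f (a, 0) :=
            concEnv_nonneg hzD (fun w _ => hf0 w)
              (C := 1) (by rw [← hD i j hij]; exact hDbd i j hij)
          have ey : (1/2 : ℝ) * f (0, 1) + (1/4) * f (1/2, 1) + (1/4) * f (1/2, 0)
              ≤ concEnv (Set.Icc 0 (uy i) ×ˢ Set.Icc 0 (uy j)) f (1/4, 3/4) := by
            apply comb_le_concEnv (C := 1)
            · exact ⟨⟨le_refl 0, by rw [huyi]; norm_num⟩, by norm_num, by rw [huyj]⟩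
            · exact ⟨⟨by norm_num, by rw [huyi]⟩, by norm_num, by rw [huyj]⟩
            · exact ⟨⟨by norm_num, by rw [huyi]⟩, le_refl 0, by rw [huyj]; norm_num⟩
            · norm_num
            · norm_num
            · norm_num
            · norm_num
            · show (1/4 : ℝ) = _ ; norm_num
            · show (3/4 : ℝ) = _ ; norm_num
            · rw [← hR i j hij]; exact hRbd i j hij
          have hfv1 : f ((0:ℝ), (1:ℝ)) = 1 := by rw [hf]; norm_num
          have hfv2 : f ((1:ℝ)/2, (1:ℝ)) = 1/4 := by rw [hf]; norm_num
          have hfv3 : f ((1:ℝ)/2, (0:ℝ)) = 1/4 := by rw [hf]; norm_num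
          rw [hfv1, hfv2, hfv3] at ey
          have h1m : 1/(4*(m:ℝ)) ≤ 1/4 := by
            rw [div_le_div_iff₀ (by positivity) (by norm_num)]; linarith
          have hγ : (1/4 : ℝ) * (1 + 1/(m:ℝ)) = 1/4 + 1/(4*m) := by field_simp
          rw [ge_iff_le, hγ]
          linarith
        · -- Case C : both in second block
          have huyi : uy i = 1 := by rw [huy, if_neg hB]
          have huyj : uy j = 1 := by rw [huy, if_neg hA]
          dsimp only
          simp only [if_neg hB, if_neg hA]
          have hzD : ((0, 0) : ℝ × ℝ) ∈ {p : ℝ × ℝ | 0 ≤ p.1 ∧ p.1 ≤ ux i ∧ 0 ≤ p.2 ∧ p.2 ≤ ux j ∧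
              (((j : ℕ) + 1 ≤ ny ∨ (i : ℕ) + 1 ≥ ny + 1) → p.1 ≤ p.2)} :=
            ⟨le_refl 0, hux_nonneg i, le_refl 0, hux_nonneg j, fun _ => le_refl 0⟩
          have ex : (0:ℝ) ≤ concEnv {p : ℝ × ℝ | 0 ≤ p.1 ∧ p.1 ≤ ux i ∧ 0 ≤ p.2 ∧ p.2 ≤ ux j ∧
              (((j : ℕ) + 1 ≤ ny ∨ (i : ℕ) + 1 ≥ ny + 1) → p.1 ≤ p.2)} f (0, 0) :=
            concEnv_nonneg hzD (fun w _ => hf0 w)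
              (C := 1) (by rw [← hD i j hij]; exact hDbd i j hij)
          have ey : (1/4 : ℝ) * f (1, 0) + (1/4) * f (0, 1) + (1/2) * f (1, 1)
              ≤ concEnv (Set.Icc 0 (uy i) ×ˢ Set.Icc 0 (uy j)) f (3/4, 3/4) := by
            apply comb_le_concEnv (C := 1)
            · exact ⟨⟨by norm_num, by rw [huyi]⟩, le_refl 0, by rw [huyj]; norm_num⟩
            · exact ⟨⟨le_refl 0, by rw [huyi]; norm_num⟩, by norm_num, by rw [huyj]⟩
            · exact ⟨⟨by norm_num, by rw [huyi]⟩, by norm_num, by rw [huyj]⟩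
            · norm_num
            · norm_num
            · norm_num
            · norm_num
            · show (3/4 : ℝ) = _ ; norm_num
            · show (3/4 : ℝ) = _ ; norm_num
            · rw [← hR i j hij]; exact hRbd i j hij
          have hfv1 : f ((1:ℝ), (0:ℝ)) = 1 := by rw [hf]; norm_num
          have hfv2 : f ((0:ℝ), (1:ℝ)) = 1 := by rw [hf]; norm_num
          have hfv3 : f ((1:ℝ), (1:ℝ)) = 0 := by rw [hf]; norm_num
          rw [hfv1, hfv2, hfv3] at ey
          have h1m : 1/(4*(m:ℝ)) ≤ 1/4 := by
            rw [div_le_div_iff₀ (by positivity) (by norm_num)]; linarith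
          have hγ : (1/4 : ℝ) * (1 + 1/(m:ℝ)) = 1/4 + 1/(4*m) := by field_simp
          rw [ge_iff_le, hγ]
          linarith
  · -- upper bound
    rintro g ⟨x, y, hx, hy, hmono, hpair⟩
    -- step inequality
    have step : ∀ k : ℕ, k + 1 ≤ m → ∀ hk : k < n, ∀ hk1 : k + 1 < n,
        g ≤ (x ⟨k+1, hk1⟩ - x ⟨k, hk⟩)/2 + 1/4 := by
      intro k hkm hk hk1
      have hlt : (⟨k, hk⟩ : Fin n) < ⟨k+1, hk1⟩ := by
        simp [Fin.lt_def]
      have hp := hpair ⟨k, hk⟩ ⟨k+1, hk1⟩ hlt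
      rw [hD _ _ hlt, hR _ _ hlt] at hp
      have huxj : ux ⟨k+1, hk1⟩ = 1/2 := by rw [hux, if_pos (by simp; omega)]
      have huyi : uy ⟨k, hk⟩ = 1/2 := by rw [huy, if_pos (by simp; omega)]
      have huyj : uy ⟨k+1, hk1⟩ = 1/2 := by rw [huy, if_pos (by simp; omega)]
      have hxmono : x ⟨k, hk⟩ ≤ x ⟨k+1, hk1⟩ := by
        have := hmono ⟨k, hk⟩ (by simpa using hk1) (by simp; omega)
        simpa using this
      -- x-envelope ≤ (x_{k+1}-x_k)/2
      have ex : concEnv {p : ℝ × ℝ | 0 ≤ p.1 ∧ p.1 ≤ ux ⟨k, hk⟩ ∧ 0 ≤ p.2 ∧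
            p.2 ≤ ux ⟨k+1, hk1⟩ ∧
            ((((⟨k+1, hk1⟩ : Fin n) : ℕ) + 1 ≤ ny ∨ ((⟨k, hk⟩ : Fin n) : ℕ) + 1 ≥ ny + 1) →
              p.1 ≤ p.2)} f (x ⟨k, hk⟩, x ⟨k+1, hk1⟩)
          ≤ 0 + (-(1/2)) * (x ⟨k, hk⟩) + (1/2) * (x ⟨k+1, hk1⟩) := by
        apply concEnv_le_aff
        · exact ⟨(hx _).1, (hx _).2, (hx _).1, (hx _).2, fun _ => hxmono⟩
        · exact fun w _ => hf0 w
        · rintro w ⟨hw1, hw2, hw3, hw4, hw5⟩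
          have hord : w.1 ≤ w.2 := hw5 (Or.inl (by simp; omega))
          rw [huxj] at hw4
          rw [hf]
          nlinarith
      -- y-envelope ≤ 1/4 : two affine majorants
      have hyi := hy ⟨k, hk⟩; have hyj := hy ⟨k+1, hk1⟩
      rw [huyi] at hyi; rw [huyj] at hyj
      have hzR : ((y ⟨k, hk⟩, y ⟨k+1, hk1⟩) : ℝ × ℝ) ∈
          Set.Icc (0:ℝ) (uy ⟨k, hk⟩) ×ˢ Set.Icc (0:ℝ) (uy ⟨k+1, hk1⟩) :=
        ⟨⟨(hy _).1, (hy _).2⟩, (hy _).1, (hy _).2⟩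
      have maj1 : ∀ w ∈ Set.Icc (0:ℝ) (uy ⟨k, hk⟩) ×ˢ Set.Icc (0:ℝ) (uy ⟨k+1, hk1⟩),
          f w ≤ 0 + (1/2) * w.1 + (1/2) * w.2 := by
        rintro w ⟨⟨hw1, hw2⟩, hw3, hw4⟩
        rw [huyi] at hw2; rw [huyj] at hw4
        rw [hf]; nlinarith
      have maj2 : ∀ w ∈ Set.Icc (0:ℝ) (uy ⟨k, hk⟩) ×ˢ Set.Icc (0:ℝ) (uy ⟨k+1, hk1⟩),
          f w ≤ 1/2 + (-(1/2)) * w.1 + (-(1/2)) * w.2 := by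
        rintro w ⟨⟨hw1, hw2⟩, hw3, hw4⟩
        rw [huyi] at hw2; rw [huyj] at hw4
        rw [hf]; nlinarith
      have ey : concEnv (Set.Icc (0:ℝ) (uy ⟨k, hk⟩) ×ˢ Set.Icc (0:ℝ) (uy ⟨k+1, hk1⟩)) f
          (y ⟨k, hk⟩, y ⟨k+1, hk1⟩) ≤ 1/4 := by
        rcases le_or_gt (y ⟨k, hk⟩ + y ⟨k+1, hk1⟩) (1/2) with hc | hc
        · have := concEnv_le_aff hzR (fun w _ => hf0 w) maj1
          simp only at this
          linarith
        · have := concEnv_le_aff hzR (fun w _ => hf0 w) maj2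
          simp only at this
          linarith
      simp only at ex
      linarith
    -- telescoping
    have key : ∀ k : ℕ, k ≤ m → ∀ hk : k < n, (k:ℝ) * g ≤ x ⟨k, hk⟩ / 2 + (k:ℝ)/4 := by
      intro k
      induction k with
      | zero => intro _ hk; simpa using by have := (hx ⟨0, hk⟩).1; linarith
      | succ k ih =>
        intro hkm hk1
        have hk : k < n := by omega
        have h1 := ih (by omega) hk
        have h2 := step k hkm hk hk1
        push_cast
        linarith
    have hmn : m < n := by omega
    have hfin := key m (le_refl m) hmn
    have hxm : x ⟨m, hmn⟩ ≤ 1/2 := by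
      have := (hx ⟨m, hmn⟩).2
      rwa [hux, if_pos (by simp; omega)] at this
    have hx0 : (m:ℝ) * g ≤ 1/4 + (m:ℝ)/4 := by linarith
    rw [← mul_le_mul_iff_right₀ hmpos]
    have : (m:ℝ) * ((1/4) * (1 + 1/(m:ℝ))) = 1/4 + (m:ℝ)/4 := by
      field_simp; ring
    rw [this]
    exact hx0
end

section
/- Let n ≥ 3 be an integer. Consider the set of all (x, y, X, Y, γ) where x, y ∈ [0,1]^n, X_{ij}, Y_{ij} ∈ ℝ for 1 ≤ i ≤ j ≤ n, and γ ∈ ℝ, satisfying: (a) X_{ii} − 2X_{ij} + X_{jj} + Y_{ii} − 2Y_{ij} + Y_{jj} ≥ γ for all 1 ≤ i < j ≤ n; (b) X_{ii} ≤ x_i and Y_{ii} ≤ y_i for all i; (c) the clique inequalities: for every subset S ⊆ {1,…,n} with |S| = m ≥ 3 and every integer α with 1 ≤ α ≤ max{m−2, 1}, α·Σ_{i∈S} x_i − Σ_{i<j, i,j∈S} X_{ij} ≤ α(α+1)/2, and the same inequalities with (y, Y) in place of (x, X). Then the maximum value of γ over this set is attained and equals 1 + 1/n if n is odd, and 1 +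 1/(n−1) if n is even. (This is the optimal value of the multi-row LP relaxation (MT^clique).) -/
open Finset in
private lemma pair_sum' {ι : Type*} [LinearOrder ι] (S : Finset ι) (c : ℝ) :
    ∑ i ∈ S, ∑ j ∈ S, (if i < j then c else 0)
      = c * ((S.card : ℝ) * ((S.card : ℝ) - 1)) / 2 := by

  have h1 : ∑ i ∈ S, ∑ j ∈ S, (if j < i then c else 0)
      = ∑ i ∈ S, ∑ j ∈ S, (if i < j then c else 0) := Finset.sum_comm
  have h2 : ∑ i ∈ S, ∑ j ∈ S, ((if i < j then c else 0) + ((if j < i then c else 0)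
      + (if i = j then c else 0))) = (S.card : ℝ) * ((S.card : ℝ) * c) := by
    have e : ∀ i ∈ S, ∀ j ∈ S, (if i < j then c else 0) + ((if j < i then c else 0)
        + (if i = j then c else 0)) = c := by
      intro i _ j _
      rcases lt_trichotomy i j with h | h | h
      · simp [h, asymm h, h.ne]
      · simp [h, lt_irrefl]
      · simp [h, asymm h, (h.ne).symm]
    rw [Finset.sum_congr rfl fun i hi => Finset.sum_congr rfl fun j hj => e i hi j hj]
    simp [Finset.sum_const, mul_comm]
  have h3 : ∑ i ∈ S, ∑ j ∈ S, (if i = j then c else 0) = (S.card : ℝ) * c := by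
    have : ∀ i ∈ S, ∑ j ∈ S, (if i = j then c else 0) = c := by
      intro i hi
      rw [Finset.sum_ite_eq S i (fun _ => c)] -- check
      simp [hi]
    rw [Finset.sum_congr rfl this]
    simp [mul_comm]
  have h4 := h2
  simp only [Finset.sum_add_distrib] at h4
  rw [h1, h3] at h4
  linarith

open Finset in
private lemma diag_sum' {ι : Type*} [LinearOrder ι] (S : Finset ι) (f : ι → ℝ) :
    ∑ i ∈ S, ∑ j ∈ S, (if i < j then f i + f j else 0)
      = ((S.card : ℝ) - 1) * ∑ i ∈ S, f i := by

  have e : ∀ i ∈ S, ∀ j ∈ S, (if i < j then f i + f j else 0)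
      = (if i < j then f i else 0) + (if i < j then f j else 0) := by
    intro i _ j _; split_ifs <;> ring
  rw [Finset.sum_congr rfl fun i hi => Finset.sum_congr rfl fun j hj => e i hi j hj]
  simp only [Finset.sum_add_distrib]
  have h1 : ∑ i ∈ S, ∑ j ∈ S, (if i < j then f j else 0)
      = ∑ i ∈ S, ∑ j ∈ S, (if j < i then f i else 0) := Finset.sum_comm
  rw [h1]
  have e2 : ∀ i ∈ S, (∑ j ∈ S, (if i < j then f i else 0)) + ∑ j ∈ S, (if j < i then f i else 0)
      = (S.card : ℝ) * f i - f i := by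
    intro i hi
    rw [← Finset.sum_add_distrib]
    have : ∀ j ∈ S, (if i < j then f i else 0) + (if j < i then f i else 0)
        = f i - (if i = j then f i else 0) := by
      intro j _
      rcases lt_trichotomy i j with h | h | h
      · simp [h, asymm h, h.ne]
      · simp [h, lt_irrefl]
      · simp [h, asymm h, (h.ne).symm]
    rw [Finset.sum_congr rfl this, Finset.sum_sub_distrib]
    rw [Finset.sum_ite_eq S i (fun _ => f i)]
    simp [hi, Finset.sum_const, mul_comm]
  rw [← Finset.sum_add_distrib, Finset.sum_congr rfl e2, Finset.sum_sub_distrib,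
    ← Finset.mul_sum]
  ring

private lemma keyZ' (k m α : ℤ) (hk : Odd k) (hk3 : 3 ≤ k) (hm : 3 ≤ m) (hmk : m ≤ k + 1)
    (hα1 : 1 ≤ α) (hα2 : α + 2 ≤ m) : 4*k*(α*(m-1-α)) ≤ (k-1)*(m*(m-1)) := by

  rcases le_or_gt m k with h | h
  · nlinarith [sq_nonneg (m - 1 - 2*α)]
  · have hm' : m = k + 1 := le_antisymm hmk h
    subst hm'
    obtain ⟨t, ht⟩ := hk
    have hodd : (k - 2*α) ^ 2 ≥ 1 := by
      have h1 : k - 2*α ≠ 0 := by omega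
      have := Int.one_le_abs h1
      nlinarith [abs_nonneg (k - 2*α), sq_abs (k - 2*α)]
    nlinarith [hodd]



set_option maxHeartbeats 1600000 in
/-- The optimal value of the multi-row LP relaxation (MT^clique) of the circle packing
problem is `1 + 1/n` for odd `n` and `1 + 1/(n-1)` for even `n`, for all `n ≥ 3`. -/
theorem stmt_4 (n : ℕ) (hn : 3 ≤ n) :
    IsGreatest {γ : ℝ | ∃ (x y : Fin n → ℝ) (X Y : Fin n → Fin n → ℝ),
      (∀ i, 0 ≤ x i ∧ x i ≤ 1) ∧ (∀ i, 0 ≤ y i ∧ y i ≤ 1) ∧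
      (∀ i j : Fin n, i < j →
        X i i - 2 * X i j + X j j + Y i i - 2 * Y i j + Y j j ≥ γ) ∧
      (∀ i, X i i ≤ x i ∧ Y i i ≤ y i) ∧
      (∀ S : Finset (Fin n), 3 ≤ S.card → ∀ α : ℕ, 1 ≤ α → α ≤ max (S.card - 2) 1 →
        (α : ℝ) * (∑ i ∈ S, x i) - (∑ i ∈ S, ∑ j ∈ S, if i < j then X i j else 0)
          ≤ (α : ℝ) * ((α : ℝ) + 1) / 2) ∧
      (∀ S : Finset (Fin n), 3 ≤ S.card → ∀ α : ℕ, 1 ≤ α → α ≤ max (S.card - 2) 1 →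
        (α : ℝ) * (∑ i ∈ S, y i) - (∑ i ∈ S, ∑ j ∈ S, if i < j then Y i j else 0)
          ≤ (α : ℝ) * ((α : ℝ) + 1) / 2)}
    (if Odd n then 1 + 1 / (n : ℝ) else 1 + 1 / ((n : ℝ) - 1)) := by
  set k : ℕ := if Odd n then n else n - 1 with hkdef
  have hkodd : Odd k := by
    by_cases h : Odd n
    · simpa [hkdef, h] using h
    · simp only [hkdef, if_neg h]
      rw [Nat.odd_iff] at *
      omega
  have hk3 : 3 ≤ k := by
    by_cases h : Odd n
    · rw [hkdef, if_pos h]; omega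
    · rw [hkdef, if_neg h]; rw [Nat.odd_iff] at h; omega
  have hnk : n ≤ k + 1 := by
    by_cases h : Odd n
    · rw [hkdef, if_pos h]; omega
    · rw [hkdef, if_neg h]; omega
  have hkpos : (0:ℝ) < (k:ℝ) := by exact_mod_cast Nat.lt_of_lt_of_le (by norm_num) hk3
  have hkn : k ≤ n := by
    by_cases h : Odd n
    · rw [hkdef, if_pos h]
    · rw [hkdef, if_neg h]; omega
  have hval : (if Odd n then 1 + 1 / (n : ℝ) else 1 + 1 / ((n : ℝ) - 1)) = 1 + 1/(k:ℝ) := by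
    by_cases h : Odd n
    · rw [if_pos h, hkdef, if_pos h]
    · rw [if_neg h, hkdef, if_neg h, Nat.cast_sub (by omega : 1 ≤ n)]
      norm_num
  rw [hval]
  clear_value k
  clear hkdef
  constructor
  · show (1 : ℝ) + 1/(k:ℝ) ∈ _
    set c : ℝ := ((k:ℝ) - 1) / (4 * (k:ℝ)) with hc
    have hclique : ∀ (x : Fin n → ℝ), (∀ i, x i = 1/2) →
        ∀ S : Finset (Fin n), 3 ≤ S.card → ∀ α : ℕ, 1 ≤ α → α ≤ max (S.card - 2) 1 →
        (α : ℝ) * (∑ i ∈ S, x i)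
          - (∑ i ∈ S, ∑ j ∈ S, if i < j then (if i = j then (1/2 : ℝ) else c) else 0)
          ≤ (α : ℝ) * ((α : ℝ) + 1) / 2 := by
      intro x hx S hS α hα1 hα2
      have hα2' : α + 2 ≤ S.card := by omega
      have hcard : S.card ≤ n := le_trans (Finset.card_le_univ S) (by simp)
      have hXsum : ∑ i ∈ S, ∑ j ∈ S, (if i < j then (if i = j then (1/2:ℝ) else c) else 0)
          = c * ((S.card : ℝ) * ((S.card : ℝ) - 1)) / 2 := by
        rw [← pair_sum' S c]
        refine Finset.sum_congr rfl fun i _ => Finset.sum_congr rfl fun j _ => ?_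
        by_cases h : i < j
        · simp [h, h.ne]
        · simp [h]
      have hxsum : ∑ i ∈ S, x i = (S.card : ℝ) / 2 := by
        rw [Finset.sum_congr rfl fun i _ => hx i]
        simp [Finset.sum_const]
        ring
      rw [hXsum, hxsum]
      have hkey := keyZ' (k : ℤ) (S.card : ℤ) (α : ℤ) (by exact_mod_cast hkodd)
        (by exact_mod_cast hk3) (by exact_mod_cast hS)
        (by exact_mod_cast le_trans hcard hnk) (by exact_mod_cast hα1)
        (by exact_mod_cast hα2')
      have hkeyR : 4*(k:ℝ)*((α:ℝ)*((S.card:ℝ)-1-(α:ℝ))) ≤ ((k:ℝ)-1)*((S.card:ℝ)*((S.card:ℝ)-1)) := by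
        exact_mod_cast hkey
      have hD : (α:ℝ)*((S.card:ℝ)-1-(α:ℝ)) ≤ c * ((S.card:ℝ)*((S.card:ℝ)-1)) := by
        rw [hc, div_mul_eq_mul_div, le_div_iff₀ (by positivity : (0:ℝ) < 4*(k:ℝ))]
        nlinarith [hkeyR]
      nlinarith [hD]
    refine ⟨fun _ => 1/2, fun _ => 1/2,
      fun i j => if i = j then 1/2 else c, fun i j => if i = j then 1/2 else c,
      fun i => by norm_num, fun i => by norm_num, ?_, fun i => by simp, ?_, ?_⟩
    · intro i j hij
      have hne : i ≠ j := hij.ne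
      simp only [if_neg hne, eq_self_iff_true, if_true]
      have : (1:ℝ)/2 - 2*c + 1/2 + 1/2 - 2*c + 1/2 = 1 + 1/(k:ℝ) := by
        rw [hc]; field_simp; ring
      linarith [le_of_eq this.symm]
    · exact hclique _ (fun _ => rfl)
    · exact hclique _ (fun _ => rfl)
  · rintro γ ⟨x, y, X, Y, hx, hy, ha, hb, hcx, hcy⟩
    have hcardu : ((Finset.univ : Finset (Fin n)).card : ℝ) = (n : ℝ) := by
      simp
    have hcardu' : (Finset.univ : Finset (Fin n)).card = n := by simp
    set SX : ℝ := ∑ i : Fin n, ∑ j : Fin n, (if i < j then X i j else 0) with hSX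
    set SY : ℝ := ∑ i : Fin n, ∑ j : Fin n, (if i < j then Y i j else 0) with hSY
    set sx : ℝ := ∑ i, x i with hsx
    set sy : ℝ := ∑ i, y i with hsy
    -- step 1: sum the γ constraint over all pairs
    have hT : γ * ((n : ℝ) * ((n : ℝ) - 1)) / 2
        ≤ ((n:ℝ)-1) * sx + ((n:ℝ)-1) * sy - 2 * SX - 2 * SY := by
      have h1 : ∑ i : Fin n, ∑ j : Fin n, (if i < j then γ else 0)
          ≤ ∑ i : Fin n, ∑ j : Fin n, (if i < j then
              X i i - 2 * X i j + X j j + Y i i - 2 * Y i j + Y j j else 0) := by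
        refine Finset.sum_le_sum fun i _ => Finset.sum_le_sum fun j _ => ?_
        by_cases h : i < j
        · simpa [h] using ha i j h
        · simp [h]
      have h2 : ∑ i : Fin n, ∑ j : Fin n, (if i < j then
            X i i - 2 * X i j + X j j + Y i i - 2 * Y i j + Y j j else 0)
          = ((n:ℝ)-1) * (∑ i, X i i) + ((n:ℝ)-1) * (∑ i, Y i i) - 2 * SX - 2 * SY := by
        have e : ∀ i ∈ (Finset.univ : Finset (Fin n)), ∀ j ∈ (Finset.univ : Finset (Fin n)),
            (if i < j then X i i - 2 * X i j + X j j + Y i i - 2 * Y i j + Y j j else 0)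
            = (if i < j then X i i + X j j else 0) + (if i < j then Y i i + Y j j else 0)
              - 2 * (if i < j then X i j else 0) - 2 * (if i < j then Y i j else 0) := by
          intro i _ j _; split_ifs <;> ring
        rw [Finset.sum_congr rfl fun i hi => Finset.sum_congr rfl fun j hj => e i hi j hj]
        simp only [Finset.sum_sub_distrib, Finset.sum_add_distrib, ← Finset.mul_sum]
        rw [diag_sum' Finset.univ (fun i => X i i), diag_sum' Finset.univ (fun i => Y i i),
          hcardu]
      have h3 : ∑ i : Fin n, ∑ j : Fin n, (if i < j then γ else 0) = γ * ((n:ℝ) * ((n:ℝ)-1)) / 2 := by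
        rw [pair_sum' Finset.univ γ, hcardu]
      have hdx : ∑ i, X i i ≤ sx := Finset.sum_le_sum fun i _ => (hb i).1
      have hdy : ∑ i, Y i i ≤ sy := Finset.sum_le_sum fun i _ => (hb i).2
      have hn1 : (0:ℝ) ≤ (n:ℝ) - 1 := by
        have : (1:ℝ) ≤ (n:ℝ) := by exact_mod_cast le_trans (by norm_num) hn
        linarith
      rw [h3, h2] at h1
      nlinarith [mul_le_mul_of_nonneg_left hdx hn1, mul_le_mul_of_nonneg_left hdy hn1]
    rcases Nat.even_or_odd n with hne | hno
    · -- n even, k = n - 1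
      have hkn' : k = n - 1 := by
        rcases hkodd with ⟨t, ht⟩
        rcases hne with ⟨s, hs⟩
        omega
      obtain ⟨a, hna⟩ : ∃ a, n = 2 * a := hne.exists_two_nsmul n
      have ha2 : 2 ≤ a := by omega
      have hna' : (n:ℝ) = 2*(a:ℝ) := by exact_mod_cast hna
      have hk' : (k:ℝ) = 2*(a:ℝ) - 1 := by
        have : (k:ℝ) = ((n:ℝ)) - 1 := by
          rw [hkn']; push_cast [Nat.cast_sub (by omega : 1 ≤ n)]; ring
        rw [this, hna']
      have hax : (a:ℝ) * sx - SX ≤ (a:ℝ) * ((a:ℝ)+1)/2 := by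
        have := hcx Finset.univ (by rw [hcardu']; omega) a (by omega) (by rw [hcardu']; omega)
        simpa using this
      have hay : (a:ℝ) * sy - SY ≤ (a:ℝ) * ((a:ℝ)+1)/2 := by
        have := hcy Finset.univ (by rw [hcardu']; omega) a (by omega) (by rw [hcardu']; omega)
        simpa using this
      have hax' : ((a:ℝ)-1) * sx - SX ≤ ((a:ℝ)-1) * (((a:ℝ)-1)+1)/2 := by
        have := hcx Finset.univ (by rw [hcardu']; omega) (a-1) (by omega) (by rw [hcardu']; omega)
        have hc1 : ((a-1:ℕ):ℝ) = (a:ℝ) - 1 := by push_cast [Nat.cast_sub (by omega : 1 ≤ a)]; ring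
        rw [hc1] at this
        simpa using this
      have hay' : ((a:ℝ)-1) * sy - SY ≤ ((a:ℝ)-1) * (((a:ℝ)-1)+1)/2 := by
        have := hcy Finset.univ (by rw [hcardu']; omega) (a-1) (by omega) (by rw [hcardu']; omega)
        have hc1 : ((a-1:ℕ):ℝ) = (a:ℝ) - 1 := by push_cast [Nat.cast_sub (by omega : 1 ≤ a)]; ring
        rw [hc1] at this
        simpa using this
      have hapos : (0:ℝ) < (a:ℝ) := by exact_mod_cast Nat.lt_of_lt_of_le (by norm_num) ha2
      rw [hna'] at hT
      have h5 : (a:ℝ) * (γ * (2*(a:ℝ)-1)) ≤ (a:ℝ) * (2*(a:ℝ)) := by nlinarith [hT, hax, hay, hax', hay']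
      have h6 : γ * (2*(a:ℝ)-1) ≤ 2*(a:ℝ) := le_of_mul_le_mul_left h5 hapos
      have ha2' : (2:ℝ) ≤ (a:ℝ) := by exact_mod_cast ha2
      have hkpos : (0:ℝ) < 2*(a:ℝ) - 1 := by linarith
      have hval : 1 + 1/(k:ℝ) = (2*(a:ℝ))/(2*(a:ℝ)-1) := by
        rw [hk']; field_simp; ring
      rw [hval, le_div_iff₀ hkpos]
      linarith
    · -- n odd, k = n  (marker)
      have hkn' : k = n := by
        rcases hkodd with ⟨t, ht⟩
        rcases hno with ⟨s, hs⟩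
        omega
      obtain ⟨a, hna⟩ : ∃ a, n = 2 * a + 1 := hno
      have ha1 : 1 ≤ a := by omega
      have hna' : (n:ℝ) = 2*(a:ℝ) + 1 := by exact_mod_cast hna
      have hk' : (k:ℝ) = 2*(a:ℝ) + 1 := by rw [hkn', hna']
      have hax : (a:ℝ) * sx - SX ≤ (a:ℝ) * ((a:ℝ)+1)/2 := by
        have := hcx Finset.univ (by rw [hcardu']; omega) a (by omega) (by rw [hcardu']; omega)
        simpa using this
      have hay : (a:ℝ) * sy - SY ≤ (a:ℝ) * ((a:ℝ)+1)/2 := by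
        have := hcy Finset.univ (by rw [hcardu']; omega) a (by omega) (by rw [hcardu']; omega)
        simpa using this
      have hapos : (0:ℝ) < (a:ℝ) := by exact_mod_cast Nat.lt_of_lt_of_le (by norm_num) ha1
      rw [hna'] at hT
      have h5 : (a:ℝ) * (γ * (2*(a:ℝ)+1)) ≤ (a:ℝ) * (2*(a:ℝ)+2) := by nlinarith [hT, hax, hay]
      have h6 : γ * (2*(a:ℝ)+1) ≤ 2*(a:ℝ)+2 := le_of_mul_le_mul_left h5 hapos
      have hkpos : (0:ℝ) < 2*(a:ℝ) + 1 := by linarith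
      have hval : 1 + 1/(k:ℝ) = (2*(a:ℝ)+2)/(2*(a:ℝ)+1) := by
        rw [hk']; field_simp; ring
      rw [hval, le_div_iff₀ hkpos]
      linarith
end

section
/- Let n ≥ 3 be an integer. Consider the set of all (x, y, Y, γ) with 0 ≤ x_1 ≤ x_2 ≤ … ≤ x_n ≤ 1, y ∈ [0,1]^n, Y_{ij} ∈ ℝ for 1 ≤ i ≤ j ≤ n, and γ ∈ ℝ, satisfying: (a) x_j − x_i + Y_{ii} − 2Y_{ij} + Y_{jj} ≥ γ for all 1 ≤ i < j ≤ n; (b) y_i + y_j + y_k − Y_{ij} − Y_{jk} − Y_{ik} ≤ 1 for all 1 ≤ i < j < k ≤ n; (c) Y_{ii} ≤ y_i for all i ∈ {1,…,n}. Then the maximum value of γ over this set is attained and equals (2/3)(1 + 1/⌊(n−1)/2⌋). (This is the optimal value of the LP relaxation (MTord^tri).) -/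
/-- The optimal value of the multi-row LP relaxation (MTord^tri) of the circle packing
problem is `(2/3)(1 + 1/⌊(n-1)/2⌋)` for all `n ≥ 3`. -/
theorem stmt_6 (n : ℕ) (hn : 3 ≤ n) :
    IsGreatest {γ : ℝ | ∃ (x y : Fin n → ℝ) (Y : Fin n → Fin n → ℝ),
      (∀ i, 0 ≤ x i ∧ x i ≤ 1) ∧ Monotone x ∧
      (∀ i, 0 ≤ y i ∧ y i ≤ 1) ∧
      (∀ i j : Fin n, i < j → x j - x i + Y i i - 2 * Y i j + Y j j ≥ γ) ∧
      (∀ i j k : Fin n, i < j → j < k →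
        y i + y j + y k - Y i j - Y j k - Y i k ≤ 1) ∧
      (∀ i, Y i i ≤ y i)}
    ((2/3) * (1 + 1 / (((n - 1) / 2 : ℕ) : ℝ))) := by
  set m : ℕ := (n - 1) / 2 with hm
  have hm1 : 1 ≤ m := by omega
  have hmpos : (0:ℝ) < (m:ℝ) := by exact_mod_cast hm1
  constructor
  · -- membership
    refine ⟨fun i => (((i:ℕ)/2 : ℕ) : ℝ) / (m:ℝ), fun _ => 1,
      fun i j => if (i:ℕ)/2 = (j:ℕ)/2 then
          (if (i:ℕ) = (j:ℕ) then 1 else 2/3 - (1/(m:ℝ))/3)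
        else 2/3 + (1/(m:ℝ))/6,
      ?_, ?_, ?_, ?_, ?_, ?_⟩
    · intro i
      refine ⟨by positivity, ?_⟩
      rw [div_le_one hmpos]
      have : (i:ℕ)/2 ≤ m := by have := i.isLt; omega
      exact_mod_cast this
    · intro i j hij
      have h : (i:ℕ)/2 ≤ (j:ℕ)/2 := Nat.div_le_div_right hij
      have h' : (((i:ℕ)/2 : ℕ) : ℝ) ≤ (((j:ℕ)/2 : ℕ) : ℝ) := by exact_mod_cast h
      show (((i:ℕ)/2 : ℕ) : ℝ) / (m:ℝ) ≤ (((j:ℕ)/2 : ℕ) : ℝ) / (m:ℝ)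
      gcongr
    · intro i; norm_num
    · intro i j hij
      have hij' : (i:ℕ) < (j:ℕ) := hij
      have hinv : (1:ℝ)/(m:ℝ) * (m:ℝ) = 1 := by field_simp
      by_cases h : (i:ℕ)/2 = (j:ℕ)/2
      · have hne : (i:ℕ) ≠ (j:ℕ) := hij'.ne
        simp only [h, hne, if_true, if_false, ite_true, ite_false]
        have hx : (((j:ℕ)/2 : ℕ) : ℝ) = (((i:ℕ)/2 : ℕ) : ℝ) := by rw [h]
        rw [hx]
        norm_num
        nlinarith [hmpos]
      · have h' : (i:ℕ)/2 < (j:ℕ)/2 := lt_of_le_of_ne (Nat.div_le_div_right hij'.le) h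
        have hc : (((i:ℕ)/2 : ℕ) : ℝ) + 1 ≤ (((j:ℕ)/2 : ℕ) : ℝ) := by exact_mod_cast h'
        have hgap : (1:ℝ)/(m:ℝ) ≤ (((j:ℕ)/2 : ℕ) : ℝ)/(m:ℝ) - (((i:ℕ)/2 : ℕ) : ℝ)/(m:ℝ) := by
          rw [div_sub_div_same]
          gcongr
          linarith
        simp only [h, if_false, ite_false]
        norm_num
        rw [one_div] at hgap
        nlinarith [hmpos]
    · intro i j k hij hjk
      have hij' : (i:ℕ) < (j:ℕ) := hij
      have hjk' : (j:ℕ) < (k:ℕ) := hjk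
      have hik : (i:ℕ)/2 ≠ (k:ℕ)/2 := by omega
      have hm0 : (0:ℝ) ≤ 1/(m:ℝ) := by positivity
      by_cases h1 : (i:ℕ)/2 = (j:ℕ)/2
      · have h2 : (j:ℕ)/2 ≠ (k:ℕ)/2 := by omega
        simp only [h1, h2, hik, hij'.ne, if_true, if_false, ite_true, ite_false]
        norm_num
        linarith
      · by_cases h2 : (j:ℕ)/2 = (k:ℕ)/2
        · simp only [h1, h2, hik, hjk'.ne, if_true, if_false, ite_true, ite_false]
          norm_num
          linarith
        · simp only [h1, h2, hik, if_false, ite_false]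
          linarith
    · intro i; simp
  · -- upper bound
    rintro γ ⟨x, y, Y, hx01, hxmono, hy01, hpair, htri, hdiag⟩
    have key : ∀ i j k : Fin n, i < j → j < k → 3*γ ≤ 2 + 2*(x k - x i) := by
      intro i j k hij hjk
      have p1 := hpair i j hij
      have p2 := hpair i k (hij.trans hjk)
      have p3 := hpair j k hjk
      have t := htri i j k hij hjk
      have d1 := hdiag i
      have d2 := hdiag j
      have d3 := hdiag k
      linarith
    set f : ℕ → ℝ := fun t => x ⟨min (2*t) (n-1), by omega⟩ with hf
    have step : ∀ t ∈ Finset.range m, 3*γ ≤ 2 + 2*(f (t+1) - f t) := by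
      intro t ht
      simp only [Finset.mem_range] at ht
      have h1 : 2*t < n := by omega
      have h2 : 2*t+1 < n := by omega
      have h3 : 2*(t+1) < n := by omega
      have e1 : f t = x ⟨2*t, h1⟩ := by
        simp only [hf]
        congr 1
        ext
        simp
        omega
      have e2 : f (t+1) = x ⟨2*(t+1), h3⟩ := by
        simp only [hf]
        congr 1
        ext
        simp
        omega
      rw [e1, e2]
      exact key ⟨2*t, h1⟩ ⟨2*t+1, h2⟩ ⟨2*(t+1), h3⟩ (by simp [Fin.lt_def]) (Fin.mk_lt_mk.mpr (by omega))
    have tel : ∑ t ∈ Finset.range m, (f (t+1) - f t) = f m - f 0 := Finset.sum_range_sub f m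
    have hsum : (m:ℝ) * (3*γ) ≤ 2*(m:ℝ) + 2*(f m - f 0) := by
      calc (m:ℝ)*(3*γ) = ∑ _t ∈ Finset.range m, 3*γ := by
            simp [Finset.sum_const, mul_comm]
        _ ≤ ∑ t ∈ Finset.range m, (2 + 2*(f (t+1) - f t)) := Finset.sum_le_sum step
        _ = 2*(m:ℝ) + 2*(f m - f 0) := by
            rw [Finset.sum_add_distrib, ← Finset.mul_sum, tel, Finset.sum_const]
            simp [mul_comm]
    have hf0 : 0 ≤ f 0 := (hx01 _).1
    have hfm : f m ≤ 1 := (hx01 _).2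
    have hfin : (m:ℝ)*(3*γ) ≤ 2*(m:ℝ) + 2 := by linarith
    have hγ : γ ≤ (2*(m:ℝ)+2)/(3*(m:ℝ)) := by
      rw [le_div_iff₀ (by positivity)]
      linarith
    calc γ ≤ (2*(m:ℝ)+2)/(3*(m:ℝ)) := hγ
      _ = 2/3 * (1 + 1/(m:ℝ)) := by field_simp
end

section
/- Let n ≥ 2 be an integer. Consider the set of all (x, y, X, Y, γ) where x, y ∈ [0,1]^n, X and Y are real symmetric n×n matrices with X − x xᵀ positive semidefinite and Y − y yᵀ positive semidefinite, γ ∈ ℝ, and: X_{ii} − 2X_{ij} + X_{jj} + Y_{ii} − 2Y_{ij} + Y_{jj} ≥ γ for all 1 ≤ i < j ≤ n, and X_{ii} ≤ x_i, Y_{ii} ≤ y_i for all i ∈ {1,…,n}. Then the maximum value of γ over this set is attained and equals 1 + 1/(n−1). (This is the optimal value of the SDP relaxation (SDP1) of the circle packing problem.) -/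
open Finset Matrix

/-- The optimal value of the basic SDP relaxation (SDP1) of the circle packing
problem is `1 + 1/(n-1)` for all `n ≥ 2`. -/
theorem stmt_8 (n : ℕ) (hn : 2 ≤ n) :
    IsGreatest {γ : ℝ | ∃ (x y : Fin n → ℝ) (X Y : Matrix (Fin n) (Fin n) ℝ),
      (∀ i, 0 ≤ x i ∧ x i ≤ 1) ∧ (∀ i, 0 ≤ y i ∧ y i ≤ 1) ∧
      X.IsSymm ∧ Y.IsSymm ∧
      (X - Matrix.vecMulVec x x).PosSemidef ∧
      (Y - Matrix.vecMulVec y y).PosSemidef ∧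
      (∀ i j : Fin n, i < j →
        X i i - 2 * X i j + X j j + Y i i - 2 * Y i j + Y j j ≥ γ) ∧
      (∀ i, X i i ≤ x i ∧ Y i i ≤ y i)}
    (1 + 1 / ((n : ℝ) - 1)) := by
  have hnR : (2:ℝ) ≤ (n:ℝ) := by exact_mod_cast hn
  have hpos : (0:ℝ) < (n:ℝ) - 1 := by linarith
  constructor
  · -- membership: the construction
    set c : ℝ := ((n:ℝ) - 2) / (4 * ((n:ℝ) - 1)) with hc
    set x : Fin n → ℝ := fun _ => 1/2 with hxdef
    set A : Matrix (Fin n) (Fin n) ℝ := Matrix.of (fun i j => if i = j then (1/2:ℝ) else c) with hA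
    have hAsymm : A.IsSymm := by
      apply Matrix.IsSymm.ext
      intro i j
      by_cases h : i = j
      · simp [hA, h]
      · simp [hA, h, Ne.symm h]
    have hc1 : c - 1/4 = -(1/(4*((n:ℝ)-1))) := by
      rw [hc]; field_simp; ring
    have hc2 : 1/2 - c = (n:ℝ)/(4*((n:ℝ)-1)) := by
      rw [hc]; field_simp; ring
    have hApsd : (A - Matrix.vecMulVec x x).PosSemidef := by
      rw [Matrix.posSemidef_iff_dotProduct_mulVec]
      constructor
      · rw [Matrix.IsHermitian]
        ext i j
        by_cases h : i = j
        · simp [hA, h, Matrix.vecMulVec_apply, hxdef]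
        · simp [hA, h, Ne.symm h, Matrix.vecMulVec_apply, hxdef]
      · intro v
        have hrow : ∀ i : Fin n, ((A - Matrix.vecMulVec x x) *ᵥ v) i
            = (c - 1/4) * (∑ j, v j) + (1/2 - c) * v i := by
          intro i
          simp only [Matrix.mulVec, dotProduct, Matrix.sub_apply,
            Matrix.vecMulVec_apply, hA, Matrix.of_apply, hxdef]
          have : ∀ j : Fin n, ((if i = j then (1/2:ℝ) else c) - 1/2 * (1/2)) * v j
              = (c - 1/4) * v j + (if i = j then (1/2 - c) * v j else 0) := by
            intro j; split_ifs <;> ring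
          rw [Finset.sum_congr rfl (fun j _ => this j), Finset.sum_add_distrib,
            Finset.sum_ite_eq, if_pos (Finset.mem_univ i), ← Finset.mul_sum]
        have hdot : dotProduct (star v) ((A - Matrix.vecMulVec x x) *ᵥ v)
            = (c - 1/4) * (∑ j, v j)^2 + (1/2 - c) * ∑ i, (v i)^2 := by
          simp only [dotProduct, Pi.star_apply, star_trivial]
          rw [Finset.sum_congr rfl (fun i _ => by rw [hrow i])]
          have : ∀ i : Fin n, v i * ((c - 1/4) * (∑ j, v j) + (1/2 - c) * v i)
              = (c - 1/4) * (∑ j, v j) * v i + (1/2 - c) * (v i)^2 := by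
            intro i; ring
          rw [Finset.sum_congr rfl (fun i _ => this i), Finset.sum_add_distrib,
            ← Finset.mul_sum, ← Finset.mul_sum]
          ring
        rw [hdot, hc1, hc2]
        have hCS : (∑ i, v i)^2 ≤ (n:ℝ) * ∑ i, (v i)^2 := by
          have h := sq_sum_le_card_mul_sum_sq (s := (Finset.univ : Finset (Fin n))) (f := v)
          simpa using h
        have h4 : (0:ℝ) < 4*((n:ℝ)-1) := by linarith
        have heq : -(1/(4*((n:ℝ)-1))) * (∑ j, v j)^2 + (n:ℝ)/(4*((n:ℝ)-1)) * ∑ i, (v i)^2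
            = ((n:ℝ) * (∑ i, (v i)^2) - (∑ j, v j)^2) / (4*((n:ℝ)-1)) := by
          field_simp; ring
        rw [heq]
        exact div_nonneg (by linarith) (le_of_lt h4)
    refine ⟨x, x, A, A, fun i => by norm_num [hxdef], fun i => by norm_num [hxdef],
      hAsymm, hAsymm, hApsd, hApsd, ?_, fun i => by simp [hA, hxdef]⟩
    intro i j hij
    have hne : i ≠ j := ne_of_lt hij
    have hAij : A i j = c := by simp [hA, hne]
    have hAii : A i i = 1/2 := by simp [hA]
    have hAjj : A j j = 1/2 := by simp [hA]
    rw [hAij, hAii, hAjj, ge_iff_le]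
    have : (1:ℝ) + 1/((n:ℝ)-1) = 2 - 4*c := by
      rw [hc]; field_simp; ring
    rw [this]; ring_nf; linarith
  · -- upper bound
    rintro γ ⟨x, y, X, Y, hx, hy, hXs, hYs, hXp, hYp, hcon, hdiag⟩
    set N : ℝ := (n:ℝ) with hN
    set E : Fin n × Fin n → ℝ := fun p =>
      X p.1 p.1 - 2 * X p.1 p.2 + X p.2 p.2 + Y p.1 p.1 - 2 * Y p.1 p.2 + Y p.2 p.2 with hE
    have hEsymm : ∀ i j : Fin n, E (i, j) = E (j, i) := by
      intro i j
      simp only [hE]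
      rw [hXs.apply i j, hYs.apply i j]
      ring
    have hge : ∀ p ∈ (Finset.univ : Finset (Fin n)).offDiag, γ ≤ E p := by
      rintro ⟨i, j⟩ hp
      rw [Finset.mem_offDiag] at hp
      rcases lt_or_gt_of_ne hp.2.2 with h | h
      · exact hcon i j h
      · rw [hEsymm]; exact hcon j i h
    have hcard : (((Finset.univ : Finset (Fin n)).offDiag.card : ℝ)) = (n:ℝ)*(n:ℝ) - (n:ℝ) := by
      rw [Finset.offDiag_card, Finset.card_univ, Fintype.card_fin]
      have hle : n ≤ n * n := Nat.le_mul_of_pos_left n (by omega)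
      rw [Nat.cast_sub hle, Nat.cast_mul]
    have hsum1 : ((n:ℝ)*(n:ℝ) - (n:ℝ)) * γ ≤ ∑ p ∈ (Finset.univ : Finset (Fin n)).offDiag, E p := by
      have h := Finset.card_nsmul_le_sum (Finset.univ : Finset (Fin n)).offDiag E γ hge
      rwa [nsmul_eq_mul, hcard] at h
    have hsum2 : ∑ p ∈ (Finset.univ : Finset (Fin n)).offDiag, E p
        = ∑ p ∈ Finset.univ ×ˢ Finset.univ, E p := by
      apply Finset.sum_subset
      · intro p _; simp [Finset.mem_product]
      · intro p hp hnp
        have hpp : p.1 = p.2 := by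
          by_contra h
          exact hnp (Finset.mem_offDiag.2 ⟨Finset.mem_univ _, Finset.mem_univ _, h⟩)
        simp only [hE]
        rw [hpp]; ring
    have key : ∀ (A : Matrix (Fin n) (Fin n) ℝ) (i : Fin n),
        ∑ j, (A i i - 2 * A i j + A j j) = (n:ℝ) * A i i - 2 * (∑ j, A i j) + ∑ j, A j j := by
      intro A i
      rw [Finset.sum_add_distrib, Finset.sum_sub_distrib, Finset.sum_const,
        Finset.card_univ, Fintype.card_fin, ← Finset.mul_sum, nsmul_eq_mul]
    have hprodX : ∀ (A : Matrix (Fin n) (Fin n) ℝ),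
        ∑ i, ∑ j, (A i i - 2 * A i j + A j j)
          = 2 * (n:ℝ) * (∑ i, A i i) - 2 * (∑ i, ∑ j, A i j) := by
      intro A
      rw [Finset.sum_congr rfl (fun i _ => key A i), Finset.sum_add_distrib,
        Finset.sum_sub_distrib, ← Finset.mul_sum, ← Finset.mul_sum, Finset.sum_const,
        Finset.card_univ, Fintype.card_fin, nsmul_eq_mul]
      ring
    have hsum3 : ∑ p ∈ Finset.univ ×ˢ Finset.univ, E p
        = 2*(n:ℝ)*(∑ i, X i i) - 2*(∑ i, ∑ j, X i j)
          + (2*(n:ℝ)*(∑ i, Y i i) - 2*(∑ i, ∑ j, Y i j)) := by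
      rw [Finset.sum_product]
      have hsplit : ∀ i j : Fin n, E (i, j)
          = (X i i - 2*X i j + X j j) + (Y i i - 2*Y i j + Y j j) := by
        intro i j; simp only [hE]; ring
      calc ∑ i, ∑ j, E (i, j)
          = ∑ i, ∑ j, ((X i i - 2*X i j + X j j) + (Y i i - 2*Y i j + Y j j)) :=
            Finset.sum_congr rfl fun i _ => Finset.sum_congr rfl fun j _ => hsplit i j
        _ = (∑ i, ∑ j, (X i i - 2*X i j + X j j)) + ∑ i, ∑ j, (Y i i - 2*Y i j + Y j j) := by
            rw [← Finset.sum_add_distrib]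
            exact Finset.sum_congr rfl fun i _ => Finset.sum_add_distrib
        _ = _ := by rw [hprodX X, hprodX Y]
    have hPSDsum : ∀ (A : Matrix (Fin n) (Fin n) ℝ) (z : Fin n → ℝ),
        (A - Matrix.vecMulVec z z).PosSemidef →
        (∑ i, z i)^2 ≤ ∑ i, ∑ j, A i j := by
      intro A z hA
      have h := hA.dotProduct_mulVec_nonneg (fun _ => 1)
      simp only [dotProduct, Matrix.mulVec, Matrix.sub_apply,
        Matrix.vecMulVec_apply, Pi.star_apply, star_trivial, mul_one, one_mul] at h
      have heq : ∑ i, ∑ j, (A i j - z i * z j)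
          = (∑ i, ∑ j, A i j) - (∑ i, z i)^2 := by
        rw [Finset.sum_congr rfl (fun i _ => Finset.sum_sub_distrib (fun j => A i j) (fun j => z i * z j)),
          Finset.sum_sub_distrib]
        congr 1
        rw [sq, Finset.sum_mul_sum]
      linarith [h, heq.symm.le, heq.le]
    have hSX : (∑ i, x i)^2 ≤ ∑ i, ∑ j, X i j := hPSDsum X x hXp
    have hSY : (∑ i, y i)^2 ≤ ∑ i, ∑ j, Y i j := hPSDsum Y y hYp
    have hTXb : (∑ i, X i i) ≤ ∑ i, x i := Finset.sum_le_sum fun i _ => (hdiag i).1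
    have hTYb : (∑ i, Y i i) ≤ ∑ i, y i := Finset.sum_le_sum fun i _ => (hdiag i).2
    have h1 : ((n:ℝ)*(n:ℝ) - (n:ℝ)) * γ
        ≤ 2*(n:ℝ)*(∑ i, X i i) - 2*(∑ i, ∑ j, X i j)
          + (2*(n:ℝ)*(∑ i, Y i i) - 2*(∑ i, ∑ j, Y i j)) := by
      rw [← hsum3, ← hsum2]; exact hsum1
    have hfinal : ((n:ℝ)*(n:ℝ) - (n:ℝ)) * γ ≤ (n:ℝ)*(n:ℝ) := by
      nlinarith [h1, hSX, hSY, hTXb, hTYb, hnR,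
        sq_nonneg (2*(∑ i, x i) - (n:ℝ)), sq_nonneg (2*(∑ i, y i) - (n:ℝ)),
        mul_le_mul_of_nonneg_left hTXb (by linarith : (0:ℝ) ≤ 2*(n:ℝ)),
        mul_le_mul_of_nonneg_left hTYb (by linarith : (0:ℝ) ≤ 2*(n:ℝ))]
    have hNN : (0:ℝ) < (n:ℝ)*(n:ℝ) - (n:ℝ) := by nlinarith
    have hle : γ ≤ ((n:ℝ)*(n:ℝ)) / ((n:ℝ)*(n:ℝ) - (n:ℝ)) := by
      rw [le_div_iff₀ hNN]; linarith
    have heq2 : ((n:ℝ)*(n:ℝ)) / ((n:ℝ)*(n:ℝ) - (n:ℝ)) = 1 + 1/((n:ℝ)-1) := by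
      rw [div_eq_iff (ne_of_gt hNN)]
      have h0 : (n:ℝ) - 1 ≠ 0 := ne_of_gt hpos
      field_simp
      ring
    rw [← heq2]; exact hle
end

section
/- Let n ≥ 5 be an integer, and set n_x := ⌈n/2⌉, n_y := ⌈n/4⌉. Consider the set of all (x, y, X, Y, γ) where x, y ∈ [0,1]^n, X and Y are real symmetric n×n matrices with X − x xᵀ positive semidefinite and Y − y yᵀ positive semidefinite, γ ∈ ℝ, and: X_{ii} − 2X_{ij} + X_{jj} + Y_{ii} − 2Y_{ij} + Y_{jj} ≥ γ for all 1 ≤ i < j ≤ n; X_{ii} ≤ x_i/2 for i ≤ n_x and X_{ii} ≤ x_i for i > n_x; Y_{ii} ≤ y_i/2 for i ≤ n_y and Y_{ii} ≤ y_i for i > n_y. Then the maximum value of γ over this set is attained and equals (1/4)(1 + 1/⌊(n−1)/4⌋). (This is the optimal value of the SDP relaxation (SDP2).) -/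
open Finset Matrix

private lemma sdp2_card_filter_lt (n m : ℕ) (h : m < n) :
    (univ.filter (fun i : Fin n => (i:ℕ) < m)).card = m := by
  have : univ.filter (fun i : Fin n => (i:ℕ) < m) = Finset.Iio (⟨m, h⟩ : Fin n) := by
    ext i; simp [Fin.lt_def]
  rw [this, Fin.card_Iio]

private lemma sdp2_qf_indicator {n : ℕ} (m : ℕ) (M : Matrix (Fin n) (Fin n) ℝ) :
    (star (fun i : Fin n => if (i:ℕ) < m then (1:ℝ) else 0)) ⬝ᵥ
      (M *ᵥ (fun i : Fin n => if (i:ℕ) < m then (1:ℝ) else 0))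
    = ∑ i ∈ univ.filter (fun i : Fin n => (i:ℕ) < m),
        ∑ j ∈ univ.filter (fun j : Fin n => (j:ℕ) < m), M i j := by
  simp only [star_trivial, dotProduct, Matrix.mulVec, ite_mul, mul_ite, one_mul, zero_mul,
    mul_one, mul_zero, Finset.sum_ite_irrel, Finset.sum_const_zero]
  rw [Finset.sum_filter]
  refine Finset.sum_congr rfl fun i _ => ?_
  split_ifs with h
  · rw [Finset.sum_filter]
  · rfl

set_option maxHeartbeats 1000000 in
/-- The optimal value of the SDP relaxation (SDP2) of the circle packing problem
(with tightened diagonal constraints) is `(1/4)(1 + 1/⌊(n-1)/4⌋)` for all `n ≥ 5`.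
Here indices of `Fin n` are 0-based, so the 1-based condition `i ≤ n_x` reads
`(i : ℕ) + 1 ≤ n_x`; `n_x = ⌈n/2⌉ = (n+1)/2`, `n_y = ⌈n/4⌉ = (n+3)/4`, and
`⌊(n-1)/4⌋ = (n-1)/4` in ℕ. -/
theorem stmt_9 (n : ℕ) (hn : 5 ≤ n)
    (nx ny : ℕ) (hnx : nx = (n + 1) / 2) (hny : ny = (n + 3) / 4) :
    IsGreatest {γ : ℝ | ∃ (x y : Fin n → ℝ) (X Y : Matrix (Fin n) (Fin n) ℝ),
      (∀ i, 0 ≤ x i ∧ x i ≤ 1) ∧ (∀ i, 0 ≤ y i ∧ y i ≤ 1) ∧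
      X.IsSymm ∧ Y.IsSymm ∧
      (X - Matrix.vecMulVec x x).PosSemidef ∧
      (Y - Matrix.vecMulVec y y).PosSemidef ∧
      (∀ i j : Fin n, i < j →
        X i i - 2 * X i j + X j j + Y i i - 2 * Y i j + Y j j ≥ γ) ∧
      (∀ i : Fin n, ((i : ℕ) + 1 ≤ nx → X i i ≤ x i / 2) ∧
        (nx < (i : ℕ) + 1 → X i i ≤ x i)) ∧
      (∀ i : Fin n, ((i : ℕ) + 1 ≤ ny → Y i i ≤ y i / 2) ∧
        (ny < (i : ℕ) + 1 → Y i i ≤ y i))}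
    ((1/4) * (1 + 1 / (((n - 1) / 4 : ℕ) : ℝ))) := by
  set k : ℕ := (n - 1) / 4 with hk
  have hk1 : 1 ≤ k := by omega
  have hnyk : ny = k + 1 := by omega
  have hnyn : ny < n := by omega
  have hnynx : ny ≤ nx := by omega
  set kR : ℝ := (k : ℝ) with hkR
  have hkR1 : (1:ℝ) ≤ kR := by rw [hkR]; exact_mod_cast hk1
  have hkR0 : (0:ℝ) < kR := by linarith
  have hkRne : kR ≠ 0 := ne_of_gt hkR0
  set S : Finset (Fin n) := univ.filter (fun i : Fin n => (i:ℕ) < ny) with hS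
  have hScard : S.card = ny := sdp2_card_filter_lt n ny hnyn
  have hmem : ∀ i : Fin n, i ∈ S ↔ (i:ℕ) < ny := by intro i; simp [hS]
  have hcast : ((ny : ℕ) : ℝ) = kR + 1 := by rw [hnyk]; push_cast; ring
  have h1k : 1 / kR ≤ 1 := by rw [div_le_one hkR0]; exact hkR1
  have hinv : kR⁻¹ ≤ 1 := by rw [← one_div]; exact h1k
  set c : ℝ := 1 / (16 * kR) with hc
  have hc16 : kR * c = 1 / 16 := by rw [hc]; field_simp
  have hcpos : 0 < c := by rw [hc]; positivity
  have hQF : ∀ v : Fin n → ℝ,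
      0 ≤ ∑ i ∈ S, v i * ((kR+1)*c*v i - c*(∑ j ∈ S, v j)) := by
    intro v
    have hTcs := sq_sum_le_card_mul_sum_sq (s := S) (f := v)
    rw [hScard, hcast] at hTcs
    have step : ∀ i ∈ S, v i * ((kR+1)*c*v i - c*(∑ j ∈ S, v j))
        = (kR+1)*c*(v i^2) - (c*(∑ j ∈ S, v j))*(v i) := fun i _ => by ring
    rw [Finset.sum_congr rfl step, Finset.sum_sub_distrib, ← Finset.mul_sum, ← Finset.mul_sum]
    nlinarith [mul_le_mul_of_nonneg_left hTcs hcpos.le]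
  constructor
  · -- membership
    refine ⟨fun i => if (i:ℕ) < ny then (1/4:ℝ) else 0,
        fun i => if (i:ℕ) < ny then (1/4:ℝ) else 1/2,
        Matrix.of (fun i j : Fin n => if (i:ℕ) < ny ∧ (j:ℕ) < ny then
            (1/16 - c + if i = j then (kR+1)*c else 0) else 0),
        Matrix.of (fun i j : Fin n => if (i:ℕ) < ny ∧ (j:ℕ) < ny then
            (1/16 - c + if i = j then (kR+1)*c else 0)
          else if (i:ℕ) < ny ∨ (j:ℕ) < ny then 1/8
          else if i = j then 1/2 else 1/4),
        ?_, ?_, ?_, ?_, ?_, ?_, ?_, ?_, ?_⟩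
    · intro i; dsimp only; split_ifs <;> norm_num
    · intro i; dsimp only; split_ifs <;> norm_num
    · -- X symm
      apply Matrix.IsSymm.ext; intro i j
      by_cases hij : i = j
      · subst hij; simp only [Matrix.transpose_apply]
      · have hji : j ≠ i := fun h => hij h.symm
        simp only [Matrix.of_apply, if_neg hij, if_neg hji, and_comm]
    · -- Y symm
      apply Matrix.IsSymm.ext; intro i j
      by_cases hij : i = j
      · subst hij; simp only [Matrix.transpose_apply]
      · have hji : j ≠ i := fun h => hij h.symm
        simp only [Matrix.of_apply, if_neg hij, if_neg hji, and_comm, or_comm]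
    · -- X - xxᵀ PSD
      have hE : ∀ i j : Fin n, ((Matrix.of (fun i j : Fin n => if (i:ℕ) < ny ∧ (j:ℕ) < ny then
            (1/16 - c + if i = j then (kR+1)*c else 0) else 0)
          - vecMulVec (fun i : Fin n => if (i:ℕ) < ny then (1/4:ℝ) else 0)
                      (fun i : Fin n => if (i:ℕ) < ny then (1/4:ℝ) else 0)
            : Matrix (Fin n) (Fin n) ℝ)) i j
          = if (i:ℕ) < ny ∧ (j:ℕ) < ny then ((if i = j then (kR+1)*c else 0) - c) else 0 := by
        intro i j
        simp only [Matrix.sub_apply, Matrix.vecMulVec_apply, Matrix.of_apply]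
        by_cases hi : (i:ℕ) < ny <;> by_cases hj : (j:ℕ) < ny <;>
          simp [hi, hj] <;> ring
      refine Matrix.PosSemidef.of_dotProduct_mulVec_nonneg ?_ ?_
      · show _ᴴ = _
        rw [Matrix.conjTranspose_eq_transpose_of_trivial]
        refine Matrix.IsSymm.ext fun i j => ?_
        rw [hE, hE]
        by_cases hij : i = j
        · subst hij; rfl
        · have h1 : (i = j) = False := eq_false hij
          have h2 : (j = i) = False := eq_false fun h => hij h.symm
          simp only [h1, h2, if_false, and_comm]
      · intro v
        have hinner : ∀ i : Fin n,
            (∑ j : Fin n, (if (i:ℕ) < ny ∧ (j:ℕ) < ny then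
              ((if i = j then (kR+1)*c else 0) - c) else 0) * v j)
            = if (i:ℕ) < ny then ((kR+1)*c*v i - c*(∑ j ∈ S, v j)) else 0 := by
          intro i
          by_cases hi : (i:ℕ) < ny
          · rw [if_pos hi]
            simp only [hi, true_and]
            have step : ∀ j : Fin n,
                (if (j:ℕ) < ny then ((if i = j then (kR+1)*c else 0) - c) else 0) * v j
                = if (j:ℕ) < ny then ((if i = j then (kR+1)*c*v j else 0) - c * v j) else 0 := by
              intro j; split_ifs <;> ring
            rw [Finset.sum_congr rfl (fun j _ => step j), ← Finset.sum_filter, ← hS,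
              Finset.sum_sub_distrib, Finset.sum_ite_eq, if_pos ((hmem i).2 hi),
              ← Finset.mul_sum]
          · rw [if_neg hi]
            simp only [hi, false_and, if_false, zero_mul, Finset.sum_const_zero]
        show (0:ℝ) ≤ _
        simp only [dotProduct, Matrix.mulVec, star_trivial, hE, hinner,
          mul_ite, mul_zero]
        rw [← Finset.sum_filter, ← hS]
        exact hQF v
    · -- Y - yyᵀ PSD
      have hF : ∀ i j : Fin n, ((Matrix.of (fun i j : Fin n => if (i:ℕ) < ny ∧ (j:ℕ) < ny then
            (1/16 - c + if i = j then (kR+1)*c else 0)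
          else if (i:ℕ) < ny ∨ (j:ℕ) < ny then 1/8
          else if i = j then 1/2 else 1/4)
          - vecMulVec (fun i : Fin n => if (i:ℕ) < ny then (1/4:ℝ) else 1/2)
                      (fun i : Fin n => if (i:ℕ) < ny then (1/4:ℝ) else 1/2)
            : Matrix (Fin n) (Fin n) ℝ)) i j
          = if (i:ℕ) < ny ∧ (j:ℕ) < ny then ((if i = j then (kR+1)*c else 0) - c)
            else if i = j then 1/4 else 0 := by
        intro i j
        simp only [Matrix.sub_apply, Matrix.vecMulVec_apply, Matrix.of_apply]
        by_cases hi : (i:ℕ) < ny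
        · by_cases hj : (j:ℕ) < ny
          · simp [hi, hj]; ring
          · have hij : i ≠ j := by rintro rfl; exact hj hi
            simp [hi, hj, hij]; norm_num
        · by_cases hj : (j:ℕ) < ny
          · have hij : i ≠ j := by rintro rfl; exact hi hj
            simp [hi, hj, hij]; norm_num
          · by_cases hij : i = j
            · subst hij; simp [hi]; norm_num
            · simp [hi, hj, hij]; norm_num
      refine Matrix.PosSemidef.of_dotProduct_mulVec_nonneg ?_ ?_
      · show _ᴴ = _
        rw [Matrix.conjTranspose_eq_transpose_of_trivial]
        refine Matrix.IsSymm.ext fun i j => ?_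
        rw [hF, hF]
        by_cases hij : i = j
        · subst hij; rfl
        · have h1 : (i = j) = False := eq_false hij
          have h2 : (j = i) = False := eq_false fun h => hij h.symm
          simp only [h1, h2, if_false, and_comm]
      · intro v
        have hinner : ∀ i : Fin n,
            (∑ j : Fin n, (if (i:ℕ) < ny ∧ (j:ℕ) < ny then
                ((if i = j then (kR+1)*c else 0) - c)
              else if i = j then 1/4 else 0) * v j)
            = if (i:ℕ) < ny then ((kR+1)*c*v i - c*(∑ j ∈ S, v j)) else (1/4)*v i := by
          intro i
          by_cases hi : (i:ℕ) < ny
          · rw [if_pos hi]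
            simp only [hi, true_and]
            have step : ∀ j : Fin n,
                (if (j:ℕ) < ny then ((if i = j then (kR+1)*c else 0) - c)
                  else if i = j then 1/4 else 0) * v j
                = if (j:ℕ) < ny then ((if i = j then (kR+1)*c*v j else 0) - c * v j) else 0 := by
              intro j
              by_cases hj : (j:ℕ) < ny
              · simp only [if_pos hj]; split_ifs <;> ring
              · have hij : i ≠ j := by rintro rfl; exact hj hi
                simp [hj, hij]
            rw [Finset.sum_congr rfl (fun j _ => step j), ← Finset.sum_filter, ← hS,
              Finset.sum_sub_distrib, Finset.sum_ite_eq, if_pos ((hmem i).2 hi),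
              ← Finset.mul_sum]
          · rw [if_neg hi]
            simp only [hi, false_and, if_false]
            have step : ∀ j : Fin n, (if i = j then (1/4:ℝ) else 0) * v j
                = if i = j then (1/4)*v j else 0 := by
              intro j; split_ifs <;> ring
            rw [Finset.sum_congr rfl (fun j _ => step j), Finset.sum_ite_eq,
              if_pos (Finset.mem_univ i)]
        show (0:ℝ) ≤ _
        simp only [dotProduct, Matrix.mulVec, star_trivial, hF, hinner]
        have split : ∀ i : Fin n,
            v i * (if (i:ℕ) < ny then ((kR+1)*c*v i - c*(∑ j ∈ S, v j)) else (1/4)*v i)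
            = (if (i:ℕ) < ny then v i * ((kR+1)*c*v i - c*(∑ j ∈ S, v j)) else 0)
              + (if (i:ℕ) < ny then 0 else (1/4)*(v i * v i)) := by
          intro i; split_ifs <;> ring
        rw [Finset.sum_congr rfl (fun i _ => split i), Finset.sum_add_distrib]
        have p2 : 0 ≤ ∑ i : Fin n, (if (i:ℕ) < ny then (0:ℝ) else (1/4)*(v i * v i)) := by
          refine Finset.sum_nonneg fun i _ => ?_
          split_ifs
          · exact le_refl 0
          · nlinarith [mul_self_nonneg (v i)]
        have p1 : 0 ≤ ∑ i : Fin n,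
            (if (i:ℕ) < ny then v i * ((kR+1)*c*v i - c*(∑ j ∈ S, v j)) else 0) := by
          rw [← Finset.sum_filter, ← hS]
          exact hQF v
        linarith [p1, p2]
    · -- pair constraints
      intro i j hij
      have hvij : (i:ℕ) < (j:ℕ) := hij
      have hne : i ≠ j := Fin.ne_of_lt hij
      have hne' : j ≠ i := fun h => hne h.symm
      by_cases hj : (j:ℕ) < ny
      · have hi : (i:ℕ) < ny := by omega
        have e5 : 4*c = 1/4 * (1/kR) := by rw [hc]; ring
        simp only [Matrix.of_apply, hi, hj, hne, hne', and_self, and_true, true_and, and_false, false_and,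
          or_self, or_true, true_or, false_or, or_false, if_true, if_false, eq_self_iff_true]
        linarith [hc16, e5]
      · by_cases hi : (i:ℕ) < ny
        · simp only [Matrix.of_apply, hi, hj, hne, hne', and_self, and_true, true_and, and_false, false_and,
            or_self, or_true, true_or, false_or, or_false, if_true, if_false, eq_self_iff_true]
          norm_num
          linarith [hc16, hinv]
        · simp only [Matrix.of_apply, hi, hj, hne, hne', and_self, and_true, true_and, and_false, false_and,
            or_self, or_true, true_or, false_or, or_false, if_true, if_false, eq_self_iff_true]
          norm_num
          linarith [hinv]
    · -- X diag
      intro i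
      constructor
      · intro hinx
        by_cases hi : (i:ℕ) < ny
        · simp only [Matrix.of_apply, hi, and_self, if_true, if_pos]
          linarith [hc16]
        · simp only [Matrix.of_apply, hi, and_self, and_false, false_and, if_false]
          norm_num
      · intro hinx
        by_cases hi : (i:ℕ) < ny
        · simp only [Matrix.of_apply, hi, and_self, if_true, if_pos]
          linarith [hc16]
        · simp only [Matrix.of_apply, hi, and_self, and_false, false_and, if_false]
          norm_num
    · -- Y diag
      intro i
      constructor
      · intro hiny
        have hi : (i:ℕ) < ny := by omega
        simp only [Matrix.of_apply, hi, and_self, if_true, if_pos]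
        linarith [hc16]
      · intro hiny
        have hi : ¬ (i:ℕ) < ny := by omega
        simp only [Matrix.of_apply, hi, and_self, and_false, false_and, if_false, false_or, or_self, if_pos rfl]
        norm_num
  · -- upper bound
    rintro γ ⟨x, y, X, Y, hx, hy, hXs, hYs, hXp, hYp, hpair, hXd, hYd⟩
    have hBx : (∑ i ∈ S, x i)^2 ≤ ∑ i ∈ S, ∑ j ∈ S, X i j := by
      have h := hXp.dotProduct_mulVec_nonneg (fun i => if (i:ℕ) < ny then (1:ℝ) else 0)
      rw [sdp2_qf_indicator] at h
      rw [← hS] at h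
      simp only [Matrix.sub_apply, Matrix.vecMulVec_apply, Finset.sum_sub_distrib] at h
      have hxx : ∑ i ∈ S, ∑ j ∈ S, x i * x j = (∑ i ∈ S, x i)^2 := by
        rw [sq, Finset.sum_mul_sum]
      linarith [h, hxx.le, hxx.ge]
    have hBy : (∑ i ∈ S, y i)^2 ≤ ∑ i ∈ S, ∑ j ∈ S, Y i j := by
      have h := hYp.dotProduct_mulVec_nonneg (fun i => if (i:ℕ) < ny then (1:ℝ) else 0)
      rw [sdp2_qf_indicator] at h
      rw [← hS] at h
      simp only [Matrix.sub_apply, Matrix.vecMulVec_apply, Finset.sum_sub_distrib] at h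
      have hxx : ∑ i ∈ S, ∑ j ∈ S, y i * y j = (∑ i ∈ S, y i)^2 := by
        rw [sq, Finset.sum_mul_sum]
      linarith [h, hxx.le, hxx.ge]
    have hA : ∑ i ∈ S, X i i ≤ (∑ i ∈ S, x i) / 2 := by
      rw [Finset.sum_div]
      refine Finset.sum_le_sum fun i hi => ?_
      exact (hXd i).1 (by have := (hmem i).1 hi; omega)
    have hA' : ∑ i ∈ S, Y i i ≤ (∑ i ∈ S, y i) / 2 := by
      rw [Finset.sum_div]
      refine Finset.sum_le_sum fun i hi => ?_
      exact (hYd i).1 (by have := (hmem i).1 hi; omega)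
    have hLB : ∑ i ∈ S, ∑ j ∈ S, (if i = j then (0:ℝ) else γ)
        ≤ ∑ i ∈ S, ∑ j ∈ S, (X i i - 2*X i j + X j j + Y i i - 2*Y i j + Y j j) := by
      refine Finset.sum_le_sum fun i _ => Finset.sum_le_sum fun j _ => ?_
      rcases eq_or_ne i j with rfl | hij
      · rw [if_pos rfl]; ring_nf; exact le_refl _
      · rw [if_neg hij]
        rcases lt_or_gt_of_ne hij with h | h
        · exact hpair i j h
        · have h2 := hpair j i h
          have e1 := hXs.apply i j
          have e2 := hYs.apply i j
          linarith [h2, e1.le, e1.ge, e2.le, e2.ge]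
    have hLBval : ∑ i ∈ S, ∑ j ∈ S, (if i = j then (0:ℝ) else γ) = (kR+1)*kR*γ := by
      have inner : ∀ i ∈ S, ∑ j ∈ S, (if i = j then (0:ℝ) else γ) = (kR+1)*γ - γ := by
        intro i hi
        have step : ∀ j ∈ S, (if i = j then (0:ℝ) else γ) = γ - (if i = j then γ else 0) := by
          intro j _; split_ifs <;> ring
        rw [Finset.sum_congr rfl step, Finset.sum_sub_distrib, Finset.sum_const,
          Finset.sum_ite_eq, if_pos hi, hScard, nsmul_eq_mul, hcast]
      rw [Finset.sum_congr rfl inner, Finset.sum_const, hScard, nsmul_eq_mul, hcast]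
      ring
    have hEXP : ∑ i ∈ S, ∑ j ∈ S, (X i i - 2*X i j + X j j + Y i i - 2*Y i j + Y j j)
        = 2*(kR+1)*(∑ i ∈ S, X i i) - 2*(∑ i ∈ S, ∑ j ∈ S, X i j)
          + 2*(kR+1)*(∑ i ∈ S, Y i i) - 2*(∑ i ∈ S, ∑ j ∈ S, Y i j) := by
      simp only [Finset.sum_add_distrib, Finset.sum_sub_distrib, Finset.sum_const, hScard,
        nsmul_eq_mul, hcast, ← Finset.mul_sum]
      ring
    have key : (kR+1)*kR*γ ≤ ((kR+1))^2/4 := by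
      nlinarith [hLB, hLBval, hEXP, hA, hA', hBx, hBy,
        sq_nonneg ((kR+1) - 4*(∑ i ∈ S, x i)), sq_nonneg ((kR+1) - 4*(∑ i ∈ S, y i))]
    have hk1p : (0:ℝ) < kR + 1 := by linarith
    have h4 : kR * γ ≤ (kR+1)/4 := by
      have h5 : (kR+1)*(kR*γ) ≤ (kR+1)*((kR+1)/4) := by nlinarith [key]
      exact le_of_mul_le_mul_left h5 hk1p
    have e6 : (1/4 : ℝ) * (1 + 1/kR) = (kR+1)/(4*kR) := by
      field_simp
    rw [e6, le_div_iff₀ (by linarith)]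
    linarith [h4]
end

section
/- Let n ≥ 2 be an integer. Consider the feasible set of the SDP relaxation (SDP1) augmented with the first-level RLT inequalities: all (x, y, X, Y, γ) with x, y ∈ [0,1]^n, X, Y real symmetric n×n matrices, X − x xᵀ and Y − y yᵀ positive semidefinite, X_{ii} ≤ x_i and Y_{ii} ≤ y_i for all i, X_{ii} − 2X_{ij} + X_{jj} + Y_{ii} − 2Y_{ij} + Y_{jj} ≥ γ for all 1 ≤ i < j ≤ n, and additionally X_{ij} ≥ 0, X_{ij} ≥ x_i + x_j − 1, Y_{ij} ≥ 0, Y_{ij} ≥ y_i + y_j − 1 for all 1 ≤ i < j ≤ n. Then the maximum value of γ over this augmented set is still attained and equals 1 + 1/(n−1); i.e., adding the first-level RLT constraints does not improve the bound given by (SDP1). -/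
open scoped Matrix


/-- Adding the first-level RLT inequalities to the SDP relaxation (SDP1) of the circle
packing problem does not improve the bound: the optimal value is still attained and
equals `1 + 1/(n-1)` for all `n ≥ 2`. -/
theorem stmt_10 (n : ℕ) (hn : 2 ≤ n) :
    IsGreatest {γ : ℝ | ∃ (x y : Fin n → ℝ) (X Y : Matrix (Fin n) (Fin n) ℝ),
      (∀ i, 0 ≤ x i ∧ x i ≤ 1) ∧ (∀ i, 0 ≤ y i ∧ y i ≤ 1) ∧
      X.IsSymm ∧ Y.IsSymm ∧
      (X - Matrix.vecMulVec x x).PosSemidef ∧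
      (Y - Matrix.vecMulVec y y).PosSemidef ∧
      (∀ i, X i i ≤ x i ∧ Y i i ≤ y i) ∧
      (∀ i j : Fin n, i < j →
        X i i - 2 * X i j + X j j + Y i i - 2 * Y i j + Y j j ≥ γ) ∧
      (∀ i j : Fin n, i < j →
        X i j ≥ 0 ∧ X i j ≥ x i + x j - 1 ∧ Y i j ≥ 0 ∧ Y i j ≥ y i + y j - 1)}
    (1 + 1 / ((n : ℝ) - 1)) := by
  have hm : (2:ℝ) ≤ (n:ℝ) := by exact_mod_cast hn
  have h1 : (0:ℝ) < (n:ℝ) - 1 := by linarith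
  have hn0 : (0:ℝ) < (n:ℝ) := by linarith
  have hne : ((n:ℝ)-1) ≠ 0 := ne_of_gt h1
  constructor
  · -- membership
    set c : ℝ := 1 / (4*((n:ℝ)-1)) with hc
    have hc0 : 0 < c := by positivity
    set a : ℝ := ((n:ℝ) - 2) * c with ha
    have ha0 : 0 ≤ a := by nlinarith
    set X : Matrix (Fin n) (Fin n) ℝ :=
      Matrix.of (fun i j => if i = j then (1:ℝ)/2 else a) with hX
    have hXsymm : X.IsSymm := by
      ext i j
      simp only [hX, Matrix.transpose_apply, Matrix.of_apply, eq_comm]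
    have hentry : ∀ i j, X i j - (1/2 : ℝ) * (1/2) =
        (if i = j then (n:ℝ)*c else 0) - c := by
      intro i j
      simp only [hX, Matrix.of_apply]
      split_ifs
      · rw [hc]; field_simp; ring
      · rw [ha, hc]; field_simp; ring
    have hpsd : (X - Matrix.vecMulVec (fun _ => (1:ℝ)/2) (fun _ => (1:ℝ)/2)).PosSemidef := by
      rw [Matrix.posSemidef_iff_dotProduct_mulVec]
      constructor
      · rw [Matrix.IsHermitian]
        ext i j
        simp only [Matrix.conjTranspose_apply, Matrix.sub_apply, Matrix.vecMulVec_apply,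
          hX, Matrix.of_apply, star_trivial, eq_comm]
      · intro v
        have hmv : ∀ i, ((X - Matrix.vecMulVec (fun _ => (1:ℝ)/2) (fun _ => (1:ℝ)/2)) *ᵥ v) i
            = (n:ℝ)*c * v i - c * (∑ j, v j) := by
          intro i
          simp only [Matrix.mulVec, dotProduct, Matrix.sub_apply,
            Matrix.vecMulVec_apply]
          have : ∀ j, (X i j - (1:ℝ)/2 * (1/2)) * v j
              = (if i = j then (n:ℝ)*c*v j else 0) - c * v j := by
            intro j
            rw [hentry i j]
            split_ifs <;> ring
          rw [Finset.sum_congr rfl (fun j _ => this j), Finset.sum_sub_distrib,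
            Finset.sum_ite_eq Finset.univ i (fun j => (n:ℝ)*c*v j)]
          simp [Finset.mul_sum]
        have hcheb : (∑ j, v j)^2 ≤ (n:ℝ) * ∑ j, v j^2 := by
          have := sq_sum_le_card_mul_sum_sq (s := (Finset.univ : Finset (Fin n))) (f := v)
          simpa using this
        have : dotProduct (star v) ((X - Matrix.vecMulVec (fun _ => (1:ℝ)/2) (fun _ => (1:ℝ)/2)) *ᵥ v)
            = (n:ℝ)*c * (∑ j, v j^2) - c * (∑ j, v j)^2 := by
          simp only [dotProduct, Pi.star_apply, star_trivial]
          rw [Finset.sum_congr rfl (fun i _ => by rw [hmv i])]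
          rw [Finset.sum_congr rfl (fun i _ => by ring_nf :
            ∀ i ∈ Finset.univ, v i * ((n:ℝ)*c * v i - c * (∑ j, v j))
              = (n:ℝ)*c * v i^2 - (c * (∑ j, v j)) * v i)]
          rw [Finset.sum_sub_distrib, ← Finset.mul_sum, ← Finset.mul_sum]
          ring
        rw [this]
        nlinarith
    refine ⟨fun _ => 1/2, fun _ => 1/2, X, X, fun i => by norm_num, fun i => by norm_num,
      hXsymm, hXsymm, hpsd, hpsd, fun i => by simp [hX], ?_, ?_⟩
    · intro i j hij
      have hne : i ≠ j := ne_of_lt hij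
      have h2 : X i i = 1/2 := by simp [hX]
      have h3 : X j j = 1/2 := by simp [hX]
      have h4 : X i j = a := by simp [hX, hne]
      rw [h2, h3, h4]
      have : (1:ℝ)/2 - 2*a + 1/2 + (1/2) - 2*a + 1/2 = 1 + 1/((n:ℝ)-1) := by
        rw [ha, hc]; field_simp; ring
      linarith [this]
    · intro i j hij
      have hne : i ≠ j := ne_of_lt hij
      have h4 : X i j = a := by simp [hX, hne]
      rw [h4]
      refine ⟨ha0, by norm_num [ha0], ha0, by norm_num [ha0]⟩
  · -- upper bound
    rintro γ ⟨x, y, X, Y, hx, hy, hXs, hYs, hXp, hYp, hdiag, hγ, -⟩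
    have hkey : ∀ (x : Fin n → ℝ) (X : Matrix (Fin n) (Fin n) ℝ),
        (∀ i, 0 ≤ x i ∧ x i ≤ 1) → (X - Matrix.vecMulVec x x).PosSemidef →
        (∀ i, X i i ≤ x i) →
        2*(n:ℝ)*(∑ i, X i i) - 2*(∑ i, ∑ j, X i j) ≤ (n:ℝ)^2/2 := by
      intro x X hx hXp hd
      have hP : (∑ i, x i)^2 ≤ ∑ i, ∑ j, X i j := by
        have h0 := hXp.dotProduct_mulVec_nonneg (fun _ => 1)
        have : dotProduct (star (fun _ => (1:ℝ)))
            ((X - Matrix.vecMulVec x x) *ᵥ (fun _ => 1))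
            = (∑ i, ∑ j, X i j) - (∑ i, x i)^2 := by
          simp only [dotProduct, Matrix.mulVec, Matrix.sub_apply,
            Matrix.vecMulVec_apply, Pi.star_apply, star_trivial, mul_one, one_mul]
          rw [Finset.sum_congr rfl (fun i _ => Finset.sum_sub_distrib (fun j => X i j) (fun j => x i * x j))]
          rw [Finset.sum_sub_distrib, sq, Finset.sum_mul_sum]
        rw [this] at h0
        linarith
      have hT : (∑ i, X i i) ≤ ∑ i, x i := Finset.sum_le_sum (fun i _ => hd i)
      have hS0 : 0 ≤ ∑ i, x i := Finset.sum_nonneg (fun i _ => (hx i).1)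
      nlinarith [sq_nonneg (2*(∑ i, x i) - (n:ℝ))]
    have hX' := hkey x X hx hXp (fun i => (hdiag i).1)
    have hY' := hkey y Y hy hYp (fun i => (hdiag i).2)
    have hF : ∀ i j : Fin n, (if i = j then (0:ℝ) else γ) ≤
        X i i - 2 * X i j + X j j + Y i i - 2 * Y i j + Y j j := by
      intro i j
      split_ifs with h
      · subst h; linarith
      · rcases lt_or_gt_of_ne h with hlt | hgt
        · exact hγ i j hlt
        · have := hγ j i hgt
          rw [hXs.apply i j, hYs.apply i j] at this
          linarith
    have hsum : (n:ℝ)*((n:ℝ)-1)*γ ≤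
        ∑ i, ∑ j, (X i i - 2 * X i j + X j j + Y i i - 2 * Y i j + Y j j) := by
      have h0 : ∑ i : Fin n, ∑ j : Fin n, (if i = j then (0:ℝ) else γ)
          = (n:ℝ)*((n:ℝ)-1)*γ := by
        have : ∀ i : Fin n, ∑ j : Fin n, (if i = j then (0:ℝ) else γ)
            = (n:ℝ)*γ - γ := by
          intro i
          have : ∀ j : Fin n, (if i = j then (0:ℝ) else γ)
              = γ - (if i = j then γ else 0) := by intro j; split_ifs <;> ring
          rw [Finset.sum_congr rfl (fun j _ => this j), Finset.sum_sub_distrib,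
            Finset.sum_ite_eq Finset.univ i (fun _ => γ)]
          simp only [Finset.sum_const, Finset.card_univ, Fintype.card_fin, nsmul_eq_mul,
            Finset.mem_univ, if_true]
        rw [Finset.sum_congr rfl (fun i _ => this i)]
        simp only [Finset.sum_const, Finset.card_univ, Fintype.card_fin, nsmul_eq_mul]
        ring
      rw [← h0]
      exact Finset.sum_le_sum (fun i _ => Finset.sum_le_sum (fun j _ => hF i j))
    have hexp : ∑ i, ∑ j, (X i i - 2 * X i j + X j j + Y i i - 2 * Y i j + Y j j)
        = 2*(n:ℝ)*(∑ i, X i i) - 2*(∑ i, ∑ j, X i j)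
          + (2*(n:ℝ)*(∑ i, Y i i) - 2*(∑ i, ∑ j, Y i j)) := by
      have : ∀ i : Fin n, ∑ j, (X i i - 2 * X i j + X j j + Y i i - 2 * Y i j + Y j j)
          = (n:ℝ)*(X i i) - 2*(∑ j, X i j) + (∑ j, X j j)
            + (n:ℝ)*(Y i i) - 2*(∑ j, Y i j) + (∑ j, Y j j) := by
        intro i
        simp only [Finset.sum_add_distrib, Finset.sum_sub_distrib, ← Finset.mul_sum,
          Finset.sum_const, Finset.card_univ, Fintype.card_fin, nsmul_eq_mul]
        try ring
      rw [Finset.sum_congr rfl (fun i _ => this i)]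
      simp only [Finset.sum_add_distrib, Finset.sum_sub_distrib, ← Finset.mul_sum,
        Finset.sum_const, Finset.card_univ, Fintype.card_fin, nsmul_eq_mul]
      ring
    rw [hexp] at hsum
    have : (n:ℝ)*((n:ℝ)-1)*γ ≤ (n:ℝ)^2 := by linarith
    have hrw : 1 + 1/((n:ℝ)-1) = (n:ℝ)/((n:ℝ)-1) := by field_simp; ring
    have h2 : ((n:ℝ)-1)*γ ≤ (n:ℝ) := by
      have h3 : (n:ℝ) * (((n:ℝ)-1)*γ) ≤ (n:ℝ) * (n:ℝ) := by nlinarith [this]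
      exact le_of_mul_le_mul_left h3 hn0
    rw [hrw, le_div_iff₀ h1]
    linarith
end

section
/- Let n ≥ 5 be an integer, and set n_x := ⌈n/2⌉, n_y := ⌈n/4⌉, u_i^x := 1/2 if i ≤ n_x and u_i^x := 1 otherwise, u_i^y := 1/2 if i ≤ n_y and u_i^y := 1 otherwise. Consider the feasible set of the SDP relaxation (SDP2) augmented with the scaled first-level RLT inequalities: all (x, y, X, Y, γ) with x, y ∈ [0,1]^n, X, Y real symmetric n×n matrices, X − x xᵀ and Y − y yᵀ positive semidefinite, X_{ii} ≤ x_i/2 for i ≤ n_x and X_{ii} ≤ x_i for i > n_x, Y_{ii} ≤ y_i/2 for i ≤ n_y and Y_{ii} ≤ y_i for i > n_y, X_{ii} − 2X_{ij} + X_{jj} + Y_{ii} − 2Y_{ij} + Y_{jj} ≥ γ for all 1 ≤ i < j ≤ n, and additionally, for all 1 ≤ i < j ≤ n: X_{ij} ≥ 0, X_{ij} ≥ u_j^x x_i + u_i^x x_j − u_i^x u_j^x, Y_{ij} ≥ 0, Y_{ij} ≥ u_j^y y_i + u_i^y y_j − u_i^y u_j^y. Then the maximum value of γ over this augmented set is still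 attained and equals (1/4)(1 + 1/⌊(n−1)/4⌋); i.e., adding the first-level RLT constraints does not improve the bound given by (SDP2). -/
open Matrix Finset

section helpers

lemma filter_eq_map {n m : ℕ} (h : m ≤ n) (q : Fin n → Prop) [DecidablePred q]
    (hq : ∀ i, q i ↔ (i : ℕ) < m) :
    (univ : Finset (Fin n)).filter q = Finset.map (Fin.castLEEmb h) univ := by
  ext i
  simp only [mem_filter, mem_univ, true_and, Finset.mem_map, Fin.castLEEmb,
    Function.Embedding.coeFn_mk, hq]
  constructor
  · intro hi; exact ⟨⟨i.val, hi⟩, by ext; simp [Fin.castLE]⟩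
  · rintro ⟨a, -, rfl⟩; simpa using a.isLt

lemma card_filter_eq {n m : ℕ} (h : m ≤ n) (q : Fin n → Prop) [DecidablePred q]
    (hq : ∀ i, q i ↔ (i : ℕ) < m) :
    ((univ : Finset (Fin n)).filter q).card = m := by
  rw [filter_eq_map h q hq, Finset.card_map, Finset.card_univ, Fintype.card_fin]

lemma sum_ind {n m : ℕ} (h : m ≤ n) (g : Fin n → ℝ) :
    (∑ i : Fin n, if (i : ℕ) < m then g i else 0)
      = ∑ a : Fin m, g (Fin.castLE h a) := by
  rw [← Finset.sum_filter, filter_eq_map h _ (fun _ => Iff.rfl), Finset.sum_map]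
  rfl

lemma quad_form {n : ℕ} (p : Fin n → Prop) [DecidablePred p] (d : Fin n → ℝ) (B : ℝ)
    (v : Fin n → ℝ) :
    dotProduct v ((Matrix.of fun i j =>
        (if i = j then d i else 0) - (if p i ∧ p j then B else 0)) *ᵥ v)
      = (∑ i, d i * v i ^ 2) - B * (∑ i ∈ univ.filter p, v i) ^ 2 := by
  classical
  simp only [dotProduct, mulVec, Matrix.of_apply]
  have inner : ∀ i : Fin n, (∑ j, ((if i = j then d i else 0) - (if p i ∧ p j then B else 0)) * v j)
      = d i * v i - (if p i then B * (∑ j ∈ univ.filter p, v j) else 0) := by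
    intro i
    rw [Finset.sum_congr rfl (fun j _ => sub_mul _ _ (v j)), Finset.sum_sub_distrib]
    congr 1
    · rw [Finset.sum_congr rfl (fun j _ => by rw [ite_mul, zero_mul]), Finset.sum_ite_eq]
      simp
    · by_cases hi : p i
      · simp only [hi, true_and, if_true, ite_mul, zero_mul, ← Finset.sum_filter,
          Finset.mul_sum]
      · simp [hi]
  rw [Finset.sum_congr rfl (fun i _ => by rw [inner i])]
  rw [Finset.sum_congr rfl (fun i _ => mul_sub (v i) _ _), Finset.sum_sub_distrib]
  congr 1
  · exact Finset.sum_congr rfl fun i _ => by ring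
  · rw [Finset.sum_congr rfl (fun i _ => by rw [mul_ite, mul_zero]), ← Finset.sum_filter,
      ← Finset.sum_mul]
    ring

lemma psd_helper {n : ℕ} (p : Fin n → Prop) [DecidablePred p] (d : Fin n → ℝ) (B : ℝ)
    (hB : 0 ≤ B)
    (hd1 : ∀ i, p i → B * (univ.filter p).card ≤ d i)
    (hd2 : ∀ i, ¬ p i → 0 ≤ d i) :
    (Matrix.of fun i j =>
        (if i = j then d i else 0) - (if p i ∧ p j then B else 0)).PosSemidef := by
  classical
  rw [posSemidef_iff_dotProduct_mulVec]
  constructor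
  · show _ = _
    ext i j
    simp only [conjTranspose_apply, Matrix.of_apply, star_trivial]
    by_cases hij : i = j
    · subst hij; rfl
    · simp [hij, Ne.symm hij, and_comm]
  · intro v
    rw [star_trivial, quad_form]
    have hdnn : ∀ i, 0 ≤ d i := by
      intro i
      by_cases hi : p i
      · exact le_trans (by positivity) (hd1 i hi)
      · exact hd2 i hi
    have h1 : (∑ i ∈ univ.filter p, v i) ^ 2
        ≤ (univ.filter p).card * ∑ i ∈ univ.filter p, v i ^ 2 :=
      sq_sum_le_card_mul_sum_sq
    have h2 : B * (univ.filter p).card * ∑ i ∈ univ.filter p, v i ^ 2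
        ≤ ∑ i ∈ univ.filter p, d i * v i ^ 2 := by
      rw [Finset.mul_sum]
      refine Finset.sum_le_sum fun i hi => ?_
      have := hd1 i (Finset.mem_filter.mp hi).2
      nlinarith [sq_nonneg (v i)]
    have h3 : ∑ i ∈ univ.filter p, d i * v i ^ 2 ≤ ∑ i, d i * v i ^ 2 := by
      refine Finset.sum_le_sum_of_subset_of_nonneg (Finset.subset_univ _) fun i _ _ => ?_
      exact mul_nonneg (hdnn i) (sq_nonneg _)
    nlinarith [mul_le_mul_of_nonneg_left h1 hB]

lemma quad_ind {n m : ℕ} (h : m ≤ n) (M : Matrix (Fin n) (Fin n) ℝ) :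
    dotProduct (fun i : Fin n => if (i : ℕ) < m then (1:ℝ) else 0)
      (M *ᵥ fun i : Fin n => if (i : ℕ) < m then (1:ℝ) else 0)
    = ∑ a : Fin m, ∑ b : Fin m, M (Fin.castLE h a) (Fin.castLE h b) := by
  simp only [dotProduct, mulVec, mul_ite, mul_one, mul_zero, ite_mul, one_mul, zero_mul]
  have step : ∀ i : Fin n, (∑ j : Fin n, if (j : ℕ) < m then M i j else 0)
      = ∑ b : Fin m, M i (Fin.castLE h b) := fun i => sum_ind h (fun j => M i j)
  rw [sum_ind h (fun i => ∑ j : Fin n, if (j : ℕ) < m then M i j else 0)]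
  exact Finset.sum_congr rfl fun a _ => step _

lemma sum_pair {m : ℕ} (f : Fin m → Fin m → ℝ) (g : Fin m → ℝ) :
    ∑ a : Fin m, ∑ b : Fin m, (g a - 2 * f a b + g b)
      = 2 * (m:ℝ) * (∑ a, g a) - 2 * ∑ a : Fin m, ∑ b : Fin m, f a b := by
  have h1 : ∀ a : Fin m, ∑ b : Fin m, (g a - 2 * f a b + g b)
      = (m:ℝ) * g a - 2 * (∑ b, f a b) + ∑ b, g b := by
    intro a
    rw [Finset.sum_add_distrib, Finset.sum_sub_distrib, Finset.sum_const, Finset.card_univ,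
      Fintype.card_fin, ← Finset.mul_sum]
    push_cast
    ring
  rw [Finset.sum_congr rfl (fun a _ => h1 a), Finset.sum_add_distrib, Finset.sum_sub_distrib,
    Finset.sum_const, Finset.card_univ, Fintype.card_fin, ← Finset.mul_sum, ← Finset.mul_sum,
    nsmul_eq_mul]
  ring

end helpers


set_option maxHeartbeats 2000000 in
/-- Adding the scaled first-level RLT inequalities to the SDP relaxation (SDP2) of the
circle packing problem does not improve the bound: the optimal value is still attained
and equals `(1/4)(1 + 1/⌊(n-1)/4⌋)` for all `n ≥ 5`.  Here indices of `Fin n` are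
0-based, so the 1-based condition `i ≤ n_x` reads `(i : ℕ) + 1 ≤ n_x`;
`n_x = ⌈n/2⌉ = (n+1)/2`, `n_y = ⌈n/4⌉ = (n+3)/4`, and `⌊(n-1)/4⌋ = (n-1)/4` in ℕ. -/
theorem stmt_11 (n : ℕ) (hn : 5 ≤ n)
    (nx ny : ℕ) (hnx : nx = (n + 1) / 2) (hny : ny = (n + 3) / 4)
    (ux uy : Fin n → ℝ)
    (hux : ∀ i : Fin n, ux i = if (i : ℕ) + 1 ≤ nx then 1/2 else 1)
    (huy : ∀ i : Fin n, uy i = if (i : ℕ) + 1 ≤ ny then 1/2 else 1) :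
    IsGreatest {γ : ℝ | ∃ (x y : Fin n → ℝ) (X Y : Matrix (Fin n) (Fin n) ℝ),
      (∀ i, 0 ≤ x i ∧ x i ≤ 1) ∧ (∀ i, 0 ≤ y i ∧ y i ≤ 1) ∧
      X.IsSymm ∧ Y.IsSymm ∧
      (X - Matrix.vecMulVec x x).PosSemidef ∧
      (Y - Matrix.vecMulVec y y).PosSemidef ∧
      (∀ i : Fin n, ((i : ℕ) + 1 ≤ nx → X i i ≤ x i / 2) ∧
        (nx < (i : ℕ) + 1 → X i i ≤ x i)) ∧
      (∀ i : Fin n, ((i : ℕ) + 1 ≤ ny → Y i i ≤ y i / 2) ∧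
        (ny < (i : ℕ) + 1 → Y i i ≤ y i)) ∧
      (∀ i j : Fin n, i < j →
        X i i - 2 * X i j + X j j + Y i i - 2 * Y i j + Y j j ≥ γ) ∧
      (∀ i j : Fin n, i < j →
        X i j ≥ 0 ∧ X i j ≥ ux j * x i + ux i * x j - ux i * ux j ∧
        Y i j ≥ 0 ∧ Y i j ≥ uy j * y i + uy i * y j - uy i * uy j)}
    ((1/4) * (1 + 1 / (((n - 1) / 4 : ℕ) : ℝ))) := by
  have hnyx : ny ≤ nx := by omega
  have hnyn : ny ≤ n := by omega
  have hnyk : ny = (n - 1) / 4 + 1 := by omega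
  set K : ℝ := (((n - 1) / 4 : ℕ) : ℝ) with hKdef
  have hK1 : (1:ℝ) ≤ K := by
    rw [hKdef]
    have h4 : 1 ≤ (n - 1) / 4 := by omega
    exact_mod_cast h4
  have hK0 : (0:ℝ) < K := lt_of_lt_of_le one_pos hK1
  set B : ℝ := 1 / (16 * K) with hBdef
  have hB0 : (0:ℝ) < B := by rw [hBdef]; positivity
  have hBK : B * K = 1/16 := by rw [hBdef]; field_simp
  have hB16 : B ≤ 1/16 := by nlinarith
  have hKi : 1 / K = 16 * B := by rw [hBdef]; field_simp
  have hnyR : ((ny : ℕ) : ℝ) = K + 1 := by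
    rw [hnyk, hKdef]; push_cast; ring
  constructor
  · -- membership
    refine ⟨fun i => ux i / 2, fun i => uy i / 2,
      Matrix.of (fun i j : Fin n => (ux i / 2) * (ux j / 2) +
        ((if i = j then (if (i : ℕ) + 1 ≤ ny then B * ((ny : ℕ) : ℝ)
            else if (i : ℕ) + 1 ≤ nx then (1/16 : ℝ) else 1/4) else 0)
          - (if (i : ℕ) + 1 ≤ ny ∧ (j : ℕ) + 1 ≤ ny then B else 0))),
      Matrix.of (fun i j : Fin n => (uy i / 2) * (uy j / 2) +
        ((if i = j then (if (i : ℕ) + 1 ≤ ny then B * ((ny : ℕ) : ℝ) else (1/4 : ℝ)) else 0)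
          - (if (i : ℕ) + 1 ≤ ny ∧ (j : ℕ) + 1 ≤ ny then B else 0))),
      ?_, ?_, ?_, ?_, ?_, ?_, ?_, ?_, ?_, ?_⟩
    · intro i; simp only [hux i]; split <;> norm_num
    · intro i; simp only [huy i]; split <;> norm_num
    · show _ = _
      ext i j
      simp only [Matrix.transpose_apply, Matrix.of_apply]
      by_cases h : i = j
      · subst h; ring
      · by_cases h2 : (i : ℕ) + 1 ≤ ny <;> by_cases h3 : (j : ℕ) + 1 ≤ ny <;>
          simp [h, Ne.symm h, h2, h3] <;> ring
    · show _ = _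
      ext i j
      simp only [Matrix.transpose_apply, Matrix.of_apply]
      by_cases h : i = j
      · subst h; ring
      · by_cases h2 : (i : ℕ) + 1 ≤ ny <;> by_cases h3 : (j : ℕ) + 1 ≤ ny <;>
          simp [h, Ne.symm h, h2, h3] <;> ring
    · -- PSD X
      have hXC : (Matrix.of (fun i j : Fin n => (ux i / 2) * (ux j / 2) +
          ((if i = j then (if (i : ℕ) + 1 ≤ ny then B * ((ny : ℕ) : ℝ)
              else if (i : ℕ) + 1 ≤ nx then (1/16 : ℝ) else 1/4) else 0)
            - (if (i : ℕ) + 1 ≤ ny ∧ (j : ℕ) + 1 ≤ ny then B else 0)))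
          - Matrix.vecMulVec (fun i => ux i / 2) (fun i => ux i / 2))
          = Matrix.of (fun i j : Fin n =>
              (if i = j then (if (i : ℕ) + 1 ≤ ny then B * ((ny : ℕ) : ℝ)
                else if (i : ℕ) + 1 ≤ nx then (1/16 : ℝ) else 1/4) else 0)
              - (if (i : ℕ) + 1 ≤ ny ∧ (j : ℕ) + 1 ≤ ny then B else 0)) := by
        ext i j
        simp only [Matrix.sub_apply, Matrix.vecMulVec_apply, Matrix.of_apply]
        ring
      rw [hXC]
      refine psd_helper (fun i => (i : ℕ) + 1 ≤ ny) _ B hB0.le ?_ ?_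
      · intro i hi
        rw [card_filter_eq hnyn _ (fun i => by omega)]
        simp only [hi, if_true, ite_true]
        exact le_refl _
      · intro i hi
        simp only [hi, if_false, ite_false]
        split <;> norm_num
    · -- PSD Y
      have hYC : (Matrix.of (fun i j : Fin n => (uy i / 2) * (uy j / 2) +
          ((if i = j then (if (i : ℕ) + 1 ≤ ny then B * ((ny : ℕ) : ℝ) else (1/4 : ℝ)) else 0)
            - (if (i : ℕ) + 1 ≤ ny ∧ (j : ℕ) + 1 ≤ ny then B else 0)))
          - Matrix.vecMulVec (fun i => uy i / 2) (fun i => uy i / 2))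
          = Matrix.of (fun i j : Fin n =>
              (if i = j then (if (i : ℕ) + 1 ≤ ny then B * ((ny : ℕ) : ℝ) else (1/4 : ℝ)) else 0)
              - (if (i : ℕ) + 1 ≤ ny ∧ (j : ℕ) + 1 ≤ ny then B else 0)) := by
        ext i j
        simp only [Matrix.sub_apply, Matrix.vecMulVec_apply, Matrix.of_apply]
        ring
      rw [hYC]
      refine psd_helper (fun i => (i : ℕ) + 1 ≤ ny) _ B hB0.le ?_ ?_
      · intro i hi
        rw [card_filter_eq hnyn _ (fun i => by omega)]
        simp only [hi, if_true, ite_true]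
        exact le_refl _
      · intro i hi
        simp only [hi, if_false, ite_false]
        norm_num
    · -- diag X
      intro i
      constructor
      · intro hi
        by_cases hpi : (i : ℕ) + 1 ≤ ny
        · simp only [Matrix.of_apply, hux i]
          simp only [hpi, hi, if_true, ite_true, and_self]
          rw [hnyR]
          nlinarith
        · simp only [Matrix.of_apply, hux i]
          simp only [hpi, hi, if_true, ite_true, if_false, ite_false, and_self]
          norm_num
      · intro hi
        have hi' : ¬ ((i : ℕ) + 1 ≤ nx) := by omega
        have hpi : ¬ ((i : ℕ) + 1 ≤ ny) := by omega
        simp only [Matrix.of_apply, hux i]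
        simp only [hpi, hi', if_false, ite_false, and_self, ite_true]
        norm_num
    · -- diag Y
      intro i
      constructor
      · intro hi
        simp only [Matrix.of_apply, huy i]
        simp only [hi, if_true, ite_true, and_self]
        rw [hnyR]
        nlinarith
      · intro hi
        have hpi : ¬ ((i : ℕ) + 1 ≤ ny) := by omega
        simp only [Matrix.of_apply, huy i]
        simp only [hpi, if_false, ite_false, and_self, ite_true]
        norm_num
    · -- pair constraints
      intro i j hij
      have hne : i ≠ j := Fin.ne_of_lt hij
      have hvij : (i : ℕ) < (j : ℕ) := hij
      rw [ge_iff_le]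
      by_cases hpj : (j : ℕ) + 1 ≤ ny
      · have hpi : (i : ℕ) + 1 ≤ ny := by omega
        have hxi : (i : ℕ) + 1 ≤ nx := by omega
        have hxj : (j : ℕ) + 1 ≤ nx := by omega
        simp only [Matrix.of_apply]; simp [hux i, hux j, huy i, huy j, hKi, hne, hpi, hpj, hxi, hxj]
        rw [hnyR]
        nlinarith
      · by_cases hpi : (i : ℕ) + 1 ≤ ny
        · have hxi : (i : ℕ) + 1 ≤ nx := by omega
          by_cases hxj : (j : ℕ) + 1 ≤ nx
          · simp only [Matrix.of_apply]; simp [hux i, hux j, huy i, huy j, hKi, hne, hpi, hpj, hxi, hxj]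
            rw [hnyR]
            nlinarith
          · simp only [Matrix.of_apply]; simp [hux i, hux j, huy i, huy j, hKi, hne, hpi, hpj, hxi, hxj]
            rw [hnyR]
            nlinarith
        · by_cases hxi : (i : ℕ) + 1 ≤ nx
          · by_cases hxj : (j : ℕ) + 1 ≤ nx
            · simp only [Matrix.of_apply]; simp [hux i, hux j, huy i, huy j, hKi, hne, hpi, hpj, hxi, hxj]
              nlinarith
            · simp only [Matrix.of_apply]; simp [hux i, hux j, huy i, huy j, hKi, hne, hpi, hpj, hxi, hxj]
              nlinarith
          · have hxj : ¬ ((j : ℕ) + 1 ≤ nx) := by omega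
            simp only [Matrix.of_apply]; simp [hux i, hux j, huy i, huy j, hKi, hne, hpi, hpj, hxi, hxj]
            nlinarith
    · -- RLT constraints
      intro i j hij
      have hne : i ≠ j := Fin.ne_of_lt hij
      have hvij : (i : ℕ) < (j : ℕ) := hij
      have hX0 : (0:ℝ) ≤ (ux i / 2) * (ux j / 2) +
          ((if (i : Fin n) = j then (if (i : ℕ) + 1 ≤ ny then B * ((ny : ℕ) : ℝ)
              else if (i : ℕ) + 1 ≤ nx then (1/16 : ℝ) else 1/4) else 0)
            - (if (i : ℕ) + 1 ≤ ny ∧ (j : ℕ) + 1 ≤ ny then B else 0)) := by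
        rw [hux i, hux j]
        by_cases hpj : (j : ℕ) + 1 ≤ ny
        · have hpi : (i : ℕ) + 1 ≤ ny := by omega
          have hxi : (i : ℕ) + 1 ≤ nx := by omega
          have hxj : (j : ℕ) + 1 ≤ nx := by omega
          simp [hne, hpi, hpj, hxi, hxj]
          nlinarith
        · simp only [hne, hpj, and_false, if_false, ite_false]
          split <;> split <;> norm_num
      have hY0 : (0:ℝ) ≤ (uy i / 2) * (uy j / 2) +
          ((if (i : Fin n) = j then (if (i : ℕ) + 1 ≤ ny then B * ((ny : ℕ) : ℝ) else (1/4:ℝ))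
              else 0)
            - (if (i : ℕ) + 1 ≤ ny ∧ (j : ℕ) + 1 ≤ ny then B else 0)) := by
        rw [huy i, huy j]
        by_cases hpj : (j : ℕ) + 1 ≤ ny
        · have hpi : (i : ℕ) + 1 ≤ ny := by omega
          simp [hne, hpi, hpj]
          nlinarith
        · simp only [hne, hpj, and_false, if_false, ite_false]
          split <;> norm_num
      refine ⟨hX0, ?_, hY0, ?_⟩
      · have hr : ux j * ((fun i => ux i / 2) i) + ux i * ((fun i => ux i / 2) j)
            - ux i * ux j = 0 := by simp only; ring
        simp only [Matrix.of_apply, ge_iff_le]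
        linarith [hX0, hr]
      · have hr : uy j * ((fun i => uy i / 2) i) + uy i * ((fun i => uy i / 2) j)
            - uy i * uy j = 0 := by simp only; ring
        simp only [Matrix.of_apply, ge_iff_le]
        linarith [hY0, hr]
  · -- upper bound
    rintro γ ⟨x, y, X, Y, hx, hy, hXs, hYs, hXpsd, hYpsd, hXd, hYd, hpair, hrlt⟩
    have hpair' : ∀ i j : Fin n, i ≠ j →
        γ ≤ X i i - 2 * X i j + X j j + Y i i - 2 * Y i j + Y j j := by
      intro i j hne
      rcases lt_or_gt_of_ne hne with h | h
      · exact hpair i j h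
      · have h2 := hpair j i h
        have e1 : X i j = X j i := by
          have := congrFun (congrFun hXs j) i
          rwa [Matrix.transpose_apply] at this
        have e2 : Y i j = Y j i := by
          have := congrFun (congrFun hYs j) i
          rwa [Matrix.transpose_apply] at this
        rw [← e1, ← e2] at h2
        linarith
    set e : Fin ny → Fin n := Fin.castLE hnyn with he
    have hinj : ∀ a b : Fin ny, a ≠ b → e a ≠ e b := by
      intro a b hab hc
      exact hab (Fin.ext (by simpa [he] using congrArg Fin.val hc))
    set SX : ℝ := ∑ a, X (e a) (e a) with hSXd
    set SY : ℝ := ∑ a, Y (e a) (e a) with hSYd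
    set PX : ℝ := ∑ a : Fin ny, ∑ b : Fin ny, X (e a) (e b) with hPXd
    set PY : ℝ := ∑ a : Fin ny, ∑ b : Fin ny, Y (e a) (e b) with hPYd
    set sx : ℝ := ∑ a, x (e a) with hsxd
    set sy : ℝ := ∑ a, y (e a) with hsyd
    have hPX : sx * sx ≤ PX := by
      have hq := hXpsd.dotProduct_mulVec_nonneg (fun i : Fin n => if (i : ℕ) < ny then (1:ℝ) else 0)
      rw [star_trivial, quad_ind hnyn] at hq
      simp only [Matrix.sub_apply, Matrix.vecMulVec_apply] at hq
      rw [Finset.sum_congr rfl (fun a (_ : a ∈ univ) => Finset.sum_sub_distrib _ _),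
        Finset.sum_sub_distrib] at hq
      have hxx : ∑ a : Fin ny, ∑ b : Fin ny, x (e a) * x (e b) = sx * sx := by
        simp only [← Finset.mul_sum, ← Finset.sum_mul, hsxd]
      rw [hxx] at hq
      linarith
    have hPY : sy * sy ≤ PY := by
      have hq := hYpsd.dotProduct_mulVec_nonneg (fun i : Fin n => if (i : ℕ) < ny then (1:ℝ) else 0)
      rw [star_trivial, quad_ind hnyn] at hq
      simp only [Matrix.sub_apply, Matrix.vecMulVec_apply] at hq
      rw [Finset.sum_congr rfl (fun a (_ : a ∈ univ) => Finset.sum_sub_distrib _ _),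
        Finset.sum_sub_distrib] at hq
      have hyy : ∑ a : Fin ny, ∑ b : Fin ny, y (e a) * y (e b) = sy * sy := by
        simp only [← Finset.mul_sum, ← Finset.sum_mul, hsyd]
      rw [hyy] at hq
      linarith
    have hSX : SX ≤ sx / 2 := by
      rw [hSXd, hsxd, Finset.sum_div]
      refine Finset.sum_le_sum fun a _ => ?_
      exact (hXd (e a)).1 (by simp only [he, Fin.coe_castLE]; omega)
    have hSY : SY ≤ sy / 2 := by
      rw [hSYd, hsyd, Finset.sum_div]
      refine Finset.sum_le_sum fun a _ => ?_
      exact (hYd (e a)).1 (by simp only [he, Fin.coe_castLE]; omega)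
    have hFge : ∀ a b : Fin ny, (if a = b then (0:ℝ) else γ) ≤
        (X (e a) (e a) - 2 * X (e a) (e b) + X (e b) (e b))
        + (Y (e a) (e a) - 2 * Y (e a) (e b) + Y (e b) (e b)) := by
      intro a b
      by_cases h : a = b
      · subst h
        rw [if_pos rfl]
        exact le_of_eq (by ring)
      · simp only [h, if_false, ite_false]
        have := hpair' (e a) (e b) (hinj a b h)
        linarith
    have hsum1 : ∑ a : Fin ny, ∑ b : Fin ny, (if a = b then (0:ℝ) else γ)
        ≤ ∑ a : Fin ny, ∑ b : Fin ny,
          ((X (e a) (e a) - 2 * X (e a) (e b) + X (e b) (e b))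
          + (Y (e a) (e a) - 2 * Y (e a) (e b) + Y (e b) (e b))) :=
      Finset.sum_le_sum fun a _ => Finset.sum_le_sum fun b _ => hFge a b
    have hlhs : ∑ a : Fin ny, ∑ b : Fin ny, (if a = b then (0:ℝ) else γ)
        = ((ny : ℝ) * (ny : ℝ) - (ny : ℝ)) * γ := by
      have h1 : ∀ a : Fin ny, ∑ b : Fin ny, (if a = b then (0:ℝ) else γ)
          = (ny : ℝ) * γ - γ := by
        intro a
        rw [Finset.sum_congr rfl (fun b (_ : b ∈ univ) =>
          (show (if a = b then (0:ℝ) else γ) = γ - if a = b then γ else 0 by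
            by_cases h : a = b
            · rw [if_pos h, if_pos h]; ring
            · rw [if_neg h, if_neg h]; ring)),
          Finset.sum_sub_distrib, Finset.sum_const, Finset.card_univ, Fintype.card_fin,
          Finset.sum_ite_eq, nsmul_eq_mul]
        simp
      rw [Finset.sum_congr rfl (fun a _ => h1 a), Finset.sum_const, Finset.card_univ,
        Fintype.card_fin, nsmul_eq_mul]
      ring
    have hrhs : ∑ a : Fin ny, ∑ b : Fin ny,
          ((X (e a) (e a) - 2 * X (e a) (e b) + X (e b) (e b))
          + (Y (e a) (e a) - 2 * Y (e a) (e b) + Y (e b) (e b)))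
        = (2 * (ny : ℝ) * SX - 2 * PX) + (2 * (ny : ℝ) * SY - 2 * PY) := by
      rw [Finset.sum_congr rfl (fun a (_ : a ∈ univ) => Finset.sum_add_distrib),
        Finset.sum_add_distrib,
        sum_pair (fun a b => X (e a) (e b)) (fun a => X (e a) (e a)),
        sum_pair (fun a b => Y (e a) (e b)) (fun a => Y (e a) (e a))]
    rw [hlhs, hrhs] at hsum1
    have hMM : (0:ℝ) ≤ (ny : ℝ) := Nat.cast_nonneg _
    have hbx : 2 * (ny : ℝ) * SX - 2 * PX ≤ (ny : ℝ)^2 / 8 := by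
      nlinarith [mul_le_mul_of_nonneg_left hSX (by positivity : (0:ℝ) ≤ 2 * (ny : ℝ)),
        sq_nonneg ((ny : ℝ) - 4 * sx)]
    have hby : 2 * (ny : ℝ) * SY - 2 * PY ≤ (ny : ℝ)^2 / 8 := by
      nlinarith [mul_le_mul_of_nonneg_left hSY (by positivity : (0:ℝ) ≤ 2 * (ny : ℝ)),
        sq_nonneg ((ny : ℝ) - 4 * sy)]
    have hkey : ((ny : ℝ) * (ny : ℝ) - (ny : ℝ)) * γ ≤ (ny : ℝ)^2 / 4 := by linarith
    rw [hnyR] at hkey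
    have htarget : (1/4 * (1 + 1/K)) * ((K + 1) * K) = (K + 1)^2 / 4 := by
      field_simp
    refine le_of_mul_le_mul_right ?_ (show (0:ℝ) < (K + 1) * K by positivity)
    rw [htarget]
    nlinarith [hkey]
end

section
/- The convex hull of the set {(a, b, t) ∈ ℝ³ : (b − a)^2 ≥ t, 0 ≤ a ≤ b ≤ 1} equals {(a, b, t) ∈ ℝ³ : b − a ≥ t, 0 ≤ a ≤ b ≤ 1}. Equivalently, the concave envelope of the function (a, b) ↦ (b − a)^2 over the triangle {(a,b): 0 ≤ a ≤ b ≤ 1} is the function (a, b) ↦ b − a. -/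
/-- The convex hull of `{(a, b, t) : (b - a)² ≥ t, 0 ≤ a ≤ b ≤ 1}` is
`{(a, b, t) : b - a ≥ t, 0 ≤ a ≤ b ≤ 1}`; equivalently, the concave envelope of
`(a, b) ↦ (b - a)²` over the triangle `0 ≤ a ≤ b ≤ 1` is `(a, b) ↦ b - a`. -/
theorem stmt_13 :
    convexHull ℝ
      {p : ℝ × ℝ × ℝ | (p.2.1 - p.1)^2 ≥ p.2.2 ∧ 0 ≤ p.1 ∧ p.1 ≤ p.2.1 ∧ p.2.1 ≤ 1} =
    {p : ℝ × ℝ × ℝ | p.2.1 - p.1 ≥ p.2.2 ∧ 0 ≤ p.1 ∧ p.1 ≤ p.2.1 ∧ p.2.1 ≤ 1} := by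
  set S : Set (ℝ × ℝ × ℝ) :=
      {p : ℝ × ℝ × ℝ | (p.2.1 - p.1)^2 ≥ p.2.2 ∧ 0 ≤ p.1 ∧ p.1 ≤ p.2.1 ∧ p.2.1 ≤ 1} with hS
  apply Set.Subset.antisymm
  · apply convexHull_min
    · rintro ⟨a, b, t⟩ ⟨h1, h2, h3, h4⟩
      refine ⟨?_, h2, h3, h4⟩
      simp only [Set.mem_setOf_eq] at *
      nlinarith
    · rintro ⟨a1, b1, t1⟩ ⟨ha1, hb1, hc1, hd1⟩ ⟨a2, b2, t2⟩ ⟨ha2, hb2, hc2, hd2⟩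
        u v hu hv huv
      simp only [Set.mem_setOf_eq, Prod.smul_mk, Prod.mk_add_mk, smul_eq_mul] at *
      refine ⟨by nlinarith, by nlinarith, by nlinarith, by nlinarith⟩
  · rintro ⟨a, b, t⟩ ⟨h1, h2, h3, h4⟩
    simp only [Set.mem_setOf_eq] at *
    set d : ℝ := b - a with hd
    by_cases hcase : t ≤ d ^ 2
    · exact subset_convexHull ℝ S ⟨hcase, h2, h3, h4⟩
    · push_neg at hcase
      have hd0 : 0 < d := by nlinarith
      have hd1 : d < 1 := by nlinarith
      have h1d : (0:ℝ) < 1 - d := by linarith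
      set x : ℝ := a / (1 - d) with hx
      set t0 : ℝ := (t - d) / (1 - d) with ht0
      have hq1 : ((x, x, t0) : ℝ × ℝ × ℝ) ∈ S := by
        refine ⟨?_, ?_, le_refl _, ?_⟩
        · simp only [Set.mem_setOf_eq]
          have : t - d ≤ 0 := by linarith
          have : t0 ≤ 0 := div_nonpos_of_nonpos_of_nonneg this (by linarith)
          nlinarith
        · exact div_nonneg h2 (le_of_lt h1d)
        · rw [hx, div_le_one h1d]; linarith
      have hq2 : ((0, 1, 1) : ℝ × ℝ × ℝ) ∈ S := by
        refine ⟨by norm_num, by norm_num, by norm_num, by norm_num⟩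
      have := (convex_convexHull ℝ S) (subset_convexHull ℝ S hq1)
        (subset_convexHull ℝ S hq2) (le_of_lt h1d) (le_of_lt hd0) (by ring)
      convert this using 1
      simp only [Prod.smul_mk, Prod.mk_add_mk, smul_eq_mul]
      have hne : (1:ℝ) - (b - a) ≠ 0 := by rw [← hd]; exact ne_of_gt h1d
      refine Prod.ext ?_ (Prod.ext ?_ ?_) <;>
        simp only [hx, ht0, hd] <;> field_simp <;> ring
end

section
/- Let u₁, u₂ > 0 and let f(z₁, z₂) := (z₁ − z₂)² on the box H := [0, u₁] × [0, u₂]. Define g(z₁, z₂) := min(u₁ z₁ + u₂ z₂, 2 u₁ u₂ + (u₁ − 2 u₂) z₁ + (u₂ − 2 u₁) z₂). Then g is the concave envelope of f over H; that is: (a) g is concave on H; (b) g(z) ≥ f(z) for all z ∈ H; and (c) every concave function h on H with h ≥ f on H satisfies h ≥ g on H. -/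
lemma jensen3 {s : Set (ℝ × ℝ)} {h : ℝ × ℝ → ℝ} (hc : ConcaveOn ℝ s h)
    (a b c : ℝ) (p q r : ℝ × ℝ) (ha : 0 ≤ a) (hb : 0 ≤ b) (hc' : 0 ≤ c)
    (habc : a + b + c = 1) (hp : p ∈ s) (hq : q ∈ s) (hr : r ∈ s) :
    a * h p + b * h q + c * h r ≤ h (a • p + b • q + c • r) := by
  have := hc.le_map_sum (t := Finset.univ) (w := ![a, b, c]) (p := ![p, q, r])
    (by intro i _; fin_cases i <;> simpa) (by simp [Fin.sum_univ_three, habc])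
    (by intro i _; fin_cases i <;> simpa)
  simpa [Fin.sum_univ_three, smul_eq_mul] using this

/-- The function `g(z) = min(u₁ z₁ + u₂ z₂, 2u₁u₂ + (u₁ - 2u₂) z₁ + (u₂ - 2u₁) z₂)` is
the concave envelope of `f(z) = (z₁ - z₂)²` over the box `H = [0, u₁] × [0, u₂]`:
(a) `g` is concave on `H`; (b) `g ≥ f` on `H`; (c) every concave function on `H`
majorizing `f` on `H` also majorizes `g` on `H`. -/
theorem stmt_15 (u₁ u₂ : ℝ) (hu₁ : 0 < u₁) (hu₂ : 0 < u₂)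
    (f g : ℝ × ℝ → ℝ)
    (hf : ∀ z, f z = (z.1 - z.2)^2)
    (hg : ∀ z, g z = min (u₁ * z.1 + u₂ * z.2)
      (2 * u₁ * u₂ + (u₁ - 2 * u₂) * z.1 + (u₂ - 2 * u₁) * z.2))
    (H : Set (ℝ × ℝ)) (hH : H = Set.Icc 0 u₁ ×ˢ Set.Icc 0 u₂) :
    ConcaveOn ℝ H g ∧ (∀ z ∈ H, g z ≥ f z) ∧
    (∀ h : ℝ × ℝ → ℝ, ConcaveOn ℝ H h → (∀ z ∈ H, h z ≥ f z) → ∀ z ∈ H, h z ≥ g z) := by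
  have hHconv : Convex ℝ H := by
    rw [hH]; exact (convex_Icc 0 u₁).prod (convex_Icc 0 u₂)
  have hmem : ∀ z ∈ H, 0 ≤ z.1 ∧ z.1 ≤ u₁ ∧ 0 ≤ z.2 ∧ z.2 ≤ u₂ := by
    intro z hz
    rw [hH] at hz
    exact ⟨hz.1.1, hz.1.2, hz.2.1, hz.2.2⟩
  refine ⟨?_, ?_, ?_⟩
  · -- concavity: min of two affine
    have h1 : ConcaveOn ℝ H (fun z : ℝ × ℝ => u₁ * z.1 + u₂ * z.2) := by
      apply ConcaveOn.add
      · exact (LinearMap.concaveOn ((u₁ : ℝ) • (LinearMap.fst ℝ ℝ ℝ)) hHconv)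
      · exact (LinearMap.concaveOn ((u₂ : ℝ) • (LinearMap.snd ℝ ℝ ℝ)) hHconv)
    have h2 : ConcaveOn ℝ H
        (fun z : ℝ × ℝ => 2 * u₁ * u₂ + (u₁ - 2 * u₂) * z.1 + (u₂ - 2 * u₁) * z.2) := by
      apply ConcaveOn.add
      apply ConcaveOn.add
      · exact concaveOn_const _ hHconv
      · exact (LinearMap.concaveOn (((u₁ - 2*u₂) : ℝ) • (LinearMap.fst ℝ ℝ ℝ)) hHconv)
      · exact (LinearMap.concaveOn (((u₂ - 2*u₁) : ℝ) • (LinearMap.snd ℝ ℝ ℝ)) hHconv)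
    have := h1.inf h2
    have heq : g = (fun z : ℝ × ℝ => u₁ * z.1 + u₂ * z.2) ⊓
        (fun z : ℝ × ℝ => 2 * u₁ * u₂ + (u₁ - 2 * u₂) * z.1 + (u₂ - 2 * u₁) * z.2) := by
      funext z; rw [hg]; rfl
    rw [heq]; exact this
  · intro z hz
    obtain ⟨h1, h2, h3, h4⟩ := hmem z hz
    rw [hf, hg, ge_iff_le, le_min_iff]
    constructor
    · nlinarith [mul_nonneg h1 h3, mul_nonneg h1 (sub_nonneg.2 h2),
        mul_nonneg h3 (sub_nonneg.2 h4)]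
    · nlinarith [mul_nonneg (sub_nonneg.2 h2) (sub_nonneg.2 h4),
        mul_nonneg h1 (sub_nonneg.2 h2), mul_nonneg h3 (sub_nonneg.2 h4)]
  · intro h hconc hmaj z hz
    obtain ⟨h1, h2, h3, h4⟩ := hmem z hz
    have v00 : ((0 : ℝ), (0 : ℝ)) ∈ H := by rw [hH]; constructor <;> simp [hu₁.le, hu₂.le]
    have v10 : ((u₁ : ℝ), (0 : ℝ)) ∈ H := by rw [hH]; constructor <;> simp [hu₁.le, hu₂.le]
    have v01 : ((0 : ℝ), (u₂ : ℝ)) ∈ H := by rw [hH]; constructor <;> simp [hu₁.le, hu₂.le]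
    have v11 : ((u₁ : ℝ), (u₂ : ℝ)) ∈ H := by rw [hH]; constructor <;> simp [hu₁.le, hu₂.le]
    have f00 := hmaj _ v00
    have f10 := hmaj _ v10
    have f01 := hmaj _ v01
    have f11 := hmaj _ v11
    rw [hf] at f00 f10 f01 f11
    simp only at f00 f10 f01 f11
    rw [hg, ge_iff_le]
    by_cases hcase : z.1 / u₁ + z.2 / u₂ ≤ 1
    · -- lower triangle: weights z₁/u₁, z₂/u₂, rest at (0,0)
      have key := jensen3 hconc (z.1/u₁) (z.2/u₂) (1 - z.1/u₁ - z.2/u₂)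
        (u₁, 0) (0, u₂) (0, 0)
        (div_nonneg h1 hu₁.le) (div_nonneg h3 hu₂.le) (by linarith) (by ring) v10 v01 v00
      have hzeq : (z.1/u₁) • ((u₁:ℝ), (0:ℝ)) + (z.2/u₂) • ((0:ℝ), (u₂:ℝ))
          + (1 - z.1/u₁ - z.2/u₂) • ((0:ℝ), (0:ℝ)) = z := by
        ext <;> simp <;> field_simp
      rw [hzeq] at key
      refine le_trans (min_le_left _ _) (le_trans ?_ key)
      have e1 : z.1/u₁ * (u₁ - 0)^2 = u₁ * z.1 := by field_simp; ring
      have e2 : z.2/u₂ * (0 - u₂)^2 = u₂ * z.2 := by field_simp; ring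
      nlinarith [mul_le_mul_of_nonneg_left f10 (div_nonneg h1 hu₁.le),
        mul_le_mul_of_nonneg_left f01 (div_nonneg h3 hu₂.le)]
    · push_neg at hcase
      have key := jensen3 hconc (1 - z.2/u₂) (1 - z.1/u₁) (z.1/u₁ + z.2/u₂ - 1)
        (u₁, 0) (0, u₂) (u₁, u₂)
        (by have := div_le_one_of_le₀ h4 hu₂.le; linarith)
        (by have := div_le_one_of_le₀ h2 hu₁.le; linarith)
        (by linarith) (by ring) v10 v01 v11
      have hzeq : (1 - z.2/u₂) • ((u₁:ℝ), (0:ℝ)) + (1 - z.1/u₁) • ((0:ℝ), (u₂:ℝ))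
          + (z.1/u₁ + z.2/u₂ - 1) • ((u₁:ℝ), (u₂:ℝ)) = z := by
        ext <;> simp <;> field_simp <;> ring
      rw [hzeq] at key
      refine le_trans (min_le_right _ _) (le_trans ?_ key)
      have hA : 0 ≤ 1 - z.2/u₂ := by have := div_le_one_of_le₀ h4 hu₂.le; linarith
      have hB : 0 ≤ 1 - z.1/u₁ := by have := div_le_one_of_le₀ h2 hu₁.le; linarith
      have hC : 0 ≤ z.1/u₁ + z.2/u₂ - 1 := by linarith
      have goal : 2 * u₁ * u₂ + (u₁ - 2 * u₂) * z.1 + (u₂ - 2 * u₁) * z.2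
          = (1 - z.2/u₂) * (u₁ - 0)^2 + (1 - z.1/u₁) * (0 - u₂)^2
            + (z.1/u₁ + z.2/u₂ - 1) * (u₁ - u₂)^2 := by
        field_simp; ring
      rw [goal]
      gcongr
end

section
/- The convex hull of the set {(a, b, c, d, γ) ∈ ℝ⁵ : (b − a)² + (d − c)² ≥ γ, a, b, c, d ∈ [0, 1]} equals the set {(a, b, c, d, γ) ∈ ℝ⁵ : a + b + c + d ≥ γ, −a − b + c + d + 2 ≥ γ, a + b − c − d + 2 ≥ γ, −a − b − c − d + 4 ≥ γ, a, b, c, d ∈ [0, 1]}. -/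
private def S16 : Set (ℝ × ℝ × ℝ × ℝ × ℝ) :=
  {p | (p.2.1 - p.1)^2 + (p.2.2.2.1 - p.2.2.1)^2 ≥ p.2.2.2.2 ∧
        0 ≤ p.1 ∧ p.1 ≤ 1 ∧ 0 ≤ p.2.1 ∧ p.2.1 ≤ 1 ∧
        0 ≤ p.2.2.1 ∧ p.2.2.1 ≤ 1 ∧ 0 ≤ p.2.2.2.1 ∧ p.2.2.2.1 ≤ 1}

private lemma memS16 {a b c d g : ℝ} (h1 : g ≤ (b-a)^2 + (d-c)^2)
    (ha : 0 ≤ a) (ha' : a ≤ 1) (hb : 0 ≤ b) (hb' : b ≤ 1)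
    (hc : 0 ≤ c) (hc' : c ≤ 1) (hd : 0 ≤ d) (hd' : d ≤ 1) :
    ((a,b,c,d,g) : ℝ×ℝ×ℝ×ℝ×ℝ) ∈ S16 :=
  ⟨h1, ha, ha', hb, hb', hc, hc', hd, hd'⟩

private lemma combo3 {E : Type*} [AddCommGroup E] [Module ℝ E] {K : Set E} (hK : Convex ℝ K)
    {p0 p1 p2 : E} (h0 : p0 ∈ K) (h1 : p1 ∈ K) (h2 : p2 ∈ K) {w0 w1 w2 : ℝ}
    (hw0 : 0 ≤ w0) (hw1 : 0 ≤ w1) (hw2 : 0 ≤ w2) (hsum : w0 + w1 + w2 = 1) :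
    w0 • p0 + w1 • p1 + w2 • p2 ∈ K := by
  have := hK.sum_mem (t := (Finset.univ : Finset (Fin 3))) (w := ![w0,w1,w2]) (z := ![p0,p1,p2])
    (by intro i _; fin_cases i <;> simpa)
    (by simp [Fin.sum_univ_three, hsum])
    (by intro i _; fin_cases i <;> simpa)
  simpa [Fin.sum_univ_three] using this

private lemma stepA {a b c d g : ℝ}
    (h1 : g ≤ (b-a)^2 + (c+d)) (h2 : g ≤ (b-a)^2 + (2-c-d))
    (ha : 0 ≤ a) (ha' : a ≤ 1) (hb : 0 ≤ b) (hb' : b ≤ 1)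
    (hc : 0 ≤ c) (hc' : c ≤ 1) (hd : 0 ≤ d) (hd' : d ≤ 1) :
    ((a,b,c,d,g) : ℝ×ℝ×ℝ×ℝ×ℝ) ∈ convexHull ℝ S16 := by
  have hK := convex_convexHull ℝ S16
  have hsub := subset_convexHull ℝ S16
  rcases le_or_gt (c+d) 1 with hcd | hcd
  · have key : ((a,b,c,d,g) : ℝ×ℝ×ℝ×ℝ×ℝ)
        = (1-c-d) • (a,b,0,0,g-(c+d)) + c • (a,b,1,0,g-(c+d)+1) + d • (a,b,0,1,g-(c+d)+1) := by
      simp only [Prod.smul_mk, Prod.mk_add_mk, Prod.mk.injEq, smul_eq_mul]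
      refine ⟨by ring, by ring, by ring, by ring, by ring⟩
    rw [key]
    exact combo3 hK
      (hsub (memS16 (by nlinarith) ha ha' hb hb' le_rfl zero_le_one le_rfl zero_le_one))
      (hsub (memS16 (by nlinarith) ha ha' hb hb' zero_le_one le_rfl le_rfl zero_le_one))
      (hsub (memS16 (by nlinarith) ha ha' hb hb' le_rfl zero_le_one zero_le_one le_rfl))
      (by linarith) hc hd (by ring)
  · have key : ((a,b,c,d,g) : ℝ×ℝ×ℝ×ℝ×ℝ)
        = (c+d-1) • (a,b,1,1,g-(2-c-d)) + (1-d) • (a,b,1,0,g-(2-c-d)+1)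
          + (1-c) • (a,b,0,1,g-(2-c-d)+1) := by
      simp only [Prod.smul_mk, Prod.mk_add_mk, Prod.mk.injEq, smul_eq_mul]
      refine ⟨by ring, by ring, by ring, by ring, by ring⟩
    rw [key]
    exact combo3 hK
      (hsub (memS16 (by nlinarith) ha ha' hb hb' zero_le_one le_rfl zero_le_one le_rfl))
      (hsub (memS16 (by nlinarith) ha ha' hb hb' zero_le_one le_rfl le_rfl zero_le_one))
      (hsub (memS16 (by nlinarith) ha ha' hb hb' le_rfl zero_le_one zero_le_one le_rfl))
      (by linarith) (by linarith) (by linarith) (by ring)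

/-- The convex hull of the set defined by a single non-overlapping constraint
`(b - a)² + (d - c)² ≥ γ` over the unit box equals the polyhedron defined by the four
listed linear inequalities over the unit box.  A point `p : ℝ⁵` is
`(a, b, c, d, γ) = (p.1, p.2.1, p.2.2.1, p.2.2.2.1, p.2.2.2.2)`. -/
theorem stmt_16 :
    convexHull ℝ
      {p : ℝ × ℝ × ℝ × ℝ × ℝ |
        (p.2.1 - p.1)^2 + (p.2.2.2.1 - p.2.2.1)^2 ≥ p.2.2.2.2 ∧
        0 ≤ p.1 ∧ p.1 ≤ 1 ∧ 0 ≤ p.2.1 ∧ p.2.1 ≤ 1 ∧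
        0 ≤ p.2.2.1 ∧ p.2.2.1 ≤ 1 ∧ 0 ≤ p.2.2.2.1 ∧ p.2.2.2.1 ≤ 1} =
    {p : ℝ × ℝ × ℝ × ℝ × ℝ |
      p.1 + p.2.1 + p.2.2.1 + p.2.2.2.1 ≥ p.2.2.2.2 ∧
      -p.1 - p.2.1 + p.2.2.1 + p.2.2.2.1 + 2 ≥ p.2.2.2.2 ∧
      p.1 + p.2.1 - p.2.2.1 - p.2.2.2.1 + 2 ≥ p.2.2.2.2 ∧
      -p.1 - p.2.1 - p.2.2.1 - p.2.2.2.1 + 4 ≥ p.2.2.2.2 ∧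
      0 ≤ p.1 ∧ p.1 ≤ 1 ∧ 0 ≤ p.2.1 ∧ p.2.1 ≤ 1 ∧
      0 ≤ p.2.2.1 ∧ p.2.2.1 ≤ 1 ∧ 0 ≤ p.2.2.2.1 ∧ p.2.2.2.1 ≤ 1} := by
  apply Set.Subset.antisymm
  · apply convexHull_min
    · rintro ⟨a,b,c,d,g⟩ ⟨h1, ha, ha', hb, hb', hc, hc', hd, hd'⟩
      simp only [Set.mem_setOf_eq] at h1 ⊢
      refine ⟨?_, ?_, ?_, ?_, ha, ha', hb, hb', hc, hc', hd, hd'⟩ <;>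
        nlinarith [mul_nonneg ha hb, mul_nonneg hc hd,
          mul_nonneg (sub_nonneg.2 ha') (sub_nonneg.2 hb'),
          mul_nonneg (sub_nonneg.2 hc') (sub_nonneg.2 hd'),
          mul_nonneg ha (sub_nonneg.2 ha'), mul_nonneg hb (sub_nonneg.2 hb'),
          mul_nonneg hc (sub_nonneg.2 hc'), mul_nonneg hd (sub_nonneg.2 hd')]
    · rintro ⟨xa,xb,xc,xd,xg⟩ hx ⟨ya,yb,yc,yd,yg⟩ hy s t hs ht hst
      simp only [Set.mem_setOf_eq] at hx hy ⊢
      obtain ⟨hx1, hx2, hx3, hx4, hx5, hx6, hx7, hx8, hx9, hx10, hx11, hx12⟩ := hx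
      obtain ⟨hy1, hy2, hy3, hy4, hy5, hy6, hy7, hy8, hy9, hy10, hy11, hy12⟩ := hy
      simp only [Prod.smul_mk, Prod.mk_add_mk, smul_eq_mul, Set.mem_setOf_eq]
      refine ⟨?_, ?_, ?_, ?_, ?_, ?_, ?_, ?_, ?_, ?_, ?_, ?_⟩
      · linarith [mul_le_mul_of_nonneg_left hx1 hs, mul_le_mul_of_nonneg_left hy1 ht]
      · linarith [mul_le_mul_of_nonneg_left hx2 hs, mul_le_mul_of_nonneg_left hy2 ht]
      · linarith [mul_le_mul_of_nonneg_left hx3 hs, mul_le_mul_of_nonneg_left hy3 ht]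
      · linarith [mul_le_mul_of_nonneg_left hx4 hs, mul_le_mul_of_nonneg_left hy4 ht]
      · linarith [mul_nonneg hs hx5, mul_nonneg ht hy5]
      · linarith [mul_le_mul_of_nonneg_left hx6 hs, mul_le_mul_of_nonneg_left hy6 ht]
      · linarith [mul_nonneg hs hx7, mul_nonneg ht hy7]
      · linarith [mul_le_mul_of_nonneg_left hx8 hs, mul_le_mul_of_nonneg_left hy8 ht]
      · linarith [mul_nonneg hs hx9, mul_nonneg ht hy9]
      · linarith [mul_le_mul_of_nonneg_left hx10 hs, mul_le_mul_of_nonneg_left hy10 ht]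
      · linarith [mul_nonneg hs hx11, mul_nonneg ht hy11]
      · linarith [mul_le_mul_of_nonneg_left hx12 hs, mul_le_mul_of_nonneg_left hy12 ht]
  · rintro ⟨a,b,c,d,g⟩ ⟨h1, h2, h3, h4, ha, ha', hb, hb', hc, hc', hd, hd'⟩
    simp only [Set.mem_setOf_eq] at h1 h2 h3 h4
    show ((a,b,c,d,g) : ℝ×ℝ×ℝ×ℝ×ℝ) ∈ convexHull ℝ S16
    have hK := convex_convexHull ℝ S16
    rcases le_or_gt (a+b) 1 with hab | hab
    · have key : ((a,b,c,d,g) : ℝ×ℝ×ℝ×ℝ×ℝ)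
          = (1-a-b) • (0,0,c,d,g-(a+b)) + a • (1,0,c,d,g-(a+b)+1) + b • (0,1,c,d,g-(a+b)+1) := by
        simp only [Prod.smul_mk, Prod.mk_add_mk, Prod.mk.injEq, smul_eq_mul]
        refine ⟨by ring, by ring, by ring, by ring, by ring⟩
      rw [key]
      exact combo3 hK
        (stepA (by nlinarith) (by nlinarith) le_rfl zero_le_one le_rfl zero_le_one hc hc' hd hd')
        (stepA (by nlinarith) (by nlinarith) zero_le_one le_rfl le_rfl zero_le_one hc hc' hd hd')
        (stepA (by nlinarith) (by nlinarith) le_rfl zero_le_one zero_le_one le_rfl hc hc' hd hd')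
        (by linarith) ha hb (by ring)
    · have key : ((a,b,c,d,g) : ℝ×ℝ×ℝ×ℝ×ℝ)
          = (a+b-1) • (1,1,c,d,g-(2-a-b)) + (1-b) • (1,0,c,d,g-(2-a-b)+1)
            + (1-a) • (0,1,c,d,g-(2-a-b)+1) := by
        simp only [Prod.smul_mk, Prod.mk_add_mk, Prod.mk.injEq, smul_eq_mul]
        refine ⟨by ring, by ring, by ring, by ring, by ring⟩
      rw [key]
      exact combo3 hK
        (stepA (by nlinarith) (by nlinarith) zero_le_one le_rfl zero_le_one le_rfl hc hc' hd hd')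
        (stepA (by nlinarith) (by nlinarith) zero_le_one le_rfl le_rfl zero_le_one hc hc' hd hd')
        (stepA (by nlinarith) (by nlinarith) le_rfl zero_le_one zero_le_one le_rfl hc hc' hd hd')
        (by linarith) (by linarith) (by linarith) (by ring)
end

section
/- Let n ≥ 2 and let x̂ ∈ {0,1}^n with k := Σ_{j=1}^n x̂_j, and set X̂_{ij} := x̂_i x̂_j for 1 ≤ i < j ≤ n. Define Q^b := {(x, X) ∈ ℝ^n × ℝ^{n(n−1)/2} : X_{ij} ≥ x_i x_j for all 1 ≤ i < j ≤ n, x ∈ [0,1]^n}, and define the linear functional L(x, X) := −Σ_{1≤i<j≤n} X_{ij} + Σ_{j=1}^n d_j x_j where d_j := −1 if x̂_j = 0 and d_j := k if x̂_j = 1. Then (x̂, X̂) ∈ Q^b, and L(x, X) < L(x̂, X̂) for every (x, X) in the convex hull of Q^b with (x, X) ≠ (x̂, X̂); i.e., (x̂, X̂) is the unique maximizer of L over conv(Q^b), so each binary point (x̂, x̂ x̂ᵀ) is a vertex of conv(Q^b). -/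
lemma pair_sum_identity (n : ℕ) (y : Fin n → ℝ) :
    2 * ∑ q : {q : Fin n × Fin n // q.1 < q.2}, y q.1.1 * y q.1.2
      = (∑ j, y j)^2 - ∑ j, (y j)^2 := by
  have hsub : ∑ q : {q : Fin n × Fin n // q.1 < q.2}, y q.1.1 * y q.1.2
      = ∑ p ∈ Finset.univ.filter (fun p : Fin n × Fin n => p.1 < p.2), y p.1 * y p.2 :=
    (Finset.sum_subtype (p := fun q : Fin n × Fin n => q.1 < q.2)
      (Finset.univ.filter (fun p : Fin n × Fin n => p.1 < p.2))
      (fun x => by simp) (fun p => y p.1 * y p.2)).symm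
  have htot : ∑ p : Fin n × Fin n, y p.1 * y p.2 = (∑ j, y j)^2 := by
    rw [Fintype.sum_prod_type, sq, Finset.sum_mul_sum]
  have hswap : ∑ p ∈ Finset.univ.filter (fun p : Fin n × Fin n => p.2 < p.1), y p.1 * y p.2
      = ∑ p ∈ Finset.univ.filter (fun p : Fin n × Fin n => p.1 < p.2), y p.1 * y p.2 := by
    apply Finset.sum_nbij' (fun p => Prod.swap p) (fun p => Prod.swap p) <;> simp [mul_comm]
  have hdiag : ∑ p ∈ Finset.univ.filter (fun p : Fin n × Fin n => p.1 = p.2), y p.1 * y p.2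
      = ∑ j, (y j)^2 := by
    rw [Finset.sum_filter, Fintype.sum_prod_type]
    simp [Finset.sum_ite_eq, sq]
  have hsplit := Finset.sum_filter_add_sum_filter_not Finset.univ
    (fun p : Fin n × Fin n => p.1 < p.2) (fun p => y p.1 * y p.2)
  have hsplit2 := Finset.sum_filter_add_sum_filter_not
    (Finset.univ.filter (fun p : Fin n × Fin n => ¬ p.1 < p.2))
    (fun p : Fin n × Fin n => p.1 = p.2) (fun p => y p.1 * y p.2)
  rw [Finset.filter_filter, Finset.filter_filter] at hsplit2
  have e1 : Finset.univ.filter (fun p : Fin n × Fin n => ¬ p.1 < p.2 ∧ p.1 = p.2)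
      = Finset.univ.filter (fun p : Fin n × Fin n => p.1 = p.2) := by
    ext p
    simp only [Finset.mem_filter, Finset.mem_univ, true_and]
    exact ⟨fun h => h.2, fun h => ⟨by rw [h]; exact lt_irrefl _, h⟩⟩
  have e2 : Finset.univ.filter (fun p : Fin n × Fin n => ¬ p.1 < p.2 ∧ ¬ p.1 = p.2)
      = Finset.univ.filter (fun p : Fin n × Fin n => p.2 < p.1) := by
    ext p
    simp only [Finset.mem_filter, Finset.mem_univ, true_and]
    constructor
    · rintro ⟨h1, h2⟩; rcases lt_trichotomy p.1 p.2 with h|h|h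
      · exact absurd h h1
      · exact absurd h h2
      · exact h
    · intro h; exact ⟨fun h' => absurd h (not_lt_of_gt h'), fun h' => by rw [h'] at h; exact lt_irrefl _ h⟩
  rw [e1, e2] at hsplit2
  rw [hsub]
  linarith [hsplit, hsplit2, htot, hdiag, hswap]

/-- Each binary point `(x̂, x̂ x̂ᵀ)` is a vertex of `conv(Q^b)`, where
`Q^b = {(x, X) : X_{ij} ≥ x_i x_j for i < j, x ∈ [0,1]^n}`: it lies in `Q^b` and it is
the unique maximizer over `conv(Q^b)` of the linear functional
`L(x, X) = -Σ_{i<j} X_{ij} + Σ_j d_j x_j`, with `d_j = k` if `x̂_j = 1` and `d_j = -1`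
if `x̂_j = 0`, where `k = Σ_j x̂_j`.  Pairs `i < j` are indexed by the subtype
`{q : Fin n × Fin n // q.1 < q.2}` (of cardinality `n(n-1)/2`). -/
theorem stmt_17 (n : ℕ) (hn : 2 ≤ n)
    (xh : Fin n → ℝ) (hxh : ∀ i, xh i = 0 ∨ xh i = 1)
    (k : ℝ) (hk : k = ∑ j, xh j)
    (Xh : {q : Fin n × Fin n // q.1 < q.2} → ℝ)
    (hXh : ∀ q : {q : Fin n × Fin n // q.1 < q.2}, Xh q = xh q.1.1 * xh q.1.2)
    (Qb : Set ((Fin n → ℝ) × ({q : Fin n × Fin n // q.1 < q.2} → ℝ)))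
    (hQb : Qb = {p | (∀ q : {q : Fin n × Fin n // q.1 < q.2},
        p.2 q ≥ p.1 q.1.1 * p.1 q.1.2) ∧ ∀ i, 0 ≤ p.1 i ∧ p.1 i ≤ 1})
    (d : Fin n → ℝ) (hd : ∀ j, d j = if xh j = 1 then k else -1)
    (L : (Fin n → ℝ) × ({q : Fin n × Fin n // q.1 < q.2} → ℝ) → ℝ)
    (hL : ∀ p, L p = -(∑ q : {q : Fin n × Fin n // q.1 < q.2}, p.2 q) + ∑ j, d j * p.1 j) :
    (xh, Xh) ∈ Qb ∧
    ∀ p ∈ convexHull ℝ Qb, p ≠ (xh, Xh) → L p < L (xh, Xh) := by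
  classical
  set A : Finset (Fin n) := Finset.univ.filter (fun j => xh j = 1) with hA
  have hxh0 : ∀ j ∈ Aᶜ, xh j = 0 := by
    intro j hj
    rw [Finset.mem_compl, hA, Finset.mem_filter] at hj
    rcases hxh j with h|h
    · exact h
    · exact absurd ⟨Finset.mem_univ j, h⟩ hj
  have hxh1 : ∀ j ∈ A, xh j = 1 := fun j hj => (Finset.mem_filter.mp hj).2
  have hkA : k = (A.card : ℝ) := by
    rw [hk, ← Finset.sum_add_sum_compl A]
    rw [Finset.sum_congr rfl hxh1, Finset.sum_congr rfl hxh0]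
    simp
  have hxhbin : ∀ j, xh j ^ 2 = xh j := by
    intro j; rcases hxh j with h|h <;> rw [h] <;> ring
  have hxh01 : ∀ j, 0 ≤ xh j ∧ xh j ≤ 1 := by
    intro j; rcases hxh j with h|h <;> rw [h] <;> norm_num
  -- membership
  have hmem : (xh, Xh) ∈ Qb := by
    rw [hQb]
    exact ⟨fun q => le_of_eq (hXh q).symm, hxh01⟩
  -- value at the binary point
  have hXhsum : ∑ q : {q : Fin n × Fin n // q.1 < q.2}, Xh q = (k^2 - k)/2 := by
    have := pair_sum_identity n xh
    rw [Finset.sum_congr rfl (fun q _ => hXh q)]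
    rw [Finset.sum_congr rfl (fun j _ => hxhbin j), ← hk] at this
    linarith
  -- d-sums for a general x
  have hdsum : ∀ x : Fin n → ℝ,
      ∑ j, d j * x j = k * (∑ j ∈ A, x j) - ∑ j ∈ Aᶜ, x j := by
    intro x
    rw [← Finset.sum_add_sum_compl A (fun j => d j * x j)]
    have h1 : ∑ j ∈ A, d j * x j = k * ∑ j ∈ A, x j := by
      rw [Finset.mul_sum]
      refine Finset.sum_congr rfl (fun j hj => ?_)
      rw [hd j, if_pos (hxh1 j hj)]
    have h2 : ∑ j ∈ Aᶜ, d j * x j = -∑ j ∈ Aᶜ, x j := by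
      rw [← Finset.sum_neg_distrib]
      refine Finset.sum_congr rfl (fun j hj => ?_)
      rw [hd j, if_neg (by rw [hxh0 j hj]; norm_num)]
      ring
    rw [h1, h2]; ring
  have hS1h : ∑ j ∈ A, xh j = k := by
    rw [Finset.sum_congr rfl hxh1, hkA]; simp
  have hS0h : ∑ j ∈ Aᶜ, xh j = 0 := by
    rw [Finset.sum_congr rfl hxh0]; simp
  have hc : L (xh, Xh) = (k^2 + k)/2 := by
    rw [hL]
    simp only
    rw [hXhsum, hdsum, hS1h, hS0h]
    ring
  -- key: strict max on Qb
  have hkey : ∀ p ∈ Qb, p ≠ (xh, Xh) → L p < L (xh, Xh) := by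
    rintro ⟨x, X⟩ hp hne
    rw [hQb] at hp
    obtain ⟨hX, hx⟩ := hp
    dsimp only at hX hx
    set S1 : ℝ := ∑ j ∈ A, x j with hS1def
    set S0 : ℝ := ∑ j ∈ Aᶜ, x j with hS0def
    have hS1k : S1 ≤ k := by
      rw [hkA, hS1def]
      calc ∑ j ∈ A, x j ≤ ∑ j ∈ A, (1:ℝ) :=
            Finset.sum_le_sum (fun j hj => (hx j).2)
        _ = A.card := by simp
    have hS1nn : 0 ≤ S1 := Finset.sum_nonneg (fun j _ => (hx j).1)
    have hS0nn : 0 ≤ S0 := Finset.sum_nonneg (fun j _ => (hx j).1)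
    have hs : (∑ j, x j) = S1 + S0 := (Finset.sum_add_sum_compl A x).symm
    have hQle : ∑ j, (x j)^2 ≤ ∑ j, x j :=
      Finset.sum_le_sum (fun j _ => by nlinarith [(hx j).1, (hx j).2])
    have hpair := pair_sum_identity n x
    have hXsum : ∑ q : {q : Fin n × Fin n // q.1 < q.2}, x q.1.1 * x q.1.2
        ≤ ∑ q : {q : Fin n × Fin n // q.1 < q.2}, X q :=
      Finset.sum_le_sum (fun q _ => hX q)
    have hLp : L (x, X) = -(∑ q : {q : Fin n × Fin n // q.1 < q.2}, X q) + (k * S1 - S0) := by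
      rw [hL]; simp only; rw [hdsum]
    rw [hc, hLp]
    -- the two product nonnegativity facts
    have P1 : 0 ≤ (k - S1) * (k + 1 - S1) := mul_nonneg (by linarith) (by linarith)
    have P2 : 0 ≤ S0 * (2*S1 + S0 + 1) := mul_nonneg hS0nn (by linarith)
    -- strictness cases
    by_cases hxeq : x = xh
    · -- then X ≠ Xh, and some X q > Xh q
      have hXne : X ≠ Xh := by
        intro h; exact hne (by rw [hxeq, h])
      obtain ⟨q, hq⟩ := Function.ne_iff.mp hXne
      have hXstrict : ∑ q : {q : Fin n × Fin n // q.1 < q.2}, Xh q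
          < ∑ q : {q : Fin n × Fin n // q.1 < q.2}, X q := by
        apply Finset.sum_lt_sum
        · intro i _
          rw [hXh i, ← hxeq]; exact hX i
        · refine ⟨q, Finset.mem_univ q, ?_⟩
          have h1 : Xh q ≤ X q := by rw [hXh q, ← hxeq]; exact hX q
          rcases lt_or_eq_of_le h1 with h|h
          · exact h
          · exact absurd h.symm hq
      have hS1x : S1 = k := by rw [hS1def, hxeq, hS1h]
      have hS0x : S0 = 0 := by rw [hS0def, hxeq, hS0h]
      rw [hS1x, hS0x]
      have : (k^2 - k)/2 < ∑ q : {q : Fin n × Fin n // q.1 < q.2}, X q := by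
        rw [← hXhsum]; exact hXstrict
      linarith
    · -- x differs from xh at some coordinate
      obtain ⟨j, hj⟩ := Function.ne_iff.mp hxeq
      rcases hxh j with hj0 | hj1
      · -- xh j = 0, so x j > 0 and S0 > 0
        have hjA : j ∈ Aᶜ := by
          rw [Finset.mem_compl, hA, Finset.mem_filter]
          rintro ⟨-, h⟩; rw [hj0] at h; norm_num at h
        have hxjpos : 0 < x j := by
          rcases lt_or_eq_of_le (hx j).1 with h|h
          · exact h
          · exact absurd (h.symm.trans hj0.symm) hj
        have hS0j : x j ≤ S0 :=
          Finset.single_le_sum (fun i _ => (hx i).1) hjA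
        have P2' : x j * 1 ≤ S0 * (2*S1 + S0 + 1) :=
          mul_le_mul hS0j (by linarith) (by norm_num) hS0nn
        nlinarith [hpair, hXsum, hQle, hs, P1, P2']
      · -- xh j = 1, so x j < 1 and k - S1 > 0
        have hjA : j ∈ A := by
          rw [hA, Finset.mem_filter]; exact ⟨Finset.mem_univ j, hj1⟩
        have hxjlt : x j < 1 := by
          rcases lt_or_eq_of_le (hx j).2 with h|h
          · exact h
          · exact absurd (h.trans hj1.symm) hj
        have htj : 1 - x j ≤ k - S1 := by
          have : ∑ i ∈ A, (1 - x i) = (A.card : ℝ) - S1 := by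
            rw [Finset.sum_sub_distrib]; simp [hS1def]
          have h2 : 1 - x j ≤ ∑ i ∈ A, (1 - x i) :=
            Finset.single_le_sum (f := fun i => 1 - x i)
              (fun i _ => by linarith [(hx i).2]) hjA
          rw [this] at h2; rw [hkA]; exact h2
        have P1' : (1 - x j) * 1 ≤ (k - S1) * (k + 1 - S1) :=
          mul_le_mul htj (by linarith) (by norm_num) (by linarith)
        nlinarith [hpair, hXsum, hQle, hs, P1', P2]
  -- linearity of L
  have hLlin : ∀ (s t : ℝ) (a b : (Fin n → ℝ) × ({q : Fin n × Fin n // q.1 < q.2} → ℝ)),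
      L (s • a + t • b) = s * L a + t * L b := by
    intro s t a b
    simp only [hL, Prod.fst_add, Prod.snd_add, Prod.smul_fst, Prod.smul_snd,
      Pi.add_apply, Pi.smul_apply, smul_eq_mul]
    rw [Finset.sum_add_distrib, ← Finset.mul_sum, ← Finset.mul_sum]
    have : ∑ j, d j * (s * a.1 j + t * b.1 j)
        = s * (∑ j, d j * a.1 j) + t * (∑ j, d j * b.1 j) := by
      rw [Finset.mul_sum, Finset.mul_sum, ← Finset.sum_add_distrib]
      exact Finset.sum_congr rfl (fun j _ => by ring)
    rw [this]; ring
  -- convexity argument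
  set c := L (xh, Xh) with hcdef
  set C : Set ((Fin n → ℝ) × ({q : Fin n × Fin n // q.1 < q.2} → ℝ)) :=
    {p | L p < c ∨ p = (xh, Xh)} with hCdef
  have hCconv : Convex ℝ C := by
    rintro a ha b hb s t hs ht hst
    rcases eq_or_lt_of_le hs with hs0 | hs0
    · have hteq : t = 1 := by linarith
      rw [← hs0, hteq]; simpa using hb
    rcases eq_or_lt_of_le ht with ht0 | ht0
    · have hseq : s = 1 := by linarith
      rw [← ht0, hseq]; simpa using ha
    rcases ha with ha | ha <;> rcases hb with hb | hb
    · left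
      rw [hLlin]
      calc s * L a + t * L b < s * c + t * c := by
            apply add_lt_add
            · exact (mul_lt_mul_iff_right₀ hs0).mpr ha
            · exact (mul_lt_mul_iff_right₀ ht0).mpr hb
        _ = c := by rw [← add_mul, hst, one_mul]
    · left
      rw [hLlin, hb]
      have : s * L a < s * c := (mul_lt_mul_iff_right₀ hs0).mpr ha
      calc s * L a + t * c < s * c + t * c := by linarith
        _ = c := by rw [← add_mul, hst, one_mul]
    · left
      rw [hLlin, ha]
      have : t * L b < t * c := (mul_lt_mul_iff_right₀ ht0).mpr hb
      calc s * c + t * L b < s * c + t * c := by linarith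
        _ = c := by rw [← add_mul, hst, one_mul]
    · right
      rw [ha, hb, ← add_smul, hst, one_smul]
  have hsub : Qb ⊆ C := by
    intro p hp
    by_cases hpe : p = (xh, Xh)
    · right; exact hpe
    · left; exact hkey p hp hpe
  have hhull : convexHull ℝ Qb ⊆ C := convexHull_min hsub hCconv
  refine ⟨hmem, ?_⟩
  intro p hp hne
  rcases hhull hp with h | h
  · exact h
  · exact absurd h hne
end

section
/- Let n ≥ 2, let x, y ∈ [0,1]^n and γ ∈ ℝ. Then the following are equivalent: (1) there exist real numbers X_{ij}, Y_{ij} for 1 ≤ i ≤ j ≤ n such that for all 1 ≤ i < j ≤ n: X_{ii} − 2X_{ij} + X_{jj} + Y_{ii} − 2Y_{ij} + Y_{jj} ≥ γ, X_{ij} ≥ 0, X_{ij} ≥ x_i + x_j − 1, Y_{ij} ≥ 0, Y_{ij} ≥ y_i + y_j − 1, and for all i: X_{ii} ≤ x_i, Y_{ii} ≤ y_i; (2) for all 1 ≤ i < j ≤ n: x_i + x_j + y_i + y_j ≥ γ, −x_i − x_j + y_i + y_j + 2 ≥ γ, x_i + x_j − y_i − y_j + 2 ≥ γ, and −x_i −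 x_j − y_i − y_j + 4 ≥ γ. In other words, the projection of the first-level RLT relaxation set S onto the (x, y, γ) space equals the feasible region of the single-row LP relaxation (TW). -/
/-- The projection of the first-level RLT relaxation set onto the `(x, y, γ)` space
equals the feasible region of the single-row LP relaxation (TW): for `x, y ∈ [0,1]^n`,
suitable lifted variables `X, Y` exist iff the four (TW) inequalities hold for all
pairs `i < j`. -/
theorem stmt_18 (n : ℕ) (hn : 2 ≤ n) (x y : Fin n → ℝ) (γ : ℝ)
    (hx : ∀ i, 0 ≤ x i ∧ x i ≤ 1) (hy : ∀ i, 0 ≤ y i ∧ y i ≤ 1) :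
    (∃ X Y : Fin n → Fin n → ℝ,
      (∀ i j : Fin n, i < j →
        X i i - 2 * X i j + X j j + Y i i - 2 * Y i j + Y j j ≥ γ ∧
        X i j ≥ 0 ∧ X i j ≥ x i + x j - 1 ∧
        Y i j ≥ 0 ∧ Y i j ≥ y i + y j - 1) ∧
      (∀ i, X i i ≤ x i ∧ Y i i ≤ y i)) ↔
    (∀ i j : Fin n, i < j →
      x i + x j + y i + y j ≥ γ ∧
      -x i - x j + y i + y j + 2 ≥ γ ∧
      x i + x j - y i - y j + 2 ≥ γ ∧
      -x i - x j - y i - y j + 4 ≥ γ) := by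
  constructor
  · rintro ⟨X, Y, h1, h2⟩ i j hij
    obtain ⟨hγ, hX0, hX1, hY0, hY1⟩ := h1 i j hij
    obtain ⟨hXi, hYi⟩ := h2 i
    obtain ⟨hXj, hYj⟩ := h2 j
    refine ⟨by linarith, by linarith, by linarith, by linarith⟩
  · intro h
    refine ⟨fun i j => if i = j then x i else max 0 (x i + x j - 1),
            fun i j => if i = j then y i else max 0 (y i + y j - 1), ?_, ?_⟩
    · intro i j hij
      have hne : i ≠ j := ne_of_lt hij
      obtain ⟨h1, h2, h3, h4⟩ := h i j hij
      simp only [eq_self_iff_true, if_true, if_neg hne]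
      refine ⟨?_, ⟨le_max_left _ _, le_max_right _ _, le_max_left _ _, le_max_right _ _⟩⟩
      rcases le_or_gt (x i + x j) 1 with hxs | hxs <;>
        rcases le_or_gt (y i + y j) 1 with hys | hys
      · rw [max_eq_left (by linarith), max_eq_left (by linarith)]; linarith
      · rw [max_eq_left (by linarith), max_eq_right (by linarith)]; linarith
      · rw [max_eq_right (by linarith), max_eq_left (by linarith)]; linarith
      · rw [max_eq_right (by linarith), max_eq_right (by linarith)]; linarith
    · intro i
      simp
end

section
/- Let n ≥ 3 be an odd integer. Then for all integers m and α with 3 ≤ m ≤ n and 1 ≤ α ≤ max{m−2, 1}: α · m · (1 + 1/n)/2 − (m(m−1)/2) · (1 + 1/n)/4 ≤ α(α+1)/2. Equivalently, the symmetric point given by x̃_i := (1 + 1/n)/2 for all i ∈ {1,…,n} and X̃_{ij} := (1 + 1/n)/4 for all 1 ≤ i < j ≤ n satisfies every clique inequality: for every subset S ⊆ {1,…,n} with |S| = m ≥ 3 and every integer α with 1 ≤ α ≤ max{m−2,1}, α·Σ_{i∈S} x̃_i − Σ_{i<j, i,j∈S} X̃_{ij} ≤ α(α+1)/2. -/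
lemma clique_key (n m a : ℤ) (hm : 3 ≤ m) (hmn : m ≤ n) (ha1 : 1 ≤ a)
    (hodd : Odd n) : (n+1)*m*(4*a - m + 1) ≤ 4*n*a*(a+1) := by
  obtain ⟨d, hd⟩ : ∃ d, d = m - 2*a := ⟨m - 2*a, rfl⟩
  have hQ : 0 ≤ d^2 - d + 2*a := by
    have h4 : 0 ≤ 4*(d^2 - d) + 1 := by nlinarith [sq_nonneg (2*d-1)]
    omega
  rcases Int.even_or_odd m with he | ho
  · have hmn' : m + 1 ≤ n := by
      rcases hodd with ⟨k, hk⟩; rcases he with ⟨l, hl⟩; omega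
    have hdev : Even d := by rcases he with ⟨l, hl⟩; exact ⟨l - a, by omega⟩
    have h1 : 0 ≤ (m+1)*d^2 - 2*d := by
      rcases le_or_gt d 0 with h | h
      · nlinarith [sq_nonneg d]
      · have : 2 ≤ d := by rcases hdev with ⟨l, hl⟩; omega
        nlinarith
    have h2 : 0 ≤ (n - m - 1) * (d^2 - d + 2*a) :=
      mul_nonneg (by omega) hQ
    have hid : 4*n*a*(a+1) - (n+1)*m*(4*a - m + 1)
        = ((m+1)*d^2 - 2*d) + (n - m - 1) * (d^2 - d + 2*a) := by
      subst hd; ring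
    linarith
  · have h1 : 1 ≤ d^2 := by
      have h0 : d ≠ 0 := by rcases ho with ⟨l, hl⟩; omega
      have : 0 < d^2 := by positivity
      omega
    have h2 : 0 ≤ (n - m) * (d^2 - d + 2*a) := mul_nonneg (by omega) hQ
    have h3 : 0 ≤ m * (d^2 - 1) := mul_nonneg (by omega) (by omega)
    have hid : 4*n*a*(a+1) - (n+1)*m*(4*a - m + 1)
        = m * (d^2 - 1) + (n - m) * (d^2 - d + 2*a) := by
      subst hd; ring
    linarith

lemma pair_card {β : Type*} [LinearOrder β] [DecidableEq β] (S : Finset β) :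
    2 * ((S ×ˢ S).filter fun p => p.1 < p.2).card = S.card * S.card - S.card := by
  have hswap : ((S ×ˢ S).filter fun p => p.1 < p.2).card
      = ((S ×ˢ S).filter fun p => p.2 < p.1).card := by
    apply Finset.card_bij' (fun p _ => Prod.swap p) (fun p _ => Prod.swap p)
    · intro p hp
      simp only [Finset.mem_filter, Finset.mem_product] at hp ⊢
      exact ⟨⟨hp.1.2, hp.1.1⟩, hp.2⟩
    · intro p hp
      simp only [Finset.mem_filter, Finset.mem_product] at hp ⊢
      exact ⟨⟨hp.1.2, hp.1.1⟩, hp.2⟩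
    · intro p _; simp
    · intro p _; simp
  have hunion : ((S ×ˢ S).filter fun p => p.1 < p.2)
      ∪ ((S ×ˢ S).filter fun p => p.2 < p.1) = S.offDiag := by
    rw [← Finset.filter_or]
    rw [show S.offDiag = (S ×ˢ S).filter (fun a : β × β => a.1 ≠ a.2) by ext; simp [and_assoc]]
    apply Finset.filter_congr
    intro p _
    simp [lt_or_lt_iff_ne]
  have hdisj : Disjoint ((S ×ˢ S).filter fun p => p.1 < p.2)
      ((S ×ˢ S).filter fun p => p.2 < p.1) := by
    rw [Finset.disjoint_left]
    intro p hp hq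
    simp only [Finset.mem_filter] at hp hq
    exact absurd (hp.2.trans hq.2) (lt_irrefl _)
  have := Finset.card_union_of_disjoint hdisj
  rw [hunion] at this
  rw [Finset.offDiag_card] at this
  omega

/-- For odd `n ≥ 3`, the symmetric point `x̃_i = (1 + 1/n)/2`, `X̃_{ij} = (1 + 1/n)/4`
satisfies every clique inequality: the numeric inequality
`α m (1 + 1/n)/2 - (m(m-1)/2)(1 + 1/n)/4 ≤ α(α+1)/2` holds for all integers
`3 ≤ m ≤ n`, `1 ≤ α ≤ max (m-2) 1`, and equivalently every clique inequality over a
subset `S` of cardinality `m ≥ 3` holds at this point. -/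
theorem stmt_19 (n : ℕ) (hn : 3 ≤ n) (hodd : Odd n) :
    (∀ m α : ℕ, 3 ≤ m → m ≤ n → 1 ≤ α → α ≤ max (m - 2) 1 →
      (α : ℝ) * (m : ℝ) * ((1 + 1 / (n : ℝ)) / 2)
        - ((m : ℝ) * ((m : ℝ) - 1) / 2) * ((1 + 1 / (n : ℝ)) / 4)
        ≤ (α : ℝ) * ((α : ℝ) + 1) / 2) ∧
    (∀ S : Finset (Fin n), 3 ≤ S.card → ∀ α : ℕ, 1 ≤ α → α ≤ max (S.card - 2) 1 →
      (α : ℝ) * (∑ _i ∈ S, (1 + 1 / (n : ℝ)) / 2)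
        - (∑ i ∈ S, ∑ j ∈ S, if i < j then (1 + 1 / (n : ℝ)) / 4 else 0)
        ≤ (α : ℝ) * ((α : ℝ) + 1) / 2) := by
  have hn0 : (0:ℝ) < (n:ℝ) := by positivity
  have hne : (n:ℝ) ≠ 0 := ne_of_gt hn0
  have part1 : ∀ m α : ℕ, 3 ≤ m → m ≤ n → 1 ≤ α → α ≤ max (m - 2) 1 →
      (α : ℝ) * (m : ℝ) * ((1 + 1 / (n : ℝ)) / 2)
        - ((m : ℝ) * ((m : ℝ) - 1) / 2) * ((1 + 1 / (n : ℝ)) / 4)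
        ≤ (α : ℝ) * ((α : ℝ) + 1) / 2 := by
    intro m α hm hmn hα1 hα2
    have hkey := clique_key (n : ℤ) (m : ℤ) (α : ℤ) (by exact_mod_cast hm)
      (by exact_mod_cast hmn) (by exact_mod_cast hα1) (by exact_mod_cast hodd)
    have hkeyR : ((n:ℝ)+1)*(m:ℝ)*(4*(α:ℝ) - (m:ℝ) + 1) ≤ 4*(n:ℝ)*(α:ℝ)*((α:ℝ)+1) := by
      exact_mod_cast hkey
    have h8 : (0:ℝ) < 8*(n:ℝ) := by positivity
    rw [← mul_le_mul_iff_left₀ h8]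
    calc ((α : ℝ) * (m : ℝ) * ((1 + 1 / (n : ℝ)) / 2)
        - ((m : ℝ) * ((m : ℝ) - 1) / 2) * ((1 + 1 / (n : ℝ)) / 4)) * (8*(n:ℝ))
        = ((n:ℝ)+1)*(m:ℝ)*(4*(α:ℝ) - (m:ℝ) + 1) := by field_simp; ring
      _ ≤ 4*(n:ℝ)*(α:ℝ)*((α:ℝ)+1) := hkeyR
      _ = (α : ℝ) * ((α : ℝ) + 1) / 2 * (8*(n:ℝ)) := by ring
  refine ⟨part1, ?_⟩
  intro S hS α hα1 hα2
  have hcard_n : S.card ≤ n := by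
    have := Finset.card_le_univ S
    simpa using this
  have hsum1 : (∑ _i ∈ S, (1 + 1 / (n : ℝ)) / 2) = (S.card : ℝ) * ((1 + 1/(n:ℝ))/2) := by
    rw [Finset.sum_const, nsmul_eq_mul]
  have hsum2 : (∑ i ∈ S, ∑ j ∈ S, if i < j then (1 + 1 / (n : ℝ)) / 4 else 0)
      = (((S ×ˢ S).filter fun p => p.1 < p.2).card : ℝ) * ((1 + 1/(n:ℝ))/4) := by
    rw [← Finset.sum_product']
    rw [← Finset.sum_filter]
    rw [Finset.sum_const, nsmul_eq_mul]
  have hpc := pair_card S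
  have hpcR : (((S ×ˢ S).filter fun p => p.1 < p.2).card : ℝ)
      = (S.card : ℝ) * ((S.card : ℝ) - 1) / 2 := by
    have h1 : S.card ≤ S.card * S.card := Nat.le_mul_of_pos_left _ (by omega)
    have : (2 : ℝ) * (((S ×ˢ S).filter fun p => p.1 < p.2).card : ℝ)
        = (S.card : ℝ) * (S.card : ℝ) - (S.card : ℝ) := by
      rw [← Nat.cast_ofNat, ← Nat.cast_mul, hpc, Nat.cast_sub h1]
      push_cast; ring
    linarith
  have := part1 S.card α hS hcard_n hα1 hα2
  rw [hsum1, hsum2, hpcR]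
  calc (α : ℝ) * ((S.card : ℝ) * ((1 + 1/(n:ℝ))/2))
      - ((S.card : ℝ) * ((S.card : ℝ) - 1) / 2) * ((1 + 1/(n:ℝ))/4)
      = (α : ℝ) * (S.card : ℝ) * ((1 + 1/(n:ℝ))/2)
      - ((S.card : ℝ) * ((S.card : ℝ) - 1) / 2) * ((1 + 1/(n:ℝ))/4) := by ring
    _ ≤ (α : ℝ) * ((α : ℝ) + 1) / 2 := this
end
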